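/- arXiv:1403.1163 — 5 statements merged into one kernel-verified Lean document; each statement's English description precedes it below -/
import Mathlib

section
/- Every bounded sequence in a real Banach space admits a subsequence which is either weak Cauchy or equivalent to the usual ℓ¹-basis. -/
open Filter

namespace Ros

/-- first `k` values of `g` as a list -/
def pre (g : ℕ → ℕ) (k : ℕ) : List ℕ := (List.range k).map g

lemma pre_getElem (g : ℕ → ℕ) (k i : ℕ) (hi : i < (pre g k).length) :
    (pre g k)[i] = g i := by
  simp [pre]

variable (F : List ℕ → Prop)

/-- combinatorial forcing: `g` accepts `s` -/
def acc (g : ℕ → ℕ) (s : List ℕ) : Prop :=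
  ∀ h : ℕ → ℕ, StrictMono h → ∃ k, F (s ++ pre (g ∘ h) k)

/-- `g` rejects `s` -/
def rej (g : ℕ → ℕ) (s : List ℕ) : Prop :=
  ∀ h : ℕ → ℕ, StrictMono h → ¬ acc F (g ∘ h) s

variable {F}

lemma factor {g c : ℕ → ℕ} (hg : StrictMono g) (hc : StrictMono c)
    (h : ∀ n, ∃ m, c n = g m) : ∃ u : ℕ → ℕ, StrictMono u ∧ c = g ∘ u := by
  choose u hu using h
  refine ⟨u, fun a b hab => ?_, funext hu⟩
  have h2 := hc hab
  rw [hu a, hu b] at h2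
  exact hg.lt_iff_lt.mp h2

lemma acc_comp {g s} (H : acc F g s) {h} (hh : StrictMono h) : acc F (g ∘ h) s := by
  intro h' hh'
  have := H (h ∘ h') (hh.comp hh')
  simpa [Function.comp_assoc] using this

lemma rej_comp {g s} (H : rej F g s) {h} (hh : StrictMono h) : rej F (g ∘ h) s := by
  intro h' hh'
  have := H (h ∘ h') (hh.comp hh')
  simpa [Function.comp_assoc] using this

lemma acc_sub {g c s} (hg : StrictMono g) (hc : StrictMono c)
    (hsub : ∀ n, ∃ m, c n = g m) (H : acc F g s) : acc F c s := by
  obtain ⟨u, hu, rfl⟩ := factor hg hc hsub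
  exact acc_comp H hu

lemma rej_sub {g c s} (hg : StrictMono g) (hc : StrictMono c)
    (hsub : ∀ n, ∃ m, c n = g m) (H : rej F g s) : rej F c s := by
  obtain ⟨u, hu, rfl⟩ := factor hg hc hsub
  exact rej_comp H hu

lemma acc_of_F {g s} (hF : F s) : acc F g s :=
  fun _ _ => ⟨0, by simpa [pre] using hF⟩

lemma not_acc_of_rej {g s} (H : rej F g s) : ¬ acc F g s := by
  have := H id strictMono_id
  simpa using this

lemma not_F_of_rej {g s} (H : rej F g s) : ¬ F s :=
  fun hF => not_acc_of_rej H (acc_of_F hF)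

lemma acc_or_rej (F) (g : ℕ → ℕ) (s : List ℕ) :
    (∃ h, StrictMono h ∧ acc F (g ∘ h) s) ∨ rej F g s := by
  by_cases H : ∃ h, StrictMono h ∧ acc F (g ∘ h) s
  · exact Or.inl H
  · push_neg at H
    exact Or.inr fun h hh => H h hh

lemma pre_succ (g : ℕ → ℕ) (k : ℕ) :
    pre g (k + 1) = g 0 :: pre (g ∘ Nat.succ) k := by
  simp [pre, List.range_succ_eq_map, Function.comp_def]

section LemA

lemma sm_succ : StrictMono Nat.succ := fun _ _ h => Nat.succ_lt_succ h

variable {F : List ℕ → Prop} {g : ℕ → ℕ} {s : List ℕ}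

/-- type of candidate tails in the one-step fusion -/
def Cand (F : List ℕ → Prop) (g : ℕ → ℕ) (s : List ℕ) : Type :=
  {t : ℕ → ℕ // StrictMono t ∧ (∀ n, ∃ m, t n = g m) ∧ rej F t s}

open Classical in
noncomputable def stepA (t : Cand F g s) : Cand F g s :=
  if H : ∃ h, StrictMono h ∧ acc F ((t.1 ∘ Nat.succ) ∘ h) (s ++ [t.1 0]) then
    ⟨(t.1 ∘ Nat.succ) ∘ H.choose,
      (t.2.1.comp sm_succ).comp H.choose_spec.1,
      fun n => (t.2.2.1 (Nat.succ (H.choose n))),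
      rej_comp (rej_comp t.2.2.2 sm_succ) H.choose_spec.1⟩
  else
    ⟨t.1 ∘ Nat.succ, t.2.1.comp sm_succ,
      fun n => t.2.2.1 (Nat.succ n), rej_comp t.2.2.2 sm_succ⟩

lemma stepA_spec (t : Cand F g s) :
    (∃ h, StrictMono h ∧ (stepA t).1 = t.1 ∘ Nat.succ ∘ h) ∧
    (acc F (stepA t).1 (s ++ [t.1 0]) ∨ rej F (stepA t).1 (s ++ [t.1 0])) := by
  classical
  by_cases H : ∃ h, StrictMono h ∧ acc F ((t.1 ∘ Nat.succ) ∘ h) (s ++ [t.1 0])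
  · unfold stepA
    erw [dif_pos H]
    exact ⟨⟨H.choose, H.choose_spec.1, rfl⟩, Or.inl H.choose_spec.2⟩
  · unfold stepA
    erw [dif_neg H]
    push_neg at H
    exact ⟨⟨id, strictMono_id, rfl⟩, Or.inr (fun h hh => H h hh)⟩

end LemA
section LemA2

variable {F : List ℕ → Prop} {g : ℕ → ℕ} {s : List ℕ}

noncomputable def TT (t0 : Cand F g s) : ℕ → Cand F g s
  | 0 => t0
  | (i+1) => stepA (TT t0 i)

variable (t0 : Cand F g s)

lemma TT_chain {i j : ℕ} (hij : i < j) :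
    ∃ h, StrictMono h ∧ (TT t0 j).1 = (TT t0 i).1 ∘ Nat.succ ∘ h := by
  induction j with
  | zero => omega
  | succ j ih =>
    obtain ⟨h₁, hh₁, he₁⟩ := (stepA_spec (TT t0 j)).1
    rcases Nat.lt_succ_iff_lt_or_eq.mp hij with hij' | rfl
    · obtain ⟨h₂, hh₂, he₂⟩ := ih hij'
      refine ⟨h₂ ∘ Nat.succ ∘ h₁, (hh₂.comp sm_succ).comp hh₁, ?_⟩
      show (stepA (TT t0 j)).1 = _
      rw [he₁, he₂]
      rfl
    · exact ⟨h₁, hh₁, he₁⟩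

/-- the pivot sequence -/
noncomputable def bb (i : ℕ) : ℕ := (TT t0 i).1 0

lemma bb_mono : StrictMono (bb t0) := by
  have key : ∀ i j, i < j → bb t0 i < bb t0 j := by
    intro i j hij
    obtain ⟨h, hh, he⟩ := TT_chain t0 hij
    show (TT t0 i).1 0 < (TT t0 j).1 0
    rw [he]
    exact (TT t0 i).2.1 (Nat.succ_pos _)
  exact fun i j h => key i j h

lemma bb_sub (i : ℕ) : ∃ m, bb t0 i = g m := (TT t0 i).2.2.1 0

/-- membership of later pivots in earlier tails -/
lemma bb_mem_tail {i j : ℕ} (hij : i < j) :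
    ∃ m, bb t0 j = ((TT t0 i).1 ∘ Nat.succ) m := by
  obtain ⟨h, hh, he⟩ := TT_chain t0 hij
  exact ⟨h 0, by rw [bb, he]; rfl⟩

def keptP (i : ℕ) : Prop := rej F (TT t0 (i+1)).1 (s ++ [bb t0 i])

lemma kept_infinite : ∀ N, ∃ i, N ≤ i ∧ keptP t0 i := by
  intro N
  by_contra Hc
  push_neg at Hc
  -- all i ≥ N are "discarded": the next tail accepts s ++ [bb i]
  have hacc : ∀ i, N ≤ i → acc F (TT t0 (i+1)).1 (s ++ [bb t0 i]) := by
    intro i hi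
    rcases (stepA_spec (TT t0 i)).2 with h | h
    · exact h
    · exact absurd h (Hc i hi)
  set c : ℕ → ℕ := fun idx => bb t0 (N + idx) with hc
  have hcm : StrictMono c := fun a b hab => bb_mono t0 (by omega)
  have hcrej : rej F c s := by
    refine rej_sub (TT t0 N).2.1 hcm (fun n => ?_) (TT t0 N).2.2.2
    rcases Nat.eq_zero_or_pos n with rfl | hn
    · exact ⟨0, rfl⟩
    · obtain ⟨m, hm⟩ := bb_mem_tail t0 (show N < N + n by omega)
      exact ⟨m + 1, hm⟩
  have hcacc : acc F c s := by
    intro h hh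
    set i₀ := N + h 0 with hi₀
    have ha := hacc i₀ (by omega)
    -- the tail of c ∘ h beyond position 0 sits inside TT (i₀+1)
    have htail : acc F (fun j => (c ∘ h) (j + 1)) (s ++ [bb t0 i₀]) := by
      refine acc_sub (TT t0 (i₀+1)).2.1 (fun a b hab => hcm (hh (by omega)))
        (fun j => ?_) ha
      have hlt : i₀ + 1 ≤ N + h (j + 1) := by
        have := hh (show 0 < j + 1 by omega); omega
      rcases Nat.lt_or_ge (i₀+1) (N + h (j+1)) with hl | hl
      · obtain ⟨m, hm⟩ := bb_mem_tail t0 hl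
        exact ⟨m + 1, hm⟩
      · have : N + h (j+1) = i₀ + 1 := by omega
        refine ⟨0, ?_⟩
        show bb t0 (N + h (j+1)) = (TT t0 (i₀+1)).1 0
        rw [this]
        rfl
    obtain ⟨k, hk⟩ := htail id strictMono_id
    refine ⟨k + 1, ?_⟩
    have : (c ∘ h) 0 = bb t0 i₀ := rfl
    rw [pre_succ, this]
    simpa [List.append_assoc, Function.comp_def] using hk
  exact not_acc_of_rej hcrej hcacc

lemma lemA (hrej : rej F g s) (hg : StrictMono g) :
    ∃ c, StrictMono c ∧ (∀ n, ∃ m, c n = g m) ∧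
      ∀ n, rej F (fun j => c (n + 1 + j)) (s ++ [c n]) := by
  classical
  set t0 : Cand F g s := ⟨g, hg, fun n => ⟨n, rfl⟩, hrej⟩ with ht0
  have hinf : {i | keptP t0 i}.Infinite := by
    rw [← Nat.frequently_atTop_iff_infinite, frequently_atTop]
    exact fun N => (kept_infinite t0 N).imp (fun i h => ⟨h.1, h.2⟩)
  set e := Nat.nth (fun i => keptP t0 i) with he
  have hem : StrictMono e := Nat.nth_strictMono hinf
  have hekept : ∀ n, keptP t0 (e n) := fun n => Nat.nth_mem_of_infinite hinf n
  refine ⟨fun n => bb t0 (e n), (bb_mono t0).comp hem, fun n => bb_sub t0 (e n), ?_⟩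
  intro n
  have hk := hekept n
  refine rej_sub (TT t0 (e n + 1)).2.1
    (fun a b hab => (bb_mono t0) (hem (by omega))) (fun j => ?_) hk
  have hlt : e n + 1 ≤ e (n + 1 + j) := by have := hem (show n < n+1+j by omega); omega
  rcases Nat.lt_or_ge (e n + 1) (e (n+1+j)) with hl | hl
  · obtain ⟨m, hm⟩ := bb_mem_tail t0 hl
    exact ⟨m + 1, hm⟩
  · have hEq : e (n+1+j) = e n + 1 := by omega
    refine ⟨0, ?_⟩
    show bb t0 (e (n+1+j)) = (TT t0 (e n + 1)).1 0
    rw [hEq]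
    rfl

end LemA2
section Fusion

variable {F : List ℕ → Prop}

/-- multi-pattern one-step rejection -/
lemma lemB {u : ℕ → ℕ} (hu : StrictMono u) :
    ∀ L : List (List ℕ), (∀ s ∈ L, rej F u s) →
    ∃ c, StrictMono c ∧ (∀ n, ∃ m, c n = u m) ∧
      ∀ s ∈ L, ∀ n, rej F (fun j => c (n + 1 + j)) (s ++ [c n]) := by
  intro L
  induction L generalizing u with
  | nil => exact fun _ => ⟨u, hu, fun n => ⟨n, rfl⟩, by simp⟩
  | cons s L ih =>
    intro hL
    obtain ⟨c₁, hc₁, hsub₁, hrej₁⟩ := lemA (hL s (by simp)) hu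
    obtain ⟨c₂, hc₂, hsub₂, hrej₂⟩ := ih hc₁
      (fun s' hs' => rej_sub hu hc₁ hsub₁ (hL s' (by simp [hs'])))
    refine ⟨c₂, hc₂, fun n => (hsub₂ n).elim (fun m hm => (hsub₁ m).imp
      (fun m' hm' => by rw [hm, hm'])), ?_⟩
    intro s' hs' n
    rcases List.mem_cons.mp hs' with rfl | hs'
    · -- s' = s : use stability of lemA conclusion under the further subsequence c₂
      obtain ⟨w, hw, rfl⟩ := factor hc₁ hc₂ hsub₂
      refine rej_sub (fun a b hab => hc₁ (show w n + 1 + a < w n + 1 + b by omega))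
        (fun a b hab => hc₁ (hw (show n+1+a < n+1+b by omega))) (fun j => ?_)
        (hrej₁ (w n))
      have : w n + 1 ≤ w (n + 1 + j) := by
        have := hw (show n < n + 1 + j by omega); omega
      exact ⟨w (n+1+j) - (w n + 1), by
        show c₁ (w (n+1+j)) = c₁ (w n + 1 + (w (n+1+j) - (w n + 1))); congr 1; omega⟩
    · exact hrej₂ s' hs' n

/-- invariant structure for the main fusion -/
structure Fus (F : List ℕ → Prop) (g0 : ℕ → ℕ) where
  g : ℕ → ℕ
  bs : List ℕ
  sm : StrictMono g
  sub : ∀ n, ∃ m, g n = g0 m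
  srt : bs.Pairwise (· < ·)
  above : ∀ a ∈ bs, ∀ n, a < g n
  bsub : ∀ a ∈ bs, ∃ m, a = g0 m
  rejAll : ∀ s, s.Sublist bs → rej F g s

lemma sublist_concat_cases {s l : List ℕ} {a : ℕ} (h : s.Sublist (l ++ [a])) :
    s.Sublist l ∨ ∃ s', s = s' ++ [a] ∧ s'.Sublist l := by
  rcases (List.sublist_append_iff).mp h with ⟨s₁, s₂, rfl, h₁, h₂⟩
  rcases List.sublist_singleton.mp h₂ with rfl | rfl
  · exact Or.inl (by simpa using h₁)
  · exact Or.inr ⟨s₁, rfl, h₁⟩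

noncomputable def fsub {g0 : ℕ → ℕ} (P : Fus F g0) : ℕ → ℕ :=
  (lemB P.sm P.bs.sublists (fun s hs => P.rejAll s (List.mem_sublists.mp hs))).choose

lemma fsub_spec {g0 : ℕ → ℕ} (P : Fus F g0) :
    StrictMono (fsub P) ∧ (∀ n, ∃ m, fsub P n = P.g m) ∧
      ∀ s ∈ P.bs.sublists, ∀ n, rej F (fun j => fsub P (n + 1 + j)) (s ++ [fsub P n]) :=
  (lemB P.sm P.bs.sublists (fun s hs => P.rejAll s (List.mem_sublists.mp hs))).choose_spec

noncomputable def fstep {g0 : ℕ → ℕ} (P : Fus F g0) : Fus F g0 where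
  g := fun n => fsub P (n+1)
  bs := P.bs ++ [fsub P 0]
  sm := fun a b hab => (fsub_spec P).1 (by omega)
  sub := fun n => ((fsub_spec P).2.1 (n+1)).elim (fun m hm => (P.sub m).imp (fun m' h' => by
      show fsub P (n+1) = g0 m'; rw [hm, h']))
  srt := by
    rw [List.pairwise_append]
    refine ⟨P.srt, List.pairwise_singleton _ _, fun a ha b hb => ?_⟩
    rw [List.mem_singleton] at hb; subst hb
    obtain ⟨m, hm⟩ := (fsub_spec P).2.1 0
    rw [hm]; exact P.above a ha m
  above := by
    intro a ha n
    rcases List.mem_append.mp ha with ha | ha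
    · obtain ⟨m, hm⟩ := (fsub_spec P).2.1 (n+1)
      show a < fsub P (n+1)
      rw [hm]; exact P.above a ha m
    · rw [List.mem_singleton] at ha; subst ha
      exact (fsub_spec P).1 (by omega)
  bsub := by
    intro a ha
    rcases List.mem_append.mp ha with ha | ha
    · exact P.bsub a ha
    · rw [List.mem_singleton] at ha; subst ha
      obtain ⟨m, hm⟩ := (fsub_spec P).2.1 0
      exact (P.sub m).imp (fun m' h' => by rw [hm, h'])
  rejAll := by
    intro s hs
    rcases sublist_concat_cases hs with hs | ⟨s', rfl, hs'⟩
    · exact rej_sub P.sm (fun a b hab => (fsub_spec P).1 (by omega))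
        (fun n => (fsub_spec P).2.1 (n+1)) (P.rejAll s hs)
    · have h0 := (fsub_spec P).2.2 s' (List.mem_sublists.mpr hs') 0
      have heq : (fun j => fsub P (0 + 1 + j)) = fun n => fsub P (n + 1) := by
        funext j; congr 1; omega
      rwa [heq] at h0

noncomputable def fchain {g0 : ℕ → ℕ} (P0 : Fus F g0) : ℕ → Fus F g0
  | 0 => P0
  | (j+1) => fstep (fchain P0 j)

end Fusion
section GPmain

variable {F : List ℕ → Prop}

lemma sorted_subset_sublist : ∀ {s t : List ℕ}, s.Pairwise (· < ·) → t.Pairwise (· < ·) →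
    s ⊆ t → s.Sublist t := by
  haveI : IsAntisymm ℕ (· < ·) := ⟨fun a b h1 h2 => by omega⟩
  intro s t hs ht hsub
  exact List.sublist_of_subperm_of_pairwise (hs.nodup.subperm hsub) hs ht

lemma list_bound (s : List ℕ) : ∃ J, ∀ a ∈ s, a < J := by
  induction s with
  | nil => exact ⟨0, by simp⟩
  | cons a s ih =>
    obtain ⟨J, hJ⟩ := ih
    exact ⟨max J (a+1), by
      intro b hb
      rcases List.mem_cons.mp hb with rfl | hb
      · omega
      · have := hJ b hb; omega⟩

variable {g0 : ℕ → ℕ} (P0 : Fus F g0)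

noncomputable def bchain (j : ℕ) : ℕ := fsub (fchain P0 j) 0

lemma fchain_bs (hbs0 : P0.bs = []) (j : ℕ) :
    (fchain P0 j).bs = (List.range j).map (bchain P0) := by
  induction j with
  | zero => simpa [fchain] using hbs0
  | succ j ih =>
    show (fstep (fchain P0 j)).bs = _
    rw [List.range_succ, List.map_append]
    show (fchain P0 j).bs ++ [bchain P0 j] = _
    rw [ih]
    rfl

lemma bchain_sub (j : ℕ) : ∃ m, bchain P0 j = g0 m := by
  obtain ⟨m, hm⟩ := (fsub_spec (fchain P0 j)).2.1 0
  obtain ⟨m', hm'⟩ := (fchain P0 j).sub m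
  exact ⟨m', by rw [bchain, hm, hm']⟩

lemma bchain_mono (hbs0 : P0.bs = []) : StrictMono (bchain P0) := by
  have key : ∀ i j, i < j → bchain P0 i < bchain P0 j := by
    intro i j hij
    have hmem : bchain P0 i ∈ (fchain P0 j).bs := by
      rw [fchain_bs P0 hbs0]
      exact List.mem_map.mpr ⟨i, List.mem_range.mpr hij, rfl⟩
    obtain ⟨m, hm⟩ := (fsub_spec (fchain P0 j)).2.1 0
    show bchain P0 i < fsub (fchain P0 j) 0
    rw [hm]
    exact (fchain P0 j).above _ hmem m
  exact fun i j h => key i j h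

theorem GPmain (F : List ℕ → Prop) {g0 : ℕ → ℕ} (hg0 : StrictMono g0) :
    ∃ g, StrictMono g ∧ (∀ n, ∃ m, g n = g0 m) ∧
      ((∀ s : List ℕ, s.Pairwise (· < ·) → (∀ a ∈ s, ∃ n, a = g n) → ¬ F s) ∨
        (∀ h : ℕ → ℕ, StrictMono h → ∃ k, F (pre (g ∘ h) k))) := by
  rcases acc_or_rej F g0 [] with ⟨h, hh, hacc⟩ | hrej
  · refine ⟨g0 ∘ h, hg0.comp hh, fun n => ⟨h n, rfl⟩, Or.inr ?_⟩
    intro h' hh'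
    obtain ⟨k, hk⟩ := hacc h' hh'
    exact ⟨k, by simpa using hk⟩
  · set P0 : Fus F g0 := ⟨g0, [], hg0, fun n => ⟨n, rfl⟩, List.Pairwise.nil, by simp,
      by simp, fun s hs => by rw [List.sublist_nil.mp hs]; exact hrej⟩ with hP0
    refine ⟨bchain P0, bchain_mono P0 rfl, bchain_sub P0, Or.inl ?_⟩
    intro s hs hmem
    obtain ⟨J, hJ⟩ := list_bound s
    have hsubset : s ⊆ (fchain P0 J).bs := by
      rw [fchain_bs P0 rfl]
      intro a ha
      obtain ⟨j, hj⟩ := hmem a ha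
      have hjJ : j < J := by
        have h1 : j ≤ bchain P0 j := StrictMono.le_apply (bchain_mono P0 rfl)
        have h2 := hJ a ha
        omega
      exact List.mem_map.mpr ⟨j, List.mem_range.mpr hjJ, hj.symm⟩
    have hsl : s.Sublist (fchain P0 J).bs :=
      sorted_subset_sublist hs ((fchain P0 J).srt) hsubset
    exact not_F_of_rej ((fchain P0 J).rejAll s hsl)

end GPmain
section Appl

variable {X : Type*} [NormedAddCommGroup X] [NormedSpace ℝ X]

/-- alternating condition along a list of indices -/
def altP (x : ℕ → X) (r s : ℝ) (φ : X →L[ℝ] ℝ) (l : List ℕ) : Prop :=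
  ∀ (i : ℕ) (hi : i < l.length),
    if i % 2 = 0 then φ (x (l[i])) < r else s < φ (x (l[i]))

/-- the coloring: the alternating set-intersection along `l` is empty -/
def Fq (x : ℕ → X) (r s : ℝ) (l : List ℕ) : Prop :=
  ¬ ∃ φ : X →L[ℝ] ℝ, ‖φ‖ ≤ 1 ∧ altP x r s φ l

lemma altP_append {x : ℕ → X} {r s φ} {l t : List ℕ} (h : altP x r s φ (l ++ t)) :
    altP x r s φ l := by
  intro i hi
  have h2 := h i (by rw [List.length_append]; omega)
  rwa [List.getElem_append_left hi] at h2

lemma Fq_mono {x : ℕ → X} {r s : ℝ} : ∀ l t, Fq x r s l → Fq x r s (l ++ t) := by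
  rintro l t hF ⟨φ, h1, h2⟩
  exact hF ⟨φ, h1, altP_append h2⟩

lemma altP_drop2 {x : ℕ → X} {r s φ} {a b : ℕ} {t : List ℕ}
    (h : altP x r s φ (a :: b :: t)) : altP x r s φ t := by
  intro i hi
  have h2 := h (i + 2) (by simp; omega)
  have hmod : (i + 2) % 2 = i % 2 := Nat.add_mod_right i 2
  rw [hmod] at h2
  simpa using h2

/-- one block of the interleaving -/
def blk (g : ℕ → ℕ) (K : Finset ℕ) (k : ℕ) : List ℕ :=
  if k ∈ K then [g (4*k+1), g (4*k+2)] else [g (4*k), g (4*k+1)]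

lemma blk_bounds {g : ℕ → ℕ} (hg : Monotone g) {K k} : ∀ v ∈ blk g K k,
    g (4*k) ≤ v ∧ v ≤ g (4*k+2) := by
  intro v hv
  unfold blk at hv
  split at hv <;> simp only [List.mem_cons, List.mem_singleton, List.not_mem_nil, or_false] at hv <;>
    rcases hv with rfl | rfl <;>
    exact ⟨hg (by omega), hg (by omega)⟩

def blks (g : ℕ → ℕ) (K : Finset ℕ) (ks : List ℕ) : List ℕ := ks.flatMap (blk g K)

lemma blks_sorted {g : ℕ → ℕ} (hg : StrictMono g) {K : Finset ℕ} :
    ∀ {ks : List ℕ}, ks.Pairwise (· < ·) → (blks g K ks).Pairwise (· < ·) := by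
  intro ks
  induction ks with
  | nil => intro _; simp [blks]
  | cons k ks ih =>
    intro hs
    rw [List.pairwise_cons] at hs
    show List.Pairwise _ (blk g K k ++ blks g K ks)
    rw [List.pairwise_append]
    refine ⟨?_, ih hs.2, ?_⟩
    · unfold blk
      split <;> simp [hg (show 4*k+1 < 4*k+2 by omega), hg (show 4*k < 4*k+1 by omega)]
    · intro a ha b hb
      obtain ⟨k', hk', hbk'⟩ := List.mem_flatMap.mp hb
      have h1 := (blk_bounds hg.monotone a ha).2
      have h2 := (blk_bounds hg.monotone b hbk').1
      have h3 : k < k' := hs.1 k' hk'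
      have h4 : g (4*k+2) < g (4*k') := hg (by omega)
      omega

lemma blks_entries {g : ℕ → ℕ} {K : Finset ℕ} {ks : List ℕ} :
    ∀ v ∈ blks g K ks, ∃ n, v = g n := by
  intro v hv
  obtain ⟨k', _, hbk'⟩ := List.mem_flatMap.mp hv
  unfold blk at hbk'
  split at hbk' <;> simp only [List.mem_cons, List.mem_singleton, List.not_mem_nil, or_false] at hbk' <;>
    rcases hbk' with rfl | rfl <;> exact ⟨_, rfl⟩

lemma blks_altP {x : ℕ → X} {r s : ℝ} {φ} {g : ℕ → ℕ} {K : Finset ℕ} :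
    ∀ {ks : List ℕ}, altP x r s φ (blks g K ks) →
      ∀ k ∈ ks, (k ∈ K → φ (x (g (4*k+1))) < r) ∧ (k ∉ K → s < φ (x (g (4*k+1)))) := by
  intro ks
  induction ks with
  | nil => simp
  | cons k ks ih =>
    intro hl k' hk'
    have hblk : blks g K (k :: ks) = blk g K k ++ blks g K ks := rfl
    rcases List.mem_cons.mp hk' with rfl | hk'
    · constructor
      · intro hkK
        have hb : blks g K (k' :: ks) = g (4*k'+1) :: g (4*k'+2) :: blks g K ks := by
          rw [hblk]; unfold blk; rw [if_pos hkK]; rfl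
        rw [hb] at hl
        have := hl 0 (by simp)
        simpa using this
      · intro hkK
        have hb : blks g K (k' :: ks) = g (4*k') :: g (4*k'+1) :: blks g K ks := by
          rw [hblk]; unfold blk; rw [if_neg hkK]; rfl
        rw [hb] at hl
        have := hl 1 (by simp)
        simpa using this
    · have htail : altP x r s φ (blks g K ks) := by
        rw [hblk] at hl
        unfold blk at hl
        split at hl <;> exact altP_drop2 hl
      exact ih htail k' hk'

/-- independence from the "no empty pattern" branch of GP -/
lemma indep_of_left {x : ℕ → X} {r s : ℝ} {g : ℕ → ℕ} (hg : StrictMono g)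
    (hleft : ∀ l : List ℕ, l.Pairwise (· < ·) → (∀ a ∈ l, ∃ n, a = g n) → ¬ Fq x r s l)
    (K₁ K₂ : Finset ℕ) (hd : Disjoint K₁ K₂) :
    ∃ φ : X →L[ℝ] ℝ, ‖φ‖ ≤ 1 ∧ (∀ k ∈ K₁, φ (x (g (4*k+1))) < r) ∧
      (∀ k ∈ K₂, s < φ (x (g (4*k+1)))) := by
  classical
  set ks := (K₁ ∪ K₂).sort (· ≤ ·) with hks
  have hsorted : ks.Pairwise (· < ·) := (Finset.sortedLT_sort _).pairwise
  have hl := hleft (blks g K₁ ks) (blks_sorted hg hsorted) (blks_entries)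
  rw [Fq, not_not] at hl
  obtain ⟨φ, hφ1, hφ2⟩ := hl
  have key := blks_altP hφ2
  refine ⟨φ, hφ1, fun k hk => ?_, fun k hk => ?_⟩
  · exact (key k (by rw [hks, Finset.mem_sort]; exact Finset.mem_union_left _ hk)).1 hk
  · have hknot : k ∉ K₁ := fun hmem => (Finset.disjoint_left.mp hd) hmem hk
    exact (key k (by rw [hks, Finset.mem_sort]; exact Finset.mem_union_right _ hk)).2 hknot

end Appl
section L1

variable {X : Type*} [NormedAddCommGroup X] [NormedSpace ℝ X]

lemma l1_estimate {x : ℕ → X} {g : ℕ → ℕ} {r s C₀ : ℝ} (hrs : r < s)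
    (hC₀ : ∀ n, ‖x n‖ ≤ C₀)
    (hind : ∀ K₁ K₂ : Finset ℕ, Disjoint K₁ K₂ →
      ∃ φ : X →L[ℝ] ℝ, ‖φ‖ ≤ 1 ∧ (∀ k ∈ K₁, φ (x (g (4*k+1))) < r) ∧
        (∀ k ∈ K₂, s < φ (x (g (4*k+1))))) (lam : ℕ →₀ ℝ) :
    (s - r)/2 * ∑ n ∈ lam.support, |lam n| ≤
        ‖∑ n ∈ lam.support, lam n • x (g (4*n+1))‖ ∧
      ‖∑ n ∈ lam.support, lam n • x (g (4*n+1))‖ ≤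
        (C₀ + 1) * ∑ n ∈ lam.support, |lam n| := by
  classical
  set S := lam.support with hS
  set m : ℕ → ℕ := fun k => g (4*k+1) with hm
  set v : X := ∑ n ∈ S, lam n • x (m n) with hv
  set K₁ := S.filter (fun k => lam k < 0) with hK₁
  set K₂ := S.filter (fun k => ¬ lam k < 0) with hK₂
  have hdisj : Disjoint K₁ K₂ := Finset.disjoint_filter_filter_not S S _
  obtain ⟨φ, hφ1, hφ2, hφ3⟩ := hind K₁ K₂ hdisj
  obtain ⟨ψ, hψ1, hψ2, hψ3⟩ := hind K₂ K₁ hdisj.symm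
  have habs : ∀ w : X →L[ℝ] ℝ, ‖w‖ ≤ 1 → |w v| ≤ ‖v‖ := by
    intro w hw
    calc |w v| = ‖w v‖ := (Real.norm_eq_abs _).symm
    _ ≤ ‖w‖ * ‖v‖ := w.le_opNorm v
    _ ≤ 1 * ‖v‖ := mul_le_mul_of_nonneg_right hw (norm_nonneg _)
    _ = ‖v‖ := one_mul _
  have happ : ∀ w : X →L[ℝ] ℝ, w v = ∑ n ∈ S, lam n * w (x (m n)) := by
    intro w
    rw [hv, map_sum]
    exact Finset.sum_congr rfl (fun n _ => by rw [map_smul]; rfl)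
  have hφlb : ∑ n ∈ S, (if lam n < 0 then lam n * r else lam n * s) ≤ φ v := by
    rw [happ φ]
    refine Finset.sum_le_sum (fun n hn => ?_)
    by_cases hneg : lam n < 0
    · rw [if_pos hneg]
      have h2 := hφ2 n (Finset.mem_filter.mpr ⟨hn, hneg⟩)
      exact mul_le_mul_of_nonpos_left h2.le hneg.le
    · rw [if_neg hneg]
      push_neg at hneg
      have h3 := hφ3 n (Finset.mem_filter.mpr ⟨hn, by push_neg; exact hneg⟩)
      exact mul_le_mul_of_nonneg_left h3.le hneg
  have hψub : ψ v ≤ ∑ n ∈ S, (if lam n < 0 then lam n * s else lam n * r) := by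
    rw [happ ψ]
    refine Finset.sum_le_sum (fun n hn => ?_)
    by_cases hneg : lam n < 0
    · rw [if_pos hneg]
      have h3 := hψ3 n (Finset.mem_filter.mpr ⟨hn, hneg⟩)
      exact mul_le_mul_of_nonpos_left h3.le hneg.le
    · rw [if_neg hneg]
      push_neg at hneg
      have h2 := hψ2 n (Finset.mem_filter.mpr ⟨hn, by push_neg; exact hneg⟩)
      exact mul_le_mul_of_nonneg_left h2.le hneg
  have hdiff : (s - r) * ∑ n ∈ S, |lam n| ≤ φ v - ψ v := by
    have hsum : ∑ n ∈ S, (if lam n < 0 then lam n * r else lam n * s) -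
        ∑ n ∈ S, (if lam n < 0 then lam n * s else lam n * r) =
        (s - r) * ∑ n ∈ S, |lam n| := by
      rw [← Finset.sum_sub_distrib, Finset.mul_sum]
      refine Finset.sum_congr rfl (fun n _ => ?_)
      by_cases hneg : lam n < 0
      · rw [if_pos hneg, if_pos hneg, abs_of_neg hneg]; ring
      · push_neg at hneg
        rw [if_neg (not_lt.mpr hneg), if_neg (not_lt.mpr hneg), abs_of_nonneg hneg]; ring
    linarith
  constructor
  · have h1 := habs φ hφ1
    have h2 := habs ψ hψ1
    have h3 : φ v - ψ v ≤ 2 * ‖v‖ := by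
      have := abs_le.mp h1
      have := abs_le.mp h2
      linarith [(abs_le.mp h1).2, (abs_le.mp h2).1]
    linarith
  · calc ‖v‖ ≤ ∑ n ∈ S, ‖lam n • x (m n)‖ := norm_sum_le _ _
    _ = ∑ n ∈ S, |lam n| * ‖x (m n)‖ := by
        refine Finset.sum_congr rfl (fun n _ => ?_)
        rw [norm_smul, Real.norm_eq_abs]
    _ ≤ ∑ n ∈ S, |lam n| * (C₀ + 1) := by
        refine Finset.sum_le_sum (fun n _ => ?_)
        exact mul_le_mul_of_nonneg_left (by linarith [hC₀ (m n)]) (abs_nonneg _)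
    _ = (C₀ + 1) * ∑ n ∈ S, |lam n| := by
        rw [Finset.mul_sum]
        exact Finset.sum_congr rfl (fun n _ => mul_comm _ _)

end L1
end Ros

open Ros Filter

/-- Rosenthal's ℓ¹-theorem (real case): every bounded sequence in a real Banach
space admits a subsequence which is either weak Cauchy or equivalent to the
usual ℓ¹-basis. -/
theorem rosenthal_l1_real (X : Type*) [NormedAddCommGroup X] [NormedSpace ℝ X]
    [CompleteSpace X] (x : ℕ → X) (hx : ∃ C : ℝ, ∀ n, ‖x n‖ ≤ C) :
    ∃ m : ℕ → ℕ, StrictMono m ∧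
      ((∀ φ : X →L[ℝ] ℝ, ∃ l : ℝ,
          Filter.Tendsto (fun n => φ (x (m n))) Filter.atTop (nhds l)) ∨
        ∃ c C : ℝ, 0 < c ∧ 0 < C ∧ ∀ lam : ℕ →₀ ℝ,
          c * ∑ n ∈ lam.support, |lam n| ≤ ‖∑ n ∈ lam.support, lam n • x (m n)‖ ∧
          ‖∑ n ∈ lam.support, lam n • x (m n)‖ ≤ C * ∑ n ∈ lam.support, |lam n|) := by
  classical
  obtain ⟨C₀, hC₀⟩ := hx
  have hC₀0 : 0 ≤ C₀ := le_trans (norm_nonneg _) (hC₀ 0)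
  by_cases H : ∃ g : ℕ → ℕ, StrictMono g ∧ ∃ r s : ℚ, (r : ℝ) < (s : ℝ) ∧
      ∀ l : List ℕ, l.Pairwise (· < ·) → (∀ a ∈ l, ∃ n, a = g n) → ¬ Fq x r s l
  · -- ℓ¹ branch
    obtain ⟨g, hg, r, s, hrs, hleft⟩ := H
    refine ⟨fun k => g (4*k+1), fun a b h => hg (by omega), Or.inr ?_⟩
    exact ⟨((s : ℝ) - r)/2, C₀ + 1, by linarith, by linarith,
      fun lam => l1_estimate hrs hC₀ (indep_of_left hg hleft) lam⟩
  · -- weak Cauchy branch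
    obtain ⟨pairs, hpairs⟩ := exists_surjective_nat (ℚ × ℚ)
    have step : ∀ g : ℕ → ℕ, StrictMono g → ∀ e : ℕ, ∃ g', StrictMono g' ∧
        (∀ n, ∃ m', g' n = g m') ∧
        (((pairs e).1 : ℝ) < ((pairs e).2 : ℝ) →
          ∀ h : ℕ → ℕ, StrictMono h →
            ∃ k, Fq x (pairs e).1 (pairs e).2 (pre (g' ∘ h) k)) := by
      intro g hg e
      by_cases hlt : ((pairs e).1 : ℝ) < ((pairs e).2 : ℝ)
      · obtain ⟨g', h1, h2, h3⟩ :=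
          GPmain (Fq x ((pairs e).1 : ℝ) ((pairs e).2 : ℝ)) hg
        rcases h3 with h3 | h3
        · exact absurd ⟨g', h1, (pairs e).1, (pairs e).2, hlt, h3⟩ H
        · exact ⟨g', h1, h2, fun _ => h3⟩
      · exact ⟨g, hg, fun n => ⟨n, rfl⟩, fun h' => absurd h' hlt⟩
    choose st hst1 hst2 hst3 using step
    set G : ℕ → {g : ℕ → ℕ // StrictMono g} :=
      fun e => Nat.rec ⟨id, strictMono_id⟩ (fun e ih => ⟨st ih.1 ih.2 e, hst1 ih.1 ih.2 e⟩) e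
      with hG
    have hGsub : ∀ e n, ∃ m', (G (e+1)).1 n = (G e).1 m' := fun e => hst2 (G e).1 (G e).2 e
    have hGright : ∀ e, (((pairs e).1 : ℝ) < ((pairs e).2 : ℝ)) →
        ∀ h : ℕ → ℕ, StrictMono h →
          ∃ k, Fq x (pairs e).1 (pairs e).2 (pre ((G (e+1)).1 ∘ h) k) :=
      fun e => hst3 (G e).1 (G e).2 e
    have hGtrans : ∀ e f, e ≤ f → ∀ n, ∃ m', (G f).1 n = (G e).1 m' := by
      intro e f hef
      induction f, hef using Nat.le_induction with
      | base => exact fun n => ⟨n, rfl⟩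
      | succ f hef ih =>
        intro n
        obtain ⟨m1, hm1⟩ := hGsub f n
        obtain ⟨m2, hm2⟩ := ih m1
        exact ⟨m2, by rw [hm1, hm2]⟩
    set dg : ℕ → ℕ := fun n => (G n).1 n with hdgdef
    have hdg : StrictMono dg := by
      apply strictMono_nat_of_lt_succ
      intro n
      obtain ⟨u, hu, huq⟩ := factor (G n).2 (G (n+1)).2 (hGsub n)
      have h1 : (G n).1 n ≤ (G (n+1)).1 n := by
        rw [huq]
        exact (G n).2.monotone (StrictMono.le_apply hu)
      have h2 : (G (n+1)).1 n < (G (n+1)).1 (n+1) := (G (n+1)).2 (by omega)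
      show (G n).1 n < (G (n+1)).1 (n+1)
      omega
    refine ⟨dg, hdg, Or.inl ?_⟩
    intro φ
    set ψ : X →L[ℝ] ℝ := (‖φ‖ + 1)⁻¹ • φ with hψdef
    have hφpos : (0:ℝ) < ‖φ‖ + 1 := by positivity
    have hφψ : ∀ y : X, φ y = (‖φ‖ + 1) * ψ y := by
      intro y
      show φ y = (‖φ‖ + 1) * ((‖φ‖ + 1)⁻¹ • φ) y
      rw [ContinuousLinearMap.smul_apply, smul_eq_mul]
      field_simp
    have hψn : ‖ψ‖ ≤ 1 := by
      refine ContinuousLinearMap.opNorm_le_bound ψ zero_le_one (fun y => ?_)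
      have h1 : ψ y = (‖φ‖ + 1)⁻¹ * φ y := by
        rw [hψdef]; rw [ContinuousLinearMap.smul_apply, smul_eq_mul]
      rw [h1, Real.norm_eq_abs, abs_mul, abs_of_pos (by positivity : (0:ℝ) < (‖φ‖+1)⁻¹)]
      have h2 : |φ y| ≤ ‖φ‖ * ‖y‖ := by
        rw [← Real.norm_eq_abs]; exact φ.le_opNorm y
      have h3 : (‖φ‖ + 1)⁻¹ * |φ y| ≤ (‖φ‖ + 1)⁻¹ * (‖φ‖ * ‖y‖) :=
        mul_le_mul_of_nonneg_left h2 (by positivity)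
      have h4 : (‖φ‖ + 1)⁻¹ * (‖φ‖ * ‖y‖) ≤ 1 * ‖y‖ := by
        rw [one_mul, ← mul_assoc]
        have h5 : (‖φ‖ + 1)⁻¹ * ‖φ‖ ≤ 1 := by
          rw [inv_mul_le_iff₀ hφpos, mul_one]; linarith
        have := mul_le_mul_of_nonneg_right h5 (norm_nonneg y)
        linarith
      linarith
    set a : ℕ → ℝ := fun n => ψ (x (dg n)) with hadef
    have hab : ∀ n, |a n| ≤ C₀ := by
      intro n
      calc |a n| = ‖ψ (x (dg n))‖ := (Real.norm_eq_abs _).symm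
      _ ≤ ‖ψ‖ * ‖x (dg n)‖ := ψ.le_opNorm _
      _ ≤ 1 * C₀ := mul_le_mul hψn (hC₀ _) (norm_nonneg _) zero_le_one
      _ = C₀ := one_mul _
    have hbd1 : IsBoundedUnder (· ≤ ·) atTop a :=
      isBoundedUnder_of ⟨C₀, fun n => (abs_le.mp (hab n)).2⟩
    have hbd2 : IsBoundedUnder (· ≥ ·) atTop a :=
      isBoundedUnder_of ⟨-C₀, fun n => (abs_le.mp (hab n)).1⟩
    suffices hsuff : ∃ l, Tendsto a atTop (nhds l) by
      obtain ⟨l, hl⟩ := hsuff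
      refine ⟨(‖φ‖ + 1) * l, ?_⟩
      have h2 := hl.const_mul (‖φ‖ + 1)
      have h3 : (fun n => φ (x (dg n))) = fun n => (‖φ‖ + 1) * a n := by
        funext n; exact hφψ _
      rw [h3]
      exact h2
    by_cases heq : liminf a atTop = limsup a atTop
    · exact ⟨limsup a atTop, tendsto_of_liminf_eq_limsup heq rfl hbd1 hbd2⟩
    exfalso
    have hlt : liminf a atTop < limsup a atTop :=
      lt_of_le_of_ne (liminf_le_limsup hbd1 hbd2) heq
    obtain ⟨q1, hq1a, hq1b⟩ := exists_rat_btwn hlt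
    obtain ⟨q2, hq2a, hq2b⟩ := exists_rat_btwn hq1b
    obtain ⟨e, he⟩ := hpairs (q1, q2)
    have hfr1 : ∃ᶠ n in atTop, a n < (q1 : ℝ) :=
      frequently_lt_of_liminf_lt (hbd1.isCoboundedUnder_ge) hq1a
    have hfr2 : ∃ᶠ n in atTop, (q2 : ℝ) < a n :=
      frequently_lt_of_lt_limsup (hbd2.isCoboundedUnder_le) hq2b
    rw [frequently_atTop] at hfr1 hfr2
    have key : ∀ (i N : ℕ), ∃ v, N ≤ v ∧ (i % 2 = 0 → a v < (q1 : ℝ)) ∧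
        (¬ i % 2 = 0 → (q2 : ℝ) < a v) := by
      intro i N
      by_cases hi : i % 2 = 0
      · obtain ⟨v, hv1, hv2⟩ := hfr1 N
        exact ⟨v, hv1, fun _ => hv2, fun h => absurd hi h⟩
      · obtain ⟨v, hv1, hv2⟩ := hfr2 N
        exact ⟨v, hv1, fun h => absurd h hi, fun _ => hv2⟩
    choose V hV1 hV2 hV3 using key
    set nn : ℕ → ℕ := fun i => Nat.rec (V 0 (e+1)) (fun i ih => V (i+1) (ih+1)) i with hnn
    have hnns : ∀ i, nn (i+1) = V (i+1) (nn i + 1) := fun i => rfl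
    have hnmono : StrictMono nn := by
      apply strictMono_nat_of_lt_succ
      intro i
      rw [hnns]
      have := hV1 (i+1) (nn i + 1)
      omega
    have hnlb : ∀ i, e + 1 ≤ nn i := by
      intro i
      induction i with
      | zero => exact hV1 0 (e+1)
      | succ i ih =>
        rw [hnns]
        have := hV1 (i+1) (nn i + 1)
        omega
    have hsubc : ∀ i, ∃ m', (dg ∘ nn) i = (G (e+1)).1 m' :=
      fun i => hGtrans (e+1) (nn i) (hnlb i) (nn i)
    obtain ⟨u, hu, huq⟩ := factor (G (e+1)).2 (hdg.comp hnmono) hsubc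
    have hq12 : ((q1 : ℝ) < (q2 : ℝ)) := hq2a
    have hright := hGright e (by rw [he]; exact hq12) u hu
    obtain ⟨k, hk⟩ := hright
    rw [he] at hk
    apply hk
    refine ⟨ψ, hψn, ?_⟩
    intro i hi
    have hgetelem : (pre ((G (e+1)).1 ∘ u) k)[i] = dg (nn i) := by
      rw [pre_getElem _ _ _ hi]
      exact (congrFun huq i).symm
    rw [hgetelem]
    have hcond : (i % 2 = 0 → a (nn i) < (q1 : ℝ)) ∧ (¬ i % 2 = 0 → (q2 : ℝ) < a (nn i)) := by
      cases i with
      | zero => exact ⟨hV2 0 (e+1), hV3 0 (e+1)⟩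
      | succ i => rw [hnns]; exact ⟨hV2 (i+1) (nn i + 1), hV3 (i+1) (nn i + 1)⟩
    by_cases hi2 : i % 2 = 0
    · rw [if_pos hi2]; exact hcond.1 hi2
    · rw [if_neg hi2]; exact hcond.2 hi2
end

section
/- Let K be a compact metric space, (f_n) a bounded sequence in C(K, ℂ), and ε > 0. Then either (f_n) admits an ε-weak Cauchy subsequence, or for every δ > 0 there exists a subsequence (f_{m_n}) such that ‖Σ_{n≥2} λ_n (f_{m_n} − f_{m_1})‖_∞ ≥ (ε√2/8 − δ) · Σ_{n≥2} (|Re(λ_n)| + |Im(λ_n)|) for every finitely supported sequence of complex scalars (λ_n)_{n≥2}. -/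
open Set

namespace CKaux

noncomputable def cellOf (η : ℝ) (z : ℂ) : ℤ × ℤ := (⌊z.re / η⌋, ⌊z.im / η⌋)

lemma abs_near_of_floor_eq {η a b : ℝ} (hη : 0 < η) (h : ⌊a / η⌋ = ⌊b / η⌋) :
    |a - b| ≤ η := by
  have h1 := Int.floor_le (a / η)
  have h2 := Int.lt_floor_add_one (a / η)
  have h3 := Int.floor_le (b / η)
  have h4 := Int.lt_floor_add_one (b / η)
  rw [h] at h1 h2
  have e1 : (a - b)/η < 1 := by rw [sub_div]; linarith
  have e2 : (b - a)/η < 1 := by rw [sub_div]; linarith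
  rw [div_lt_one hη] at e1 e2
  rw [abs_le]; constructor <;> linarith

lemma norm_sub_le_of_cellEq {η : ℝ} (hη : 0 < η) {z w : ℂ} (h : cellOf η z = cellOf η w) :
    ‖z - w‖ ≤ 2 * η := by
  have h1 : ⌊z.re / η⌋ = ⌊w.re / η⌋ := congrArg Prod.fst h
  have h2 : ⌊z.im / η⌋ = ⌊w.im / η⌋ := congrArg Prod.snd h
  have e1 : |(z - w).re| ≤ η := by simpa using abs_near_of_floor_eq hη h1
  have e2 : |(z - w).im| ≤ η := by simpa using abs_near_of_floor_eq hη h2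
  calc ‖z - w‖ ≤ |(z-w).re| + |(z-w).im| := Complex.norm_le_abs_re_add_abs_im _
    _ ≤ 2 * η := by linarith

lemma re_add_im_le_sqrt_two_mul_norm (z : ℂ) :
    |z.re| + |z.im| ≤ Real.sqrt 2 * ‖z‖ := by
  have hc : ‖z‖ ^ 2 = z.re ^ 2 + z.im ^ 2 := by
    rw [Complex.sq_norm, Complex.normSq_apply]; ring
  have hs : Real.sqrt 2 ^ 2 = 2 := Real.sq_sqrt (by norm_num)
  have h0 : (0:ℝ) ≤ Real.sqrt 2 * ‖z‖ := by positivity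
  nlinarith [sq_nonneg (|z.re| - |z.im|), sq_nonneg (Real.sqrt 2 * ‖z‖ - |z.re| - |z.im|),
    abs_nonneg z.re, abs_nonneg z.im, sq_abs z.re, sq_abs z.im]

lemma infinite_of_unbounded {S : Set ℕ} (h : ∀ n, ∃ m ∈ S, n ≤ m) : S.Infinite := by
  apply Set.infinite_of_not_bddAbove
  rintro ⟨b, hb⟩
  obtain ⟨m, hm, hbm⟩ := h (b+1)
  exact absurd (hb hm) (by omega)

lemma pigeon {α β : Type*} {S : Set α} (hS : S.Infinite) (g : α → β) (T : Finset β)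
    (hg : ∀ a ∈ S, g a ∈ T) : ∃ b ∈ T, {a ∈ S | g a = b}.Infinite := by
  by_contra h
  push_neg at h
  have : S ⊆ ⋃ b ∈ T, {a ∈ S | g a = b} := by
    intro a ha; simp only [mem_iUnion]; exact ⟨g a, hg a ha, ha, rfl⟩
  exact hS (Set.Finite.subset (Set.Finite.biUnion T.finite_toSet
    (fun b hb => h b hb)) this)

lemma tail_infinite {S : Set ℕ} (hS : S.Infinite) (a : ℕ) : (S ∩ Ioi a).Infinite := by
  have : S ∩ Ioi a = S \ Iic a := by ext x; simp [Set.mem_diff, not_le]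
  rw [this]; exact hS.diff (finite_Iic a)


def Rp {α : Type*} (A B : ℕ → Set α) (X : Set α) (M : Set ℕ) : Prop :=
  ∃ t ∈ X, {n ∈ M | t ∈ A n}.Infinite ∧ {n ∈ M | t ∈ B n}.Infinite

lemma Rp.mono {α : Type*} {A B : ℕ → Set α} {X : Set α} {M M' : Set ℕ}
    (hMM : M ⊆ M') (h : Rp A B X M) : Rp A B X M' := by
  obtain ⟨t, ht, h1, h2⟩ := h
  exact ⟨t, ht, h1.mono (fun n hn => ⟨hMM hn.1, hn.2⟩),
    h2.mono (fun n hn => ⟨hMM hn.1, hn.2⟩)⟩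

/-- Hereditary color selection. -/
lemma hered_color {γ : Type*} (cs : Finset γ) (Φ : γ → Set ℕ → Prop)
    (mono : ∀ c (M M' : Set ℕ), M ⊆ M' → Φ c M → Φ c M')
    (M₀ : Set ℕ) (hM₀ : M₀.Infinite)
    (h : ∀ M, M ⊆ M₀ → M.Infinite → ∃ c ∈ cs, Φ c M) :
    ∃ c ∈ cs, ∃ M₁, M₁ ⊆ M₀ ∧ M₁.Infinite ∧ ∀ M, M ⊆ M₁ → M.Infinite → Φ c M := by
  classical
  induction cs using Finset.induction generalizing M₀ with
  | empty => obtain ⟨c, hc, -⟩ := h M₀ (le_refl _) hM₀; exact absurd hc (by simp)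
  | insert c cs' hc ih =>
    by_cases hgood : ∃ M₁, M₁ ⊆ M₀ ∧ M₁.Infinite ∧ ∀ M, M ⊆ M₁ → M.Infinite → Φ c M
    · obtain ⟨M₁, h1, h2, h3⟩ := hgood
      exact ⟨c, Finset.mem_insert_self _ _, M₁, h1, h2, h3⟩
    · push_neg at hgood
      obtain ⟨M', hM'sub, hM'inf, hM'bad⟩ := hgood M₀ (le_refl _) hM₀
      -- on subsets of M', Φ c never holds
      have hnoc : ∀ M, M ⊆ M' → M.Infinite → ¬ Φ c M := by
        intro M hsub hinf hΦ
        exact hM'bad (mono c M M' hsub hΦ)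
      have h' : ∀ M, M ⊆ M' → M.Infinite → ∃ c' ∈ cs', Φ c' M := by
        intro M hsub hinf
        obtain ⟨c', hc', hΦ⟩ := h M (hsub.trans hM'sub) hinf
        rcases Finset.mem_insert.1 hc' with rfl | hmem
        · exact absurd hΦ (hnoc M hsub hinf)
        · exact ⟨c', hmem, hΦ⟩
      obtain ⟨c', hc', M₁, hs, hi, hh⟩ := ih M' hM'inf h'
      exact ⟨c', Finset.mem_insert_of_mem hc', M₁, hs.trans hM'sub, hi, hh⟩


lemma step {α ι : Type*} [Finite ι] (A B : ℕ → Set α) (X : ι → Set α)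
    (N : Set ℕ) (hN : N.Infinite)
    (hX : ∀ s, ∀ M, M ⊆ N → M.Infinite → Rp A B (X s) M) :
    ∃ j₀ ∈ N, ∃ N', N' ⊆ N ∧ N'.Infinite ∧ (∀ x ∈ N', j₀ < x) ∧
      ∀ (s : ι) (b : Bool), ∀ M, M ⊆ N' → M.Infinite →
        Rp A B (X s ∩ (cond b (A j₀) (B j₀))) M := by
  classical
  by_contra hcon
  have hbad : ∀ j₀ ∈ N, ∀ N', N' ⊆ N → N'.Infinite → (∀ x ∈ N', j₀ < x) →
      ∃ s b M, M ⊆ N' ∧ M.Infinite ∧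
        ¬ Rp A B (X s ∩ (cond b (A j₀) (B j₀))) M := by
    intro j₀ hj₀ N' h1 h2 h3
    by_contra hcon2
    push_neg at hcon2
    exact hcon ⟨j₀, hj₀, N', h1, h2, h3,
      fun s b M hM hMinf => hcon2 s b M hM hMinf⟩
  -- one diagonal step
  have hch : ∀ (L : Set ℕ), L ⊆ N → L.Infinite →
      ∃ q : (ι × Bool) × Set ℕ, q.2 ⊆ L ∩ Ioi (sInf L) ∧ q.2.Infinite ∧
        ¬ Rp A B (X q.1.1 ∩ (cond q.1.2 (A (sInf L)) (B (sInf L)))) q.2 := by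
    intro L hLN hLinf
    have hj : sInf L ∈ L := Nat.sInf_mem hLinf.nonempty
    obtain ⟨s, b, M, hM1, hM2, hM3⟩ := hbad (sInf L) (hLN hj) (L ∩ Ioi (sInf L))
      (fun x hx => hLN hx.1) (tail_infinite hLinf _) (fun x hx => hx.2)
    exact ⟨((s, b), M), hM1, hM2, hM3⟩
  choose pick hpick1 hpick2 hpick3 using hch
  let G : ℕ → {L : Set ℕ // L ⊆ N ∧ L.Infinite} := fun n => Nat.rec
    ⟨N, Subset.rfl, hN⟩
    (fun _ prev => ⟨(pick prev.1 prev.2.1 prev.2.2).2,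
      fun x hx => prev.2.1 (hpick1 prev.1 prev.2.1 prev.2.2 hx).1,
      hpick2 prev.1 prev.2.1 prev.2.2⟩) n
  set j : ℕ → ℕ := fun k => sInf (G k).1 with hj
  set σ : ℕ → ι × Bool := fun k => (pick (G k).1 (G k).2.1 (G k).2.2).1 with hσ
  have hjmem : ∀ k, j k ∈ (G k).1 := fun k => Nat.sInf_mem (G k).2.2.nonempty
  have hsub : ∀ k, (G (k+1)).1 ⊆ (G k).1 ∩ Ioi (j k) :=
    fun k => hpick1 (G k).1 (G k).2.1 (G k).2.2
  have hnR : ∀ k, ¬ Rp A B (X (σ k).1 ∩ (cond (σ k).2 (A (j k)) (B (j k))))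
      (G (k+1)).1 := fun k => hpick3 (G k).1 (G k).2.1 (G k).2.2
  have chain : ∀ k l, k ≤ l → (G l).1 ⊆ (G k).1 := by
    intro k l hkl
    induction l, hkl using Nat.le_induction with
    | base => exact Subset.rfl
    | succ l hkl ih => exact (fun x hx => ih (hsub l hx).1)
  have hjmono : StrictMono j := by
    apply strictMono_nat_of_lt_succ
    intro k
    exact (hsub k (hjmem (k+1))).2
  have hjN : ∀ k, j k ∈ N := fun k => (G k).2.1 (hjmem k)
  have key : ∀ k l, k < l → j l ∈ (G (k+1)).1 := fun k l hkl =>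
    chain (k+1) l hkl (hjmem l)
  obtain ⟨c, hc⟩ := Finite.exists_infinite_fiber σ
  have hKs : (σ ⁻¹' {c}).Infinite := Set.infinite_coe_iff.mp hc
  set J : Set ℕ := j '' (σ ⁻¹' {c}) with hJ
  have hJinf : J.Infinite := hKs.image (hjmono.injective.injOn)
  have hJN : J ⊆ N := by rintro x ⟨k, -, rfl⟩; exact hjN k
  obtain ⟨t, ht, hIP, hIQ⟩ := hX c.1 J hJN hJinf
  -- pick an index in J where t lands in the right cell (acc. to c.2)
  have main : ∀ (l : ℕ), σ l = c → t ∈ (cond c.2 (A (j l)) (B (j l))) → False := by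
    intro l hl htl
    apply hnR l
    rw [hl]
    refine ⟨t, ⟨ht, htl⟩, ?_, ?_⟩
    · apply ((tail_infinite hIP (j l)).mono ?_)
      rintro n ⟨⟨⟨k, hk, rfl⟩, htn⟩, hgt⟩
      exact ⟨key l k (hjmono.lt_iff_lt.1 hgt), htn⟩
    · apply ((tail_infinite hIQ (j l)).mono ?_)
      rintro n ⟨⟨⟨k, hk, rfl⟩, htn⟩, hgt⟩
      exact ⟨key l k (hjmono.lt_iff_lt.1 hgt), htn⟩
  cases hb : c.2 with
  | true =>
    obtain ⟨n, ⟨⟨l, hl, rfl⟩, htn⟩⟩ := hIP.nonempty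
    exact main l hl (by rw [hb]; simpa using htn)
  | false =>
    obtain ⟨n, ⟨⟨l, hl, rfl⟩, htn⟩⟩ := hIQ.nonempty
    exact main l hl (by rw [hb]; simpa using htn)


def Cs {α : Type*} (A B : ℕ → Set α) {n : ℕ} (ms : Fin n → ℕ) (s : ℕ → Bool) : Set α :=
  {t | ∀ k : Fin n, t ∈ cond (s k.1) (A (ms k)) (B (ms k))}

lemma Cs_congr {α : Type*} (A B : ℕ → Set α) {n : ℕ} (ms : Fin n → ℕ) {s s' : ℕ → Bool}
    (h : ∀ k < n, s k = s' k) : Cs A B ms s = Cs A B ms s' := by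
  unfold Cs
  ext t
  constructor <;> intro ht k <;> [rw [← h k.1 k.2]; rw [h k.1 k.2]] <;> exact ht k

lemma Cs_snoc {α : Type*} (A B : ℕ → Set α) {n : ℕ} (ms : Fin n → ℕ) (j₀ : ℕ)
    (s : ℕ → Bool) :
    Cs A B (Fin.snoc ms j₀) s = Cs A B ms s ∩ cond (s n) (A j₀) (B j₀) := by
  unfold Cs
  ext t
  simp only [Set.mem_setOf_eq, Set.mem_inter_iff]
  constructor
  · intro ht
    refine ⟨fun k => ?_, ?_⟩
    · have := ht k.castSucc
      rwa [Fin.snoc_castSucc, Fin.coe_castSucc] at this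
    · have := ht (Fin.last n)
      rwa [Fin.snoc_last, Fin.val_last] at this
  · rintro ⟨h1, h2⟩ k
    induction k using Fin.lastCases with
    | last => rw [Fin.snoc_last, Fin.val_last]; exact h2
    | cast k' => rw [Fin.snoc_castSucc, Fin.coe_castSucc]; exact h1 k'

def Inv {α : Type*} (A B : ℕ → Set α) (n : ℕ) (ms : Fin n → ℕ) (N : Set ℕ) : Prop :=
  N.Infinite ∧ (∀ x ∈ N, ∀ k, ms k < x) ∧ StrictMono ms ∧
    ∀ s : ℕ → Bool, ∀ M, M ⊆ N → M.Infinite → Rp A B (Cs A B ms s) M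

lemma inv_extend {α : Type*} (A B : ℕ → Set α) (n : ℕ) (ms : Fin n → ℕ) (N : Set ℕ)
    (h : Inv A B n ms N) :
    ∃ q : ℕ × Set ℕ, q.1 ∈ N ∧ Inv A B (n+1) (Fin.snoc ms q.1) q.2 := by
  classical
  obtain ⟨hNinf, hgt, hmono, hpat⟩ := h
  obtain ⟨j₀, hj₀, N', hN'N, hN'inf, hN'gt, hher⟩ :=
    step A B (fun σ : Fin n → Bool => Cs A B ms (fun k => if h : k < n then σ ⟨k, h⟩ else true))
      N hNinf (fun σ M hM hMinf => hpat _ M hM hMinf)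
  refine ⟨(j₀, N'), hj₀, hN'inf, ?_, ?_, ?_⟩
  · intro x hx k
    induction k using Fin.lastCases with
    | last => rw [Fin.snoc_last]; exact hN'gt x hx
    | cast k' => rw [Fin.snoc_castSucc]; exact hgt x (hN'N hx) k'
  · intro a b hab
    induction b using Fin.lastCases with
    | last =>
      induction a using Fin.lastCases with
      | last => exact absurd hab (lt_irrefl _)
      | cast a' =>
        rw [Fin.snoc_last, Fin.snoc_castSucc]
        exact hgt j₀ hj₀ a'
    | cast b' =>
      induction a using Fin.lastCases with
      | last => exact absurd hab (by simp [Fin.lt_def, Fin.val_last])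
      | cast a' =>
        rw [Fin.snoc_castSucc, Fin.snoc_castSucc]
        exact hmono (by rwa [Fin.castSucc_lt_castSucc_iff] at hab)
  · intro s M hM hMinf
    rw [Cs_snoc]
    have heq : Cs A B ms (fun k => if h : k < n then s k else true) = Cs A B ms s :=
      Cs_congr A B ms (fun k hk => by simp [hk])
    have := hher (fun k : Fin n => s k.1) (s n) M hM hMinf
    rwa [show (fun k : ℕ => if h : k < n then (fun k' : Fin n => s k'.1) ⟨k, h⟩ else true)
      = fun k : ℕ => if h : k < n then s k else true from rfl, heq] at this

lemma indep_extract {α : Type*} (A B : ℕ → Set α) (M₀ : Set ℕ) (hM₀ : M₀.Infinite)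
    (hbase : ∀ M, M ⊆ M₀ → M.Infinite →
      ∃ t, {n ∈ M | t ∈ A n}.Infinite ∧ {n ∈ M | t ∈ B n}.Infinite) :
    ∃ m : ℕ → ℕ, StrictMono m ∧
      ∀ (n : ℕ) (s : ℕ → Bool), ∃ t, ∀ k ≤ n, t ∈ cond (s k) (A (m k)) (B (m k)) := by
  classical
  have inv0 : Inv A B 0 Fin.elim0 M₀ := by
    refine ⟨hM₀, fun x hx k => k.elim0, fun a => a.elim0, ?_⟩
    intro s M hM hMinf
    obtain ⟨t, h1, h2⟩ := hbase M hM hMinf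
    exact ⟨t, fun k => k.elim0, h1, h2⟩
  have hext := inv_extend A B
  choose pk hpk1 hpk2 using hext
  let Ψ : ℕ → Type _ := fun n => {p : (Fin n → ℕ) × Set ℕ // Inv A B n p.1 p.2}
  let F : ∀ n, Ψ n := fun n => Nat.rec (motive := Ψ)
    ⟨(Fin.elim0, M₀), inv0⟩
    (fun k prev => ⟨(Fin.snoc prev.1.1 (pk k prev.1.1 prev.1.2 prev.2).1,
      (pk k prev.1.1 prev.1.2 prev.2).2), hpk2 k prev.1.1 prev.1.2 prev.2⟩) n
  have hFs : ∀ k, (F (k+1)).1.1 = Fin.snoc (F k).1.1 (pk k (F k).1.1 (F k).1.2 (F k).2).1 :=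
    fun k => rfl
  set m : ℕ → ℕ := fun k => (F (k+1)).1.1 (Fin.last k) with hm
  have hcoh : ∀ n (k : Fin n), (F n).1.1 k = m k.1 := by
    intro n
    induction n with
    | zero => exact fun k => k.elim0
    | succ n ih =>
      intro k
      induction k using Fin.lastCases with
      | last => rfl
      | cast k' =>
        rw [hFs n, Fin.snoc_castSucc, Fin.coe_castSucc]
        exact ih k'
  refine ⟨m, ?_, ?_⟩
  · apply strictMono_nat_of_lt_succ
    intro k
    have hmono := (F (k+2)).2.2.2.1
    have e1 : (F (k+2)).1.1 ⟨k, by omega⟩ = m k := hcoh (k+2) ⟨k, by omega⟩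
    have e2 : (F (k+2)).1.1 ⟨k+1, by omega⟩ = m (k+1) := hcoh (k+2) ⟨k+1, by omega⟩
    rw [← e1, ← e2]
    exact hmono (by simp [Fin.lt_def])
  · intro n s
    obtain ⟨hNinf, hgt, hmono, hpat⟩ := (F (n+1)).2
    obtain ⟨t, ht, -, -⟩ := hpat s (F (n+1)).1.2 (le_refl _) hNinf
    refine ⟨t, fun k hk => ?_⟩
    have := ht ⟨k, by omega⟩
    rwa [hcoh (n+1) ⟨k, by omega⟩] at this


lemma round {K : Type*} [MetricSpace K] [CompactSpace K]
    (g : ℕ → C(K, ℂ)) (S : Finset ℕ) (lam : ℕ → ℂ) (w : ℂ) (η : ℝ)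
    (φ : ℂ →L[ℝ] ℝ) (hφ : ∀ z, |φ z| ≤ ‖z‖)
    (t t' : K)
    (h0 : ‖g 0 t - g 0 t'‖ ≤ 4 * η)
    (hd : ∀ n ∈ S,
      (0 ≤ φ (lam n * w) ∧ ‖(g (n+1) t - g (n+1) t') - w‖ ≤ 4 * η) ∨
      (φ (lam n * w) < 0 ∧ ‖(g (n+1) t - g (n+1) t') + w‖ ≤ 4 * η)) :
    (∑ n ∈ S, |φ (lam n * w)|) - 8 * η * ∑ n ∈ S, ‖lam n‖ ≤
      2 * ‖∑ n ∈ S, lam n • (g (n+1) - g 0)‖ := by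
  classical
  set F : C(K, ℂ) := ∑ n ∈ S, lam n • (g (n+1) - g 0) with hF
  have hFt : ∀ x : K, F x = ∑ n ∈ S, lam n * (g (n+1) x - g 0 x) := by
    intro x
    rw [hF]
    rw [ContinuousMap.coe_sum, Finset.sum_apply]
    apply Finset.sum_congr rfl
    intro n hn
    simp [smul_eq_mul]
  have hsub : F t - F t' = ∑ n ∈ S,
      lam n * ((g (n+1) t - g (n+1) t') - (g 0 t - g 0 t')) := by
    rw [hFt t, hFt t', ← Finset.sum_sub_distrib]
    apply Finset.sum_congr rfl
    intro n hn
    ring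
  have hterm : ∀ n ∈ S,
      |φ (lam n * w)| - 8 * η * ‖lam n‖ ≤
        φ (lam n * ((g (n+1) t - g (n+1) t') - (g 0 t - g 0 t'))) := by
    intro n hn
    rcases hd n hn with ⟨hpos, hnear⟩ | ⟨hneg, hnear⟩
    · have hdecomp : lam n * ((g (n+1) t - g (n+1) t') - (g 0 t - g 0 t'))
          = lam n * w + lam n * (((g (n+1) t - g (n+1) t') - w) - (g 0 t - g 0 t')) := by
        ring
      rw [hdecomp, map_add]
      have herr : |φ (lam n * (((g (n+1) t - g (n+1) t') - w) - (g 0 t - g 0 t')))|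
          ≤ 8 * η * ‖lam n‖ := by
        refine le_trans (hφ _) ?_
        rw [norm_mul]
        calc ‖lam n‖ * ‖((g (n+1) t - g (n+1) t') - w) - (g 0 t - g 0 t')‖
            ≤ ‖lam n‖ * (8 * η) := by
              apply mul_le_mul_of_nonneg_left _ (norm_nonneg _)
              calc ‖((g (n+1) t - g (n+1) t') - w) - (g 0 t - g 0 t')‖
                  ≤ ‖(g (n+1) t - g (n+1) t') - w‖ + ‖g 0 t - g 0 t'‖ := norm_sub_le _ _
                _ ≤ 4 * η + 4 * η := add_le_add hnear h0
                _ = 8 * η := by ring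
          _ = 8 * η * ‖lam n‖ := by ring
      rw [abs_of_nonneg hpos]
      have := neg_abs_le (φ (lam n * (((g (n+1) t - g (n+1) t') - w) - (g 0 t - g 0 t'))))
      linarith [herr, abs_nonneg (φ (lam n * (((g (n+1) t - g (n+1) t') - w) - (g 0 t - g 0 t'))))]
    · have hdecomp : lam n * ((g (n+1) t - g (n+1) t') - (g 0 t - g 0 t'))
          = -(lam n * w) + lam n * (((g (n+1) t - g (n+1) t') + w) - (g 0 t - g 0 t')) := by
        ring
      rw [hdecomp, map_add, map_neg]
      have herr : |φ (lam n * (((g (n+1) t - g (n+1) t') + w) - (g 0 t - g 0 t')))|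
          ≤ 8 * η * ‖lam n‖ := by
        refine le_trans (hφ _) ?_
        rw [norm_mul]
        calc ‖lam n‖ * ‖((g (n+1) t - g (n+1) t') + w) - (g 0 t - g 0 t')‖
            ≤ ‖lam n‖ * (8 * η) := by
              apply mul_le_mul_of_nonneg_left _ (norm_nonneg _)
              calc ‖((g (n+1) t - g (n+1) t') + w) - (g 0 t - g 0 t')‖
                  ≤ ‖(g (n+1) t - g (n+1) t') + w‖ + ‖g 0 t - g 0 t'‖ := norm_sub_le _ _
                _ ≤ 4 * η + 4 * η := add_le_add hnear h0
                _ = 8 * η := by ring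
          _ = 8 * η * ‖lam n‖ := by ring
      rw [abs_of_neg hneg]
      have := neg_abs_le (φ (lam n * (((g (n+1) t - g (n+1) t') + w) - (g 0 t - g 0 t'))))
      linarith
  have hsum : (∑ n ∈ S, |φ (lam n * w)|) - 8 * η * ∑ n ∈ S, ‖lam n‖ ≤ φ (F t - F t') := by
    rw [hsub, map_sum, Finset.mul_sum, ← Finset.sum_sub_distrib]
    exact Finset.sum_le_sum hterm
  have hup : φ (F t - F t') ≤ 2 * ‖F‖ := by
    calc φ (F t - F t') ≤ |φ (F t - F t')| := le_abs_self _
      _ ≤ ‖F t - F t'‖ := hφ _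
      _ ≤ ‖F t‖ + ‖F t'‖ := norm_sub_le _ _
      _ ≤ ‖F‖ + ‖F‖ := add_le_add (F.norm_coe_le_norm t) (F.norm_coe_le_norm t')
      _ = 2 * ‖F‖ := by ring
  linarith


end CKaux

open CKaux Set in
/-- Main theorem: for a bounded sequence in a complex C(K) space and ε > 0,
either there is an ε-weak Cauchy subsequence, or for every δ > 0 there is a
subsequence (f_{m_n}) with
‖Σ_{n≥2} λ_n (f_{m_n} − f_{m_1})‖ ≥ (ε√2/8 − δ)·Σ_{n≥2}(|Re λ_n| + |Im λ_n|). -/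
theorem main_CK_complex (K : Type*) [MetricSpace K] [CompactSpace K]
    (f : ℕ → C(K, ℂ)) (hf : ∃ C : ℝ, ∀ n, ‖f n‖ ≤ C) (ε : ℝ) (hε : 0 < ε) :
    (∃ m : ℕ → ℕ, StrictMono m ∧
        ∀ t : K, ∃ n₀ : ℕ, ∀ n ≥ n₀, ∀ k ≥ n₀, ‖f (m n) t - f (m k) t‖ < ε) ∨
      ∀ δ : ℝ, 0 < δ → ∃ m : ℕ → ℕ, StrictMono m ∧
        ∀ lam : ℕ →₀ ℂ,
          ‖∑ n ∈ lam.support, lam n • (f (m (n + 1)) - f (m 0))‖ ≥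
            (ε * Real.sqrt 2 / 8 - δ) *
              ∑ n ∈ lam.support, (|(lam n).re| + |(lam n).im|) := by
  classical
  by_cases hL : (∃ m : ℕ → ℕ, StrictMono m ∧
      ∀ t : K, ∃ n₀ : ℕ, ∀ n ≥ n₀, ∀ k ≥ n₀, ‖f (m n) t - f (m k) t‖ < ε)
  · exact Or.inl hL
  right
  push_neg at hL
  obtain ⟨C, hC⟩ := hf
  intro δ hδ
  -- trivial case: nonpositive constant
  by_cases htriv : ε * Real.sqrt 2 / 8 - δ ≤ 0
  · refine ⟨id, strictMono_id, fun lam => ?_⟩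
    have hTnn : 0 ≤ ∑ n ∈ lam.support, (|(lam n).re| + |(lam n).im|) :=
      Finset.sum_nonneg fun n _ => by positivity
    calc (ε * Real.sqrt 2 / 8 - δ) * ∑ n ∈ lam.support, (|(lam n).re| + |(lam n).im|)
        ≤ 0 := mul_nonpos_of_nonpos_of_nonneg htriv hTnn
      _ ≤ _ := norm_nonneg _
  push_neg at htriv
  set η : ℝ := δ / 4 with hηdef
  have hηpos : 0 < η := by positivity
  have hs2 : Real.sqrt 2 ^ 2 = 2 := Real.sq_sqrt (by norm_num)
  have hs0 : 0 ≤ Real.sqrt 2 := Real.sqrt_nonneg 2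
  have hslt : Real.sqrt 2 < 2 := by nlinarith
  have hsge1 : (1:ℝ) ≤ Real.sqrt 2 := by nlinarith
  have hεδ : 4 * δ < ε := by nlinarith
  set lo : ℤ := ⌊(-C)/η⌋ with hlo
  set hi : ℤ := ⌊C/η⌋ with hhi
  set box1 : Finset (ℤ×ℤ) := Finset.Icc lo hi ×ˢ Finset.Icc lo hi with hbox1
  have hcell_mem : ∀ n t, cellOf η (f n t) ∈ box1 := by
    intro n t
    have hnorm : ‖f n t‖ ≤ C := le_trans ((f n).norm_coe_le_norm t) (hC n)
    have habs : ‖f n t‖ ≤ C := hnorm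
    have hre : |(f n t).re| ≤ C := le_trans (Complex.abs_re_le_norm _) habs
    have him : |(f n t).im| ≤ C := le_trans (Complex.abs_im_le_norm _) habs
    rw [abs_le] at hre him
    have key : ∀ x : ℝ, -C ≤ x → x ≤ C → ⌊x/η⌋ ∈ Finset.Icc lo hi := by
      intro x h1 h2
      rw [Finset.mem_Icc, hlo, hhi]
      exact ⟨Int.floor_le_floor (by gcongr), Int.floor_le_floor (by gcongr)⟩
    exact Finset.mem_product.2 ⟨key _ hre.1 hre.2, key _ him.1 him.2⟩
  -- initial : every infinite set admits a separated pair of frequent cells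
  have hinit : ∀ M : Set ℕ, M ⊆ (univ : Set ℕ) → M.Infinite → ∃ c ∈ box1 ×ˢ box1,
      ((∃ u v : ℂ, cellOf η u = c.1 ∧ cellOf η v = c.2 ∧ ε ≤ ‖u - v‖) ∧
       ∃ t : K, {n ∈ M | cellOf η (f n t) = c.1}.Infinite ∧
         {n ∈ M | cellOf η (f n t) = c.2}.Infinite) := by
    intro M _ hM
    have hMset : {x | x ∈ M}.Infinite := hM
    have hemono : StrictMono (Nat.nth (· ∈ M)) := Nat.nth_strictMono hMset
    have hemem : ∀ k, Nat.nth (· ∈ M) k ∈ M := fun k => Nat.nth_mem_of_infinite hMset k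
    set e : ℕ → ℕ := Nat.nth (· ∈ M) with he
    obtain ⟨t, ht⟩ := hL e hemono
    choose aa haa bb hbb hab using ht
    obtain ⟨cc, hccbox, hfib⟩ := pigeon (Set.infinite_univ (α := ℕ))
      (fun n₀ => (cellOf η (f (e (aa n₀)) t), cellOf η (f (e (bb n₀)) t))) (box1 ×ˢ box1)
      (fun a _ => Finset.mem_product.2 ⟨hcell_mem _ _, hcell_mem _ _⟩)
    refine ⟨cc, hccbox, ⟨?_, t, ?_, ?_⟩⟩
    · obtain ⟨n₀, -, hn₀⟩ := hfib.nonempty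
      exact ⟨_, _, congrArg Prod.fst hn₀, congrArg Prod.snd hn₀, hab n₀⟩
    · apply infinite_of_unbounded
      intro nn
      obtain ⟨n₀, hn₀fib, hn₀gt⟩ := hfib.exists_gt nn
      refine ⟨e (aa n₀), ⟨hemem _, congrArg Prod.fst hn₀fib.2⟩, ?_⟩
      have h1 : n₀ ≤ aa n₀ := haa n₀
      have h2 : aa n₀ ≤ e (aa n₀) := hemono.le_apply
      omega
    · apply infinite_of_unbounded
      intro nn
      obtain ⟨n₀, hn₀fib, hn₀gt⟩ := hfib.exists_gt nn
      refine ⟨e (bb n₀), ⟨hemem _, congrArg Prod.snd hn₀fib.2⟩, ?_⟩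
      have h1 : n₀ ≤ bb n₀ := hbb n₀
      have h2 : bb n₀ ≤ e (bb n₀) := hemono.le_apply
      omega
  -- stabilize the pair of cells hereditarily
  obtain ⟨cc, hccbox, M₀, -, hM₀inf, hher⟩ := hered_color (box1 ×ˢ box1)
    (fun c M => (∃ u v : ℂ, cellOf η u = c.1 ∧ cellOf η v = c.2 ∧ ε ≤ ‖u - v‖) ∧
      ∃ t : K, {n ∈ M | cellOf η (f n t) = c.1}.Infinite ∧
        {n ∈ M | cellOf η (f n t) = c.2}.Infinite)
    (by
      rintro c M M' hMM ⟨h1, t, h2, h3⟩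
      exact ⟨h1, t, h2.mono (fun n hn => ⟨hMM hn.1, hn.2⟩),
        h3.mono (fun n hn => ⟨hMM hn.1, hn.2⟩)⟩)
    univ infinite_univ hinit
  obtain ⟨⟨u, v, hu, hv, huv⟩, -⟩ := hher M₀ Subset.rfl hM₀inf
  set A : ℕ → Set K := fun n => {x | cellOf η (f n x) = cc.1} with hA
  set B : ℕ → Set K := fun n => {x | cellOf η (f n x) = cc.2} with hB
  obtain ⟨m, hmmono, hreal⟩ := indep_extract A B M₀ hM₀inf
    (fun M hM hMinf => (hher M hM hMinf).2)
  refine ⟨m, hmmono, ?_⟩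
  intro lam
  set S := lam.support with hS
  set w : ℂ := u - v with hw
  set N : ℕ := S.sup id + 1 with hN
  set F : C(K, ℂ) := ∑ n ∈ S, lam n • (f (m (n + 1)) - f (m 0)) with hF
  -- distance facts for points in cells
  have hAu : ∀ j x, x ∈ A j → ‖f j x - u‖ ≤ 2*η := by
    intro j x hx
    exact norm_sub_le_of_cellEq hηpos ((hx : cellOf η (f j x) = cc.1).trans hu.symm)
  have hBv : ∀ j x, x ∈ B j → ‖f j x - v‖ ≤ 2*η := by
    intro j x hx
    exact norm_sub_le_of_cellEq hηpos ((hx : cellOf η (f j x) = cc.2).trans hv.symm)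
  -- one round of the estimate, for an abstract functional
  have hmain : ∀ (φ : ℂ →L[ℝ] ℝ), (∀ z, |φ z| ≤ ‖z‖) →
      (∑ n ∈ S, |φ (lam n * w)|) - 8 * η * ∑ n ∈ S, ‖lam n‖ ≤ 2 * ‖F‖ := by
    intro φ hφ
    obtain ⟨t, ht⟩ := hreal N (fun k => if k = 0 then true
      else decide (0 ≤ φ (lam (k-1) * w)))
    obtain ⟨t', ht'⟩ := hreal N (fun k => if k = 0 then true
      else decide (φ (lam (k-1) * w) < 0))
    have ht0 : t ∈ A (m 0) := by
      have h := ht 0 (by omega)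
      rwa [if_pos rfl] at h
    have ht0' : t' ∈ A (m 0) := by
      have h := ht' 0 (by omega)
      rwa [if_pos rfl] at h
    have h0 : ‖f (m 0) t - f (m 0) t'‖ ≤ 4 * η := by
      have e1 := hAu _ _ ht0
      have e2 := hAu _ _ ht0'
      calc ‖f (m 0) t - f (m 0) t'‖
          = ‖(f (m 0) t - u) - (f (m 0) t' - u)‖ := by ring_nf
        _ ≤ ‖f (m 0) t - u‖ + ‖f (m 0) t' - u‖ := norm_sub_le _ _
        _ ≤ 4 * η := by linarith
    have hd : ∀ n ∈ S,
        (0 ≤ φ (lam n * w) ∧ ‖(f (m (n+1)) t - f (m (n+1)) t') - w‖ ≤ 4 * η) ∨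
        (φ (lam n * w) < 0 ∧ ‖(f (m (n+1)) t - f (m (n+1)) t') + w‖ ≤ 4 * η) := by
      intro n hn
      have hn1 : n + 1 ≤ N := by
        have := Finset.le_sup (f := id) hn
        simp only [id] at this
        omega
      have h := ht (n+1) hn1
      have h' := ht' (n+1) hn1
      rw [if_neg (Nat.succ_ne_zero n)] at h h'
      simp only [Nat.add_sub_cancel] at h h'
      rcases le_or_gt 0 (φ (lam n * w)) with hpos | hneg
      · left
        refine ⟨hpos, ?_⟩
        rw [decide_eq_true hpos] at h
        rw [decide_eq_false (not_lt.2 hpos)] at h'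
        have e1 : ‖f (m (n+1)) t - u‖ ≤ 2*η := hAu _ _ h
        have e2 : ‖f (m (n+1)) t' - v‖ ≤ 2*η := hBv _ _ h'
        calc ‖(f (m (n+1)) t - f (m (n+1)) t') - w‖
            = ‖(f (m (n+1)) t - u) - (f (m (n+1)) t' - v)‖ := by rw [hw]; ring_nf
          _ ≤ ‖f (m (n+1)) t - u‖ + ‖f (m (n+1)) t' - v‖ := norm_sub_le _ _
          _ ≤ 4 * η := by linarith
      · right
        refine ⟨hneg, ?_⟩
        rw [decide_eq_false (not_le.2 hneg)] at h
        rw [decide_eq_true hneg] at h'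
        have e1 : ‖f (m (n+1)) t - v‖ ≤ 2*η := hBv _ _ h
        have e2 : ‖f (m (n+1)) t' - u‖ ≤ 2*η := hAu _ _ h'
        calc ‖(f (m (n+1)) t - f (m (n+1)) t') + w‖
            = ‖(f (m (n+1)) t - v) - (f (m (n+1)) t' - u)‖ := by rw [hw]; ring_nf
          _ ≤ ‖f (m (n+1)) t - v‖ + ‖f (m (n+1)) t' - u‖ := norm_sub_le _ _
          _ ≤ 4 * η := by linarith
    exact round (fun k => f (m k)) S lam w η φ hφ t t' h0 hd
  have h1 := hmain Complex.reCLM (fun z => by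
    rw [Complex.reCLM_apply]; exact Complex.abs_re_le_norm z)
  have h2 := hmain Complex.imCLM (fun z => by
    rw [Complex.imCLM_apply]; exact Complex.abs_im_le_norm z)
  simp only [Complex.reCLM_apply] at h1
  simp only [Complex.imCLM_apply] at h2
  have hterm : ∀ n ∈ S, ε * ‖lam n‖ ≤ |(lam n * w).re| + |(lam n * w).im| := by
    intro n hn
    calc ε * ‖lam n‖ ≤ ‖w‖ * ‖lam n‖ := mul_le_mul_of_nonneg_right huv (norm_nonneg _)
      _ = ‖lam n * w‖ := by rw [norm_mul]; ring
      _ ≤ |(lam n * w).re| + |(lam n * w).im| := by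
          exact Complex.norm_le_abs_re_add_abs_im _
  have hsum1 : ∑ n ∈ S, ε * ‖lam n‖ ≤
      ∑ n ∈ S, (|(lam n * w).re| + |(lam n * w).im|) := Finset.sum_le_sum hterm
  rw [Finset.sum_add_distrib] at hsum1
  rw [← Finset.mul_sum] at hsum1
  have hT : (∑ n ∈ S, (|(lam n).re| + |(lam n).im|)) ≤ Real.sqrt 2 * ∑ n ∈ S, ‖lam n‖ := by
    rw [Finset.mul_sum]
    exact Finset.sum_le_sum (fun n _ => re_add_im_le_sqrt_two_mul_norm _)
  have hSig : (0:ℝ) ≤ ∑ n ∈ S, ‖lam n‖ := Finset.sum_nonneg fun n _ => norm_nonneg _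
  have hTnn : (0:ℝ) ≤ ∑ n ∈ S, (|(lam n).re| + |(lam n).im|) :=
    Finset.sum_nonneg fun n _ => by positivity
  have hFnn : (0:ℝ) ≤ ‖F‖ := norm_nonneg _
  have hlow : (ε - 16 * η) * ∑ n ∈ S, ‖lam n‖ ≤ 4 * ‖F‖ := by nlinarith
  rw [ge_iff_le]
  have hcoef : 0 ≤ ε * Real.sqrt 2 / 8 - δ := le_of_lt htriv
  calc (ε * Real.sqrt 2 / 8 - δ) * ∑ n ∈ S, (|(lam n).re| + |(lam n).im|)
      ≤ (ε * Real.sqrt 2 / 8 - δ) * (Real.sqrt 2 * ∑ n ∈ S, ‖lam n‖) :=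
        mul_le_mul_of_nonneg_left hT hcoef
    _ ≤ ‖F‖ := by
        have h22 : Real.sqrt 2 * Real.sqrt 2 = 2 := by nlinarith
        have key : (ε * Real.sqrt 2 / 8 - δ) * (Real.sqrt 2 * ∑ n ∈ S, ‖lam n‖)
            = (ε/4 - δ * Real.sqrt 2) * ∑ n ∈ S, ‖lam n‖ := by
          have expand : (ε * Real.sqrt 2 / 8 - δ) * (Real.sqrt 2 * ∑ n ∈ S, ‖lam n‖)
              = ε * (Real.sqrt 2 * Real.sqrt 2) / 8 * ∑ n ∈ S, ‖lam n‖
                - δ * Real.sqrt 2 * ∑ n ∈ S, ‖lam n‖ := by ring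
          rw [expand, h22]; ring
        rw [key]
        have h3 : (ε/4 - δ * Real.sqrt 2) * ∑ n ∈ S, ‖lam n‖
            ≤ (ε/4 - δ) * ∑ n ∈ S, ‖lam n‖ :=
          mul_le_mul_of_nonneg_right (by nlinarith) hSig
        have h4 : ε - 16 * η = ε - 4 * δ := by rw [hηdef]; ring
        rw [h4] at hlow
        linarith
end

section
/- Let (x_n) be a bounded sequence in a complex Banach space X and let ε > 0. Then either (x_n) admits an ε-weak Cauchy subsequence, or for every δ > 0 there exists a subsequence (x_{m_n}) satisfying ‖Σ_{n≥2} λ_n (x_{m_n} − x_{m_1})‖ ≥ (ε√2/8 − δ) · Σ_{n≥2} (|Re(λ_n)| + |Im(λ_n)|) for every finitely supported sequence of complex scalars (λ_n)_{n≥2}. -/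
open List in
theorem sublist_range_of_strictMono (h : ℕ → ℕ) (hh : StrictMono h) :
    ∀ k, ((List.range k).map h) <+ List.range (h k) := by
  intro k
  induction k with
  | zero => simp
  | succ k ih =>
      rw [List.range_succ, List.map_append]
      have h1 : (List.range k).map h ++ [h k] <+ List.range (h k) ++ [h k] :=
        List.Sublist.append ih (List.Sublist.refl _)
      have h2 : List.range (h k) ++ [h k] = List.range (h k + 1) := List.range_succ.symm
      rw [List.map_singleton]
      calc ((List.range k).map h) ++ [h k] <+ List.range (h k + 1) := h2 ▸ h1
        _ <+ List.range (h (k+1)) := (List.range_sublist).2 (hh (Nat.lt_succ_self k))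

namespace GP

variable (Q : List ℕ → Prop)

def SubSeq (g : ℕ → ℕ) (M : Set ℕ) : Prop := StrictMono g ∧ ∀ n, g n ∈ M

def pref (g : ℕ → ℕ) (k : ℕ) : List ℕ := (List.range k).map g

def Acc (M : Set ℕ) (s : List ℕ) : Prop := ∀ g, SubSeq g M → ∃ k, Q (s ++ pref g k)

def Rej (M : Set ℕ) (s : List ℕ) : Prop := ∀ N, N ⊆ M → N.Infinite → ¬ Acc Q N s

theorem subSeq_mono {g M N} (h : SubSeq g N) (hNM : N ⊆ M) : SubSeq g M :=
  ⟨h.1, fun n => hNM (h.2 n)⟩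

theorem acc_mono {M N s} (h : Acc Q M s) (hNM : N ⊆ M) : Acc Q N s :=
  fun g hg => h g (subSeq_mono hg hNM)

theorem rej_mono {M N s} (h : Rej Q M s) (hNM : N ⊆ M) : Rej Q N s :=
  fun T hT hTi => h T (hT.trans hNM) hTi

theorem acc_of_Q {M s} (hQs : Q s) : Acc Q M s := by
  intro g _; exact ⟨0, by simpa [pref] using hQs⟩

theorem decide₀ (M : Set ℕ) (hM : M.Infinite) (s : List ℕ) :
    ∃ N, N ⊆ M ∧ N.Infinite ∧ (Acc Q N s ∨ Rej Q N s) := by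
  by_cases h : Rej Q M s
  · exact ⟨M, le_refl _, hM, Or.inr h⟩
  · simp only [Rej, not_forall, not_not] at h
    obtain ⟨N, hNM, hNi, hA⟩ := h
    exact ⟨N, hNM, hNi, Or.inl hA⟩

theorem pref_succ (g : ℕ → ℕ) (k : ℕ) :
    pref g (k+1) = g 0 :: pref (fun n => g (n+1)) k := by
  simp only [pref, List.range_succ_eq_map, List.map_cons, List.map_map]
  rfl

theorem tail_subSeq {g M} (h : SubSeq g M) : SubSeq (fun n => g (n+1)) M :=
  ⟨fun a b hab => h.1 (by omega), fun n => h.2 (n+1)⟩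

/-- State for the key-lemma recursion. -/
structure KLSt (M : Set ℕ) (s : List ℕ) where
  b : ℕ
  P : Set ℕ
  hPM : P ⊆ M
  hInf : P.Infinite
  hgt : ∀ p ∈ P, b < p
  hdec : Acc Q P (s ++ [b]) ∨ Rej Q P (s ++ [b])

theorem mkstep (M : Set ℕ) (s : List ℕ) (R : Set ℕ) (hRM : R ⊆ M) (hR : R.Infinite) :
    ∃ st : KLSt Q M s, st.b ∈ R ∧ st.P ⊆ R := by
  obtain ⟨b, hb⟩ := hR.nonempty
  have hR1 : {p ∈ R | b < p}.Infinite := by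
    have : {p ∈ R | b < p} = R \ Set.Iic b := by
      ext p; simp [Set.mem_Iic, not_le]
    rw [this]; exact hR.diff (Set.finite_Iic b)
  obtain ⟨N, hN1, hN2, hN3⟩ := decide₀ Q _ hR1 (s ++ [b])
  refine ⟨⟨b, N, fun p hp => hRM (hN1 hp).1, hN2, fun p hp => (hN1 hp).2, hN3⟩, hb, fun p hp => (hN1 hp).1⟩

theorem key (M : Set ℕ) (hM : M.Infinite) (s : List ℕ) (hrej : Rej Q M s) :
    ∃ N, N ⊆ M ∧ N.Infinite ∧ ∀ m ∈ N, Rej Q N (s ++ [m]) := by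
  classical
  -- recursive sequence of states
  have step : ∀ (R : Set ℕ), R ⊆ M → R.Infinite → ∃ st : KLSt Q M s, st.b ∈ R ∧ st.P ⊆ R :=
    mkstep Q M s
  let F : ℕ → KLSt Q M s := fun n => Nat.rec
    (Classical.choose (step M (le_refl _) hM))
    (fun _ prev => Classical.choose (step prev.P prev.hPM prev.hInf)) n
  have hF0 : F 0 = Classical.choose (step M (le_refl _) hM) := rfl
  have hFs : ∀ n, F (n+1) = Classical.choose (step (F n).P (F n).hPM (F n).hInf) := fun n => rfl
  have hbP : ∀ n, (F (n+1)).b ∈ (F n).P ∧ (F (n+1)).P ⊆ (F n).P := by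
    intro n
    rw [hFs]
    exact Classical.choose_spec (step (F n).P (F n).hPM (F n).hInf)
  have hchain : ∀ i j, i ≤ j → (F j).P ⊆ (F i).P := by
    intro i j hij
    induction j with
    | zero => have : i = 0 := Nat.le_zero.mp hij; subst this; exact le_refl _
    | succ j ih =>
        rcases Nat.lt_or_ge i (j+1) with h | h
        · exact ((hbP j).2).trans (ih (by omega))
        · have : i = j+1 := by omega
          subst this; exact le_refl _
  have hbmono : StrictMono (fun n => (F n).b) := by
    apply strictMono_nat_of_lt_succ
    intro n
    exact (F n).hgt _ (hbP n).1
  -- membership: for j ≥ 1, b_j ∈ P_{j-1} ⊆ P_i for i ≤ j-1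
  have hbmem : ∀ i j, i < j → (F j).b ∈ (F i).P := by
    intro i j hij
    obtain ⟨j', rfl⟩ : ∃ j', j = j' + 1 := ⟨j - 1, by omega⟩
    exact hchain i j' (by omega) (hbP j').1
  have hb0 : (F 0).b ∈ M := (Classical.choose_spec (step M (le_refl _) hM)).1
  have hbM : ∀ n, (F n).b ∈ M := by
    intro n
    cases n with
    | zero => exact hb0
    | succ n => exact (F n).hPM (hbP n).1
  by_cases hI : {i | Acc Q (F i).P (s ++ [(F i).b])}.Infinite
  · -- infinitely many accepting indices: build accepting subset of M, contradiction
    exfalso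
    set A : Set ℕ := (fun n => (F n).b) '' {i | Acc Q (F i).P (s ++ [(F i).b])} with hA
    have hAM : A ⊆ M := by rintro _ ⟨i, _, rfl⟩; exact hbM i
    have hAinf : A.Infinite := hI.image (Set.injOn_of_injective hbmono.injective)
    refine hrej A hAM hAinf ?_
    intro g hg
    obtain ⟨i, hiAcc, hgi0⟩ := hg.2 0
    have hgi : (F i).b = g 0 := hgi0
    have htail : SubSeq (fun n => g (n+1)) (F i).P := by
      refine ⟨(tail_subSeq hg).1, fun n => ?_⟩
      obtain ⟨j, _, hj0⟩ := hg.2 (n+1)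
      have hj : (F j).b = g (n+1) := hj0
      have hlt : (F i).b < (F j).b := by
        rw [hgi, hj]; exact hg.1 (Nat.succ_pos n)
      have : i < j := hbmono.lt_iff_lt.mp hlt
      show g (n+1) ∈ (F i).P
      rw [← hj]
      exact hbmem i j this
    obtain ⟨k, hk⟩ := hiAcc _ htail
    refine ⟨k + 1, ?_⟩
    rw [pref_succ, ← hgi]
    simpa using hk
  · -- cofinitely many rejecting indices
    have hJ : {i | ¬ Acc Q (F i).P (s ++ [(F i).b])}.Infinite := by
      have : {i | ¬ Acc Q (F i).P (s ++ [(F i).b])} = {i | Acc Q (F i).P (s ++ [(F i).b])}ᶜ := by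
        ext i; simp
      rw [this]
      exact Set.Finite.infinite_compl (Set.not_infinite.mp hI)
    set J := {i | ¬ Acc Q (F i).P (s ++ [(F i).b])} with hJdef
    have hJrej : ∀ i ∈ J, Rej Q (F i).P (s ++ [(F i).b]) := by
      intro i hi
      rcases (F i).hdec with h | h
      · exact absurd h hi
      · exact h
    refine ⟨(fun n => (F n).b) '' J, ?_, hJ.image (Set.injOn_of_injective hbmono.injective), ?_⟩
    · rintro _ ⟨i, _, rfl⟩; exact hbM i
    · rintro _ ⟨i, hiJ, rfl⟩
      intro T hT hTinf hTAcc
      have hT' : (T ∩ {t | (F i).b < t}).Infinite := by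
        have : T ∩ {t | (F i).b < t} = T \ Set.Iic ((F i).b) := by
          ext t; simp [Set.mem_Iic, not_le]
        rw [this]; exact hTinf.diff (Set.finite_Iic _)
      have hT'sub : (T ∩ {t | (F i).b < t}) ⊆ (F i).P := by
        rintro t ⟨htT, htgt⟩
        obtain ⟨j, hjJ, hj0⟩ := hT htT
        have hj : (F j).b = t := hj0
        have : i < j := hbmono.lt_iff_lt.mp (by rw [hj]; exact htgt)
        rw [← hj]; exact hbmem i j this
      exact hJrej i hiJ _ hT'sub hT' (acc_mono Q hTAcc Set.inter_subset_left)


theorem multiKey : ∀ (ss : List (List ℕ)) (M : Set ℕ), M.Infinite → (∀ s ∈ ss, Rej Q M s) →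
    ∃ N, N ⊆ M ∧ N.Infinite ∧ ∀ s ∈ ss, ∀ m ∈ N, Rej Q N (s ++ [m]) := by
  intro ss
  induction ss with
  | nil => intro M hM _; exact ⟨M, le_refl _, hM, by simp⟩
  | cons s ss ih =>
      intro M hM hrej
      obtain ⟨N₁, hN₁M, hN₁i, hN₁⟩ := key Q M hM s (hrej s (by simp))
      obtain ⟨N₂, hN₂N₁, hN₂i, hN₂⟩ := ih N₁ hN₁i
        (fun t ht => rej_mono Q (hrej t (by simp [ht])) hN₁M)
      refine ⟨N₂, hN₂N₁.trans hN₁M, hN₂i, ?_⟩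
      intro t ht m hm
      rcases List.mem_cons.mp ht with rfl | ht'
      · exact rej_mono Q (hN₁ m (hN₂N₁ hm)) hN₂N₁
      · exact hN₂ t ht' m hm

structure FSt (M : Set ℕ) where
  E : List ℕ
  P : Set ℕ
  hPM : P ⊆ M
  hInf : P.Infinite
  hgt : ∀ p ∈ P, ∀ a ∈ E, a < p
  hrej : ∀ s ∈ E.sublists, Rej Q P s

theorem fstep (M : Set ℕ) (st : FSt Q M) :
    ∃ st' : FSt Q M, ∃ a, st'.E = st.E ++ [a] ∧ a ∈ st.P ∧ st'.P ⊆ st.P := by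
  obtain ⟨N, hNM, hNi, hN⟩ := multiKey Q st.E.sublists st.P st.hInf st.hrej
  obtain ⟨a, ha⟩ := hNi.nonempty
  have hP' : {p ∈ N | a < p}.Infinite := by
    have : {p ∈ N | a < p} = N \ Set.Iic a := by
      ext p; simp [Set.mem_Iic, not_le]
    rw [this]; exact hNi.diff (Set.finite_Iic a)
  refine ⟨⟨st.E ++ [a], {p ∈ N | a < p},
    fun p hp => st.hPM (hNM hp.1), hP', ?_, ?_⟩, a, rfl, hNM ha, fun p hp => hNM hp.1⟩
  · intro p hp b hb
    rcases List.mem_append.mp hb with hb | hb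
    · exact st.hgt p (hNM hp.1) b hb
    · rw [List.mem_singleton.mp hb]; exact hp.2
  · intro t ht
    rw [List.sublists_concat, List.mem_append] at ht
    rcases ht with ht | ht
    · exact rej_mono Q (st.hrej t ht) (fun p hp => hNM hp.1)
    · rw [List.mem_map] at ht
      obtain ⟨u, hu, rfl⟩ := ht
      exact rej_mono Q (hN u hu a ha) (fun p hp => hp.1)

theorem fusion (M : Set ℕ) (hM : M.Infinite) (hrejnil : Rej Q M []) :
    ∃ N, N ⊆ M ∧ N.Infinite ∧ ∀ g, SubSeq g N → ∀ k, ¬ Q (pref g k) := by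
  classical
  have hrejE : ∀ s ∈ ([] : List ℕ).sublists, Rej Q M s := by
    intro s hs
    simp only [List.sublists_nil, List.mem_singleton] at hs
    rw [hs]; exact hrejnil
  let st0 : FSt Q M := ⟨[], M, le_refl _, hM, by simp, hrejE⟩
  let F : ℕ → FSt Q M := fun n => Nat.rec st0 (fun _ prev => Classical.choose (fstep Q M prev)) n
  have hFs : ∀ n, ∃ a, (F (n+1)).E = (F n).E ++ [a] ∧ a ∈ (F n).P ∧ (F (n+1)).P ⊆ (F n).P :=
    fun n => Classical.choose_spec (fstep Q M (F n))
  let e : ℕ → ℕ := fun n => Classical.choose (hFs n)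
  have he : ∀ n, (F (n+1)).E = (F n).E ++ [e n] ∧ e n ∈ (F n).P ∧ (F (n+1)).P ⊆ (F n).P :=
    fun n => Classical.choose_spec (hFs n)
  have hE : ∀ n, (F n).E = pref e n := by
    intro n
    induction n with
    | zero => rfl
    | succ n ih =>
        rw [(he n).1, ih]
        simp [pref, List.range_succ]
  have hemono : StrictMono e := by
    apply strictMono_nat_of_lt_succ
    intro n
    have h1 : e (n+1) ∈ (F (n+1)).P := (he (n+1)).2.1
    have h2 : e n ∈ (F (n+1)).E := by
      rw [(he n).1]; simp
    exact (F (n+1)).hgt _ h1 _ h2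
  have heM : ∀ n, e n ∈ M := fun n => (F n).hPM (he n).2.1
  have hchain : ∀ i j, i ≤ j → (F j).P ⊆ (F i).P := by
    intro i j hij
    induction j with
    | zero => have : i = 0 := Nat.le_zero.mp hij; subst this; exact le_refl _
    | succ j ih =>
        rcases Nat.lt_or_ge i (j+1) with h | h
        · exact ((he j).2.2).trans (ih (by omega))
        · have : i = j+1 := by omega
          subst this; exact le_refl _
  refine ⟨Set.range e, by rintro _ ⟨n, rfl⟩; exact heM n, Set.infinite_range_of_injective hemono.injective, ?_⟩
  intro g hg k hQ
  -- write g = e ∘ h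
  have hh : ∀ n, ∃ i, e i = g n := hg.2
  let h : ℕ → ℕ := fun n => Classical.choose (hh n)
  have hhe : ∀ n, e (h n) = g n := fun n => Classical.choose_spec (hh n)
  have hhmono : StrictMono h := by
    intro a b hab
    have : e (h a) < e (h b) := by rw [hhe, hhe]; exact hg.1 hab
    exact hemono.lt_iff_lt.mp this
  have hsub : List.Sublist (pref g k) ((F (h k)).E) := by
    have h1 : pref g k = (pref h k).map e := by
      simp only [pref, List.map_map]
      apply List.map_congr_left
      intro n _
      exact (hhe n).symm
    have h2 : List.Sublist (pref h k) (List.range (h k)) := sublist_range_of_strictMono h hhmono k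
    rw [h1, hE]
    exact h2.map e
  have hrej' : Rej Q (F (h k)).P (pref g k) :=
    (F (h k)).hrej _ (List.mem_sublists.mpr hsub)
  exact hrej' _ (le_refl _) (F (h k)).hInf (acc_of_Q Q hQ)

theorem dichotomy (M : Set ℕ) (hM : M.Infinite) :
    ∃ N, N ⊆ M ∧ N.Infinite ∧
      ((∀ g, SubSeq g N → ∃ k, Q (pref g k)) ∨ (∀ g, SubSeq g N → ∀ k, ¬ Q (pref g k))) := by
  obtain ⟨N, hNM, hNi, hdec⟩ := decide₀ Q M hM []
  rcases hdec with hAcc | hRej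
  · refine ⟨N, hNM, hNi, Or.inl ?_⟩
    intro g hg
    obtain ⟨k, hk⟩ := hAcc g hg
    exact ⟨k, by simpa using hk⟩
  · obtain ⟨N', hN'N, hN'i, hgood⟩ := fusion Q N hNi hRej
    exact ⟨N', hN'N.trans hNM, hN'i, Or.inr hgood⟩

end GP

noncomputable section

/-- cell index of a complex number in the θ-grid -/
def cellIdx (θ : ℝ) (z : ℂ) : ℤ × ℤ := (⌊z.re / θ⌋, ⌊z.im / θ⌋)

/-- corner of a cell -/
def cellPt (θ : ℝ) (p : ℤ × ℤ) : ℂ := Complex.mk (θ * p.1) (θ * p.2)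

theorem cellPt_re (θ : ℝ) (p : ℤ × ℤ) : (cellPt θ p).re = θ * p.1 := rfl
theorem cellPt_im (θ : ℝ) (p : ℤ × ℤ) : (cellPt θ p).im = θ * p.2 := rfl

theorem cell_re_bounds {θ : ℝ} (hθ : 0 < θ) (z : ℂ) :
    (cellPt θ (cellIdx θ z)).re ≤ z.re ∧ z.re - θ < (cellPt θ (cellIdx θ z)).re := by
  have h1 : (⌊z.re / θ⌋ : ℝ) ≤ z.re / θ := Int.floor_le _
  have h2 : z.re / θ < ⌊z.re / θ⌋ + 1 := Int.lt_floor_add_one _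
  constructor
  · rw [cellPt_re]
    calc θ * (⌊z.re / θ⌋ : ℝ) ≤ θ * (z.re / θ) := by nlinarith
      _ = z.re := by field_simp
  · rw [cellPt_re]
    have h3 : θ * (z.re / θ) < θ * (⌊z.re / θ⌋ + 1) := by nlinarith
    have h4 : θ * (z.re / θ) = z.re := by field_simp
    simp only [cellIdx]
    nlinarith

theorem cell_im_bounds {θ : ℝ} (hθ : 0 < θ) (z : ℂ) :
    (cellPt θ (cellIdx θ z)).im ≤ z.im ∧ z.im - θ < (cellPt θ (cellIdx θ z)).im := by
  have h1 : (⌊z.im / θ⌋ : ℝ) ≤ z.im / θ := Int.floor_le _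
  have h2 : z.im / θ < ⌊z.im / θ⌋ + 1 := Int.lt_floor_add_one _
  constructor
  · rw [cellPt_im]
    calc θ * (⌊z.im / θ⌋ : ℝ) ≤ θ * (z.im / θ) := by nlinarith
      _ = z.im := by field_simp
  · rw [cellPt_im]
    have h3 : θ * (z.im / θ) < θ * (⌊z.im / θ⌋ + 1) := by nlinarith
    have h4 : θ * (z.im / θ) = z.im := by field_simp
    simp only [cellIdx]
    nlinarith

theorem cell_close {θ : ℝ} (hθ : 0 < θ) (z : ℂ) :
    ‖z - cellPt θ (cellIdx θ z)‖ ≤ 2 * θ := by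
  have hre := cell_re_bounds hθ z
  have him := cell_im_bounds hθ z
  calc ‖z - cellPt θ (cellIdx θ z)‖ ≤ |(z - cellPt θ (cellIdx θ z)).re| + |(z - cellPt θ (cellIdx θ z)).im| := by
        exact Complex.norm_le_abs_re_add_abs_im _
    _ ≤ θ + θ := by
        rw [Complex.sub_re, Complex.sub_im]
        gcongr <;> rw [abs_le] <;> constructor <;> nlinarith [hre.1, hre.2, him.1, him.2]
    _ = 2 * θ := by ring

/-- the box of cell indices that can arise from points of norm ≤ C -/
def cellBox (θ C : ℝ) : Finset (ℤ × ℤ) :=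
  Finset.Icc (-(⌈C / θ⌉ + 1)) (⌈C / θ⌉ + 1) ×ˢ Finset.Icc (-(⌈C / θ⌉ + 1)) (⌈C / θ⌉ + 1)

theorem cell_mem_box {θ C : ℝ} (hθ : 0 < θ) (z : ℂ) (hz : ‖z‖ ≤ C) :
    cellIdx θ z ∈ cellBox θ C := by
  have hre : |z.re| ≤ C := (Complex.abs_re_le_norm z).trans hz
  have him : |z.im| ≤ C := (Complex.abs_im_le_norm z).trans hz
  have key : ∀ a : ℝ, |a| ≤ C → -(⌈C / θ⌉ + 1) ≤ ⌊a / θ⌋ ∧ ⌊a / θ⌋ ≤ ⌈C / θ⌉ + 1 := by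
    intro a ha
    have h1 : a / θ ≤ C / θ := by gcongr; · exact (abs_le.mp ha).2
    have h2 : -(C / θ) ≤ a / θ := by
      rw [← neg_div]
      gcongr
      linarith [(abs_le.mp ha).1]
    constructor
    · apply Int.le_floor.mpr
      push_cast
      have : (⌈C / θ⌉ : ℝ) ≥ C / θ := Int.le_ceil _
      linarith
    · have h3 : ⌊a / θ⌋ ≤ ⌈a / θ⌉ := Int.floor_le_ceil _
      have h4 : ⌈a / θ⌉ ≤ ⌈C / θ⌉ := Int.ceil_le_ceil h1
      omega
  rcases key z.re hre with ⟨h1, h2⟩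
  rcases key z.im him with ⟨h3, h4⟩
  simp only [cellBox, cellIdx, Finset.mem_product, Finset.mem_Icc]
  exact ⟨⟨h1, h2⟩, ⟨h3, h4⟩⟩

/-- rounding toward zero -/
theorem round_toward_zero {β : ℝ} (hβ : 0 < β) (a : ℝ) (ha : |a| ≤ 1) :
    ∃ j : ℤ, |j * β| ≤ |a| ∧ |a - j * β| ≤ β ∧ -(⌈1/β⌉) ≤ j ∧ j ≤ ⌈1/β⌉ := by
  have key : ∀ b : ℝ, 0 ≤ b → b ≤ 1 → ∃ j : ℤ, 0 ≤ j ∧ (j : ℝ) * β ≤ b ∧ b - j * β ≤ β ∧ j ≤ ⌈1/β⌉ := by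
    intro b hb0 hb1
    refine ⟨⌊b / β⌋, Int.floor_nonneg.mpr (by positivity), ?_, ?_, ?_⟩
    · have h1 : (⌊b / β⌋ : ℝ) ≤ b / β := Int.floor_le _
      calc (⌊b / β⌋ : ℝ) * β ≤ (b / β) * β := by nlinarith
        _ = b := by field_simp
    · have h2 : b / β < ⌊b / β⌋ + 1 := Int.lt_floor_add_one _
      have : b = (b / β) * β := by field_simp
      nlinarith
    · have h1 : b / β ≤ 1 / β := by gcongr
      calc ⌊b / β⌋ ≤ ⌈b / β⌉ := Int.floor_le_ceil _
        _ ≤ ⌈1/β⌉ := Int.ceil_le_ceil h1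
  rcases le_or_gt 0 a with h | h
  · obtain ⟨j, hj0, hj1, hj2, hj3⟩ := key a h (by rwa [abs_of_nonneg h] at ha)
    refine ⟨j, ?_, ?_, ?_, hj3⟩
    · rw [abs_of_nonneg h, abs_of_nonneg (by positivity : (0:ℝ) ≤ (j:ℝ) * β)]
      exact hj1
    · rw [abs_of_nonneg (by linarith)]
      exact hj2
    · have : (0:ℤ) ≤ ⌈1/β⌉ := le_trans hj0 hj3
      omega
  · obtain ⟨j, hj0, hj1, hj2, hj3⟩ := key (-a) (by linarith) (by rwa [abs_of_neg h] at ha)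
    refine ⟨-j, ?_, ?_, ?_, ?_⟩
    · rw [abs_of_neg h]
      rw [show ((-j : ℤ) : ℝ) * β = -((j:ℝ) * β) by push_cast; ring, abs_neg,
        abs_of_nonneg (by positivity : (0:ℝ) ≤ (j:ℝ) * β)]
      exact hj1
    · rw [show a - ((-j : ℤ) : ℝ) * β = -((-a) - (j:ℝ)*β) by push_cast; ring, abs_neg,
        abs_of_nonneg (by linarith)]
      exact hj2
    · omega
    · have : (0:ℤ) ≤ ⌈1/β⌉ := le_trans hj0 hj3
      omega

/-- finite net on the unit disc: for every z ≠ 0 there is ω in the net with |ω| ≤ 1,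
Re(ωz) ≥ (1-α)|z| and |Im(ωz)| ≤ α|z|. -/
theorem net_lemma {α : ℝ} (hα : 0 < α) :
    ∃ Ω : Finset ℂ, ∀ z : ℂ, z ≠ 0 → ∃ ω ∈ Ω, ‖ω‖ ≤ 1 ∧
      (1 - α) * ‖z‖ ≤ (ω * z).re ∧ |(ω * z).im| ≤ α * ‖z‖ := by
  set β := α / 2 with hβdef
  have hβ : 0 < β := by positivity
  set B := ⌈1/β⌉ with hB
  refine ⟨(Finset.Icc (-B) B ×ˢ Finset.Icc (-B) B).image
    (fun p => Complex.mk (p.1 * β) (p.2 * β)), ?_⟩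
  intro z hz
  have hz' : 0 < ‖z‖ := norm_pos_iff.mpr hz
  set ω₀ : ℂ := (starRingEnd ℂ) z / ‖z‖ with hω₀
  have habs : (0:ℝ) < ‖z‖ := hz'
  have hω₀z : ω₀ * z = ((‖z‖ : ℝ) : ℂ) := by
    rw [hω₀, div_mul_eq_mul_div, mul_comm, Complex.mul_conj, Complex.normSq_eq_norm_sq,
      div_eq_iff (by exact_mod_cast habs.ne')]
    push_cast
    ring
  have hω₀norm : ‖ω₀‖ = 1 := by
    rw [hω₀, norm_div, RCLike.norm_conj]
    rw [Complex.norm_real, norm_norm]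
    field_simp
  have hre1 : |ω₀.re| ≤ 1 := by
    have := Complex.abs_re_le_norm ω₀
    rwa [hω₀norm] at this
  have him1 : |ω₀.im| ≤ 1 := by
    have := Complex.abs_im_le_norm ω₀
    rwa [hω₀norm] at this
  obtain ⟨j, hj1, hj2, hj3, hj4⟩ := round_toward_zero hβ ω₀.re hre1
  obtain ⟨k, hk1, hk2, hk3, hk4⟩ := round_toward_zero hβ ω₀.im him1
  set ω : ℂ := Complex.mk ((j:ℝ) * β) ((k:ℝ) * β) with hωdef
  have hωre : ω.re = (j:ℝ) * β := rfl
  have hωim : ω.im = (k:ℝ) * β := rfl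
  have hdiff : ‖ω - ω₀‖ ≤ α := by
    calc ‖ω - ω₀‖ ≤ |(ω - ω₀).re| + |(ω - ω₀).im| := by
          exact Complex.norm_le_abs_re_add_abs_im _
      _ ≤ β + β := by
          rw [Complex.sub_re, Complex.sub_im]
          gcongr
          · rw [show ω.re - ω₀.re = -(ω₀.re - (j:ℝ)*β) from by rw [hωre]; ring, abs_neg]
            exact hj2
          · rw [show ω.im - ω₀.im = -(ω₀.im - (k:ℝ)*β) from by rw [hωim]; ring, abs_neg]
            exact hk2
      _ = α := by rw [hβdef]; ring
  have hsplit : ω * z = ω₀ * z + (ω - ω₀) * z := by ring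
  refine ⟨ω, ?_, ?_, ?_, ?_⟩
  · apply Finset.mem_image.mpr
    exact ⟨(j, k), by simp only [Finset.mem_product, Finset.mem_Icc]; omega, rfl⟩
  · -- ‖ω‖ ≤ 1
    have h1 : Complex.normSq ω ≤ Complex.normSq ω₀ := by
      rw [Complex.normSq_apply, Complex.normSq_apply]
      rw [hωre, hωim]
      have a1 : ((j:ℝ) * β)^2 ≤ ω₀.re^2 := by
        rw [← sq_abs ((j:ℝ)*β), ← sq_abs ω₀.re]
        exact pow_le_pow_left₀ (abs_nonneg _) hj1 2
      have a2 : ((k:ℝ) * β)^2 ≤ ω₀.im^2 := by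
        rw [← sq_abs ((k:ℝ)*β), ← sq_abs ω₀.im]
        exact pow_le_pow_left₀ (abs_nonneg _) hk1 2
      nlinarith
    have h2 : Complex.normSq ω₀ = 1 := by
      have := Complex.sq_norm ω₀
      rw [hω₀norm] at this
      simpa using this.symm
    rw [Complex.norm_def]
    rw [show (1:ℝ) = Real.sqrt 1 by simp]
    exact Real.sqrt_le_sqrt (by rw [h2] at h1; exact h1)
  · -- real part
    have h2 : |((ω - ω₀) * z).re| ≤ α * ‖z‖ := by
      calc |((ω - ω₀) * z).re| ≤ ‖(ω - ω₀) * z‖ := by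
            exact Complex.abs_re_le_norm _
        _ = ‖ω - ω₀‖ * ‖z‖ := norm_mul _ _
        _ ≤ α * ‖z‖ := by gcongr
    rw [hsplit, Complex.add_re, hω₀z, Complex.ofReal_re]
    have := (abs_le.mp h2).1
    nlinarith
  · -- imaginary part
    rw [hsplit, Complex.add_im, hω₀z, Complex.ofReal_im, zero_add]
    calc |((ω - ω₀) * z).im| ≤ ‖(ω - ω₀) * z‖ := by
          exact Complex.abs_im_le_norm _
      _ = ‖ω - ω₀‖ * ‖z‖ := norm_mul _ _
      _ ≤ α * ‖z‖ := by gcongr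

/-- infinite pigeonhole -/
theorem inf_fiber {β : Type*} (f : ℕ → β) (V : Finset β) (hf : ∀ t, f t ∈ V) :
    ∃ b ∈ V, {t | f t = b}.Infinite := by
  by_contra h
  push_neg at h
  have hsub : (Set.univ : Set ℕ) ⊆ ⋃ b ∈ (V : Set β), {t | f t = b} := by
    intro t _
    simp only [Set.mem_iUnion]
    exact ⟨f t, hf t, rfl⟩
  have hfin : (⋃ b ∈ (V : Set β), {t | f t = b}).Finite := by
    apply Set.Finite.biUnion V.finite_toSet
    intro b hb
    exact h b hb
  exact Set.infinite_univ (hfin.subset hsub)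

namespace RosProof
open GP

variable {X : Type*} [NormedAddCommGroup X] [NormedSpace ℂ X]

/-- the pattern predicate: a list is "bad" if no unit functional puts the points
`x (l i)` into cell `p` at even positions and cell `q` at odd positions. -/
def Qpat (x : ℕ → X) (θ : ℝ) (p q : ℤ × ℤ) (l : List ℕ) : Prop :=
  ¬∃ φ : X →L[ℂ] ℂ, ‖φ‖ ≤ 1 ∧
    ∀ i < l.length, cellIdx θ (φ (x (l.getD i 0))) = (if Even i then p else q)

theorem Qpat_mono (x : ℕ → X) (θ : ℝ) (p q : ℤ × ℤ) (l : List ℕ) (a : ℕ)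
    (h : Qpat x θ p q l) : Qpat x θ p q (l ++ [a]) := by
  intro ⟨φ, hφ, hreal⟩
  refine h ⟨φ, hφ, fun i hi => ?_⟩
  have h1 := hreal i (by simp; omega)
  rwa [List.getD_append _ _ _ _ hi] at h1

theorem pref_getD (g : ℕ → ℕ) (k i : ℕ) (hi : i < k) : (pref g k).getD i 0 = g i := by
  have hlen : (pref g k).length = k := by simp [pref]
  rw [List.getD_eq_getElem _ _ (by omega)]
  simp [pref]

/-- bad case: if every subsequence of M contains a bad initial pattern, then no unit
functional visits cell p infinitely often and cell q infinitely often along M. -/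
theorem badcase (x : ℕ → X) (θ : ℝ) (p q : ℤ × ℤ) (M : Set ℕ)
    (hbad : ∀ g, SubSeq g M → ∃ k, Qpat x θ p q (pref g k))
    (φ : X →L[ℂ] ℂ) (hφ : ‖φ‖ ≤ 1) :
    ¬({n ∈ M | cellIdx θ (φ (x n)) = p}.Infinite ∧
      {n ∈ M | cellIdx θ (φ (x n)) = q}.Infinite) := by
  rintro ⟨hI, hJ⟩
  classical
  set T : ℕ → Set ℕ := fun n => if Even n then {n ∈ M | cellIdx θ (φ (x n)) = p}
    else {n ∈ M | cellIdx θ (φ (x n)) = q} with hT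
  have hTinf : ∀ n, (T n).Infinite := by
    intro n
    rw [hT]
    by_cases h : Even n <;> simp [h, hI, hJ]
  -- build an alternating strictly monotone sequence
  let g : ℕ → ℕ := fun n => Nat.rec (Classical.choose (hTinf 0).nonempty)
    (fun m prev => Classical.choose ((hTinf (m+1)).exists_gt prev)) n
  have hg0 : g 0 ∈ T 0 := Classical.choose_spec (hTinf 0).nonempty
  have hgs : ∀ n, g (n+1) ∈ T (n+1) ∧ g n < g (n+1) :=
    fun n => Classical.choose_spec ((hTinf (n+1)).exists_gt (g n))
  have hgmem : ∀ n, g n ∈ T n := by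
    intro n
    cases n with
    | zero => exact hg0
    | succ n => exact (hgs n).1
  have hgmono : StrictMono g := strictMono_nat_of_lt_succ (fun n => (hgs n).2)
  have hgM : ∀ n, g n ∈ M := by
    intro n
    have := hgmem n
    rw [hT] at this
    by_cases h : Even n
    · simp [h] at this; exact this.1
    · simp [h] at this; exact this.1
  obtain ⟨k, hk⟩ := hbad g ⟨hgmono, hgM⟩
  refine hk ⟨φ, hφ, fun i hi => ?_⟩
  have hlen : (pref g k).length = k := by simp [pref]
  rw [pref_getD g k i (by omega)]
  have := hgmem i
  rw [hT] at this
  by_cases h : Even i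
  · simp [h] at this ⊢; exact this.2
  · simp [h] at this ⊢; exact this.2

end RosProof

namespace RosProof
open GP Classical in
/-- index lists used to embed an arbitrary pattern σ into alternating parity patterns -/
noncomputable def IL (σ : ℕ → Bool) : ℕ → List ℕ
  | 0 => if σ 0 then [1] else [0, 1]
  | (j+1) => IL σ j ++ (if (Even (IL σ j).length ↔ σ (j+1) = true)
      then [2*j+3] else [2*j+2, 2*j+3])

theorem IL_bound (σ : ℕ → Bool) : ∀ j, ∀ a ∈ IL σ j, a ≤ 2*j+1 := by
  intro j
  induction j with
  | zero =>
      intro a ha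
      by_cases h : σ 0 <;> simp [IL, h] at ha <;> omega
  | succ j ih =>
      intro a ha
      rw [IL] at ha
      rcases List.mem_append.mp ha with h | h
      · have := ih a h; omega
      · by_cases hc : (Even (IL σ j).length ↔ σ (j+1) = true) <;> simp [hc] at h <;> omega

theorem IL_pairwise (σ : ℕ → Bool) : ∀ j, List.Pairwise (· < ·) (IL σ j) := by
  intro j
  induction j with
  | zero => by_cases h : σ 0 <;> simp [IL, h]
  | succ j ih =>
      rw [IL]
      apply List.pairwise_append.mpr
      refine ⟨ih, ?_, ?_⟩
      · by_cases hc : (Even (IL σ j).length ↔ σ (j+1) = true) <;> simp [hc]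
      · intro a ha b hb
        have h1 := IL_bound σ j a ha
        by_cases hc : (Even (IL σ j).length ↔ σ (j+1) = true) <;> simp [hc] at hb <;> omega

theorem IL_marker (σ : ℕ → Bool) : ∀ j, ∀ i ≤ j,
    ∃ pos, pos < (IL σ j).length ∧ (IL σ j).getD pos 0 = 2*i+1 ∧ (Even pos ↔ σ i = true) := by
  intro j
  induction j with
  | zero =>
      intro i hi
      have : i = 0 := Nat.le_zero.mp hi
      subst this
      by_cases h : σ 0
      · exact ⟨0, by simp [IL, h]⟩
      · refine ⟨1, by simp [IL, h], by simp [IL, h], by simp [h]⟩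
  | succ j ih =>
      intro i hi
      rcases Nat.lt_or_ge i (j+1) with h | h
      · obtain ⟨pos, hp1, hp2, hp3⟩ := ih i (by omega)
        refine ⟨pos, ?_, ?_, hp3⟩
        · rw [IL]; rw [List.length_append]; omega
        · rw [IL, List.getD_append _ _ _ _ hp1]; exact hp2
      · have hieq : i = j+1 := by omega
        subst hieq
        set l := IL σ j with hl
        by_cases hc : (Even l.length ↔ σ (j+1) = true)
        · refine ⟨l.length, ?_, ?_, hc⟩
          · rw [IL, ← hl]; simp [hc]
          · rw [IL, ← hl]
            simp only [hc, if_true]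
            rw [List.getD_eq_getElem _ _ (by simp)]
            simp; omega
        · refine ⟨l.length + 1, ?_, ?_, ?_⟩
          · rw [IL, ← hl]; simp [hc]
          · rw [IL, ← hl]
            simp only [hc, if_false]
            rw [List.getD_eq_getElem _ _ (by simp)]
            rw [List.getElem_append_right (by omega)]
            simp; omega
          · rw [Nat.even_add_one]
            by_cases hσ : σ (j+1) = true
            · simp only [hσ, iff_true]
              rw [Nat.not_even_iff_odd]
              rcases Nat.even_or_odd l.length with hev | hod
              · exact absurd (by simp [hσ, hev] : (Even l.length ↔ σ (j+1) = true)) hc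
              · exact hod
            · have hev : Even l.length := by
                by_contra hod
                exact hc ⟨fun hev => absurd hev hod, fun hs => absurd hs hσ⟩
              exact ⟨fun h => (h hev).elim, fun hs => absurd hs hσ⟩

end RosProof

namespace RosProof
open GP

theorem goodcase {X : Type*} [NormedAddCommGroup X] [NormedSpace ℂ X]
    (x : ℕ → X) (θ : ℝ) (p q : ℤ × ℤ) (M : Set ℕ) (hM : M.Infinite)
    (hgood : ∀ g, SubSeq g M → ∀ k, ¬ Qpat x θ p q (pref g k)) (σ : ℕ → Bool) (K : ℕ) :
    ∃ φ : X →L[ℂ] ℂ, ‖φ‖ ≤ 1 ∧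
      ∀ j ≤ K, cellIdx θ (φ (x (Nat.nth (· ∈ M) (2*j+1)))) = (if σ j then p else q) := by
  classical
  set ν := Nat.nth (· ∈ M) with hν
  have hMset : {n | n ∈ M}.Infinite := hM
  have hνmono : StrictMono ν := Nat.nth_strictMono hMset
  have hνmem : ∀ n, ν n ∈ M := fun n => Nat.nth_mem_of_infinite hMset n
  set l := IL σ K with hl
  set len := l.length with hlen
  have hbnd : ∀ a ∈ l, a ≤ 2*K+1 := IL_bound σ K
  have hpw := IL_pairwise σ K
  have hfix : (IL σ K).length = l.length := by rw [hl]
  have hgetlt : ∀ i, i < len → l.getD i 0 ≤ 2*K+1 := by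
    intro i h
    rw [hlen] at h
    apply hbnd
    rw [List.getD_eq_getElem _ _ (by omega)]
    exact List.getElem_mem _
  have hgetmono : ∀ i j, i < j → j < len → l.getD i 0 < l.getD j 0 := by
    intro i j hi hj
    rw [hlen] at hj
    rw [List.getD_eq_getElem _ _ (by omega), List.getD_eq_getElem _ _ (by omega)]
    exact List.pairwise_iff_getElem.mp hpw i j (by omega) (by omega) hi
  set g : ℕ → ℕ := fun n => if n < len then ν (l.getD n 0) else ν (2*K+2 + (n - len)) with hg
  have hgval : ∀ n, n < len → g n = ν (l.getD n 0) := fun n h => by simp only [hg, if_pos h]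
  have hgval2 : ∀ n, ¬(n < len) → g n = ν (2*K+2 + (n - len)) := fun n h => by
    simp only [hg, if_neg h]
  have hgmono : StrictMono g := by
    intro a b hab
    by_cases ha : a < len <;> by_cases hb : b < len
    · rw [hgval a ha, hgval b hb]
      exact hνmono (hgetmono a b hab hb)
    · rw [hgval a ha, hgval2 b hb]
      apply hνmono
      have := hgetlt a ha
      omega
    · omega
    · rw [hgval2 a ha, hgval2 b hb]
      apply hνmono
      omega
  have hgM : ∀ n, g n ∈ M := by
    intro n
    by_cases h : n < len
    · rw [hgval n h]; exact hνmem _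
    · rw [hgval2 n h]; exact hνmem _
  have hpref : pref g len = l.map ν := by
    apply List.ext_getElem
    · simp [pref]; exact hlen
    · intro i hi1 hi2
      have hilen : i < len := by simpa [pref] using hi1
      simp only [pref, List.getElem_map, List.getElem_range]
      rw [hgval i hilen, List.getD_eq_getElem _ _ (by omega)]
  have hnq := hgood g ⟨hgmono, hgM⟩ len
  rw [hpref] at hnq
  rw [Qpat, not_not] at hnq
  obtain ⟨φ, hφ, hreal⟩ := hnq
  refine ⟨φ, hφ, fun j hj => ?_⟩
  obtain ⟨pos, hp1, hp2, hp3⟩ := IL_marker σ K j hj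
  have h1 := hreal pos (by simpa using hp1)
  have h2 : (l.map ν).getD pos 0 = ν (2*j+1) := by
    rw [List.getD_eq_getElem _ _ (by simpa using hp1), List.getElem_map]
    rw [← hp2, List.getD_eq_getElem _ _ (by omega)]
  rw [h2] at h1
  rw [h1]
  by_cases hσ : σ j = true
  · have : Even pos := hp3.mpr hσ
    simp [this, hσ]
  · have : ¬ Even pos := fun he => hσ (hp3.mp he)
    have hσf : σ j = false := by cases hb : σ j; rfl; exact absurd hb hσ
    simp [this, hσf]

end RosProof

namespace RosProof

theorem estimate {X : Type*} [NormedAddCommGroup X] [NormedSpace ℂ X]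
    (x : ℕ → X) (m : ℕ → ℕ) (u v : ℂ) (ρ γ₀ θ' : ℝ) (hρ : 0 ≤ ρ)
    (hγ : (u - v).re = γ₀) (hθ' : |(u - v).im| ≤ θ')
    (hR : ∀ (σ : ℕ → Bool) (K : ℕ), ∃ φ : X →L[ℂ] ℂ, ‖φ‖ ≤ 1 ∧
      ∀ j ≤ K, ‖φ (x (m j)) - (if σ j then u else v)‖ ≤ ρ)
    (T : Finset ℕ) (μ : ℕ → ℂ) :
    ∑ n ∈ T, (2*γ₀ * max (μ n).re 0 - 2*θ' * |(μ n).im| - 4*ρ*‖μ n‖) ≤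
      2 * ‖∑ n ∈ T, μ n • (x (m (n+1)) - x (m 0))‖ := by
  classical
  have hθ'0 : 0 ≤ θ' := le_trans (abs_nonneg _) hθ'
  set K := T.sup id + 1 with hK
  set σ : ℕ → Bool := fun j => decide (0 < j) && decide (0 ≤ (μ (j-1)).re) with hσ
  obtain ⟨φ, hφ, hφreal⟩ := hR σ K
  obtain ⟨ψ, hψ, hψreal⟩ := hR (fun j => !(σ j)) K
  set w := ∑ n ∈ T, μ n • (x (m (n+1)) - x (m 0)) with hw
  set Δ : ℕ → ℂ := fun j => φ (x (m j)) - ψ (x (m j)) with hΔ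
  have h1 : φ w - ψ w = ∑ n ∈ T, μ n * (Δ (n+1) - Δ 0) := by
    rw [hw, map_sum, map_sum, ← Finset.sum_sub_distrib]
    apply Finset.sum_congr rfl
    intro n _
    rw [map_smul, map_smul]
    simp only [map_sub, smul_eq_mul, hΔ]
    ring
  have h2 : (φ w - ψ w).re ≤ 2 * ‖w‖ := by
    calc (φ w - ψ w).re ≤ ‖φ w - ψ w‖ := by
          exact Complex.re_le_norm _
      _ = ‖(φ - ψ) w‖ := by rw [ContinuousLinearMap.sub_apply]
      _ ≤ ‖φ - ψ‖ * ‖w‖ := ContinuousLinearMap.le_opNorm _ _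
      _ ≤ 2 * ‖w‖ := by
          apply mul_le_mul_of_nonneg_right _ (norm_nonneg _)
          calc ‖φ - ψ‖ ≤ ‖φ‖ + ‖ψ‖ := norm_sub_le _ _
            _ ≤ 2 := by linarith
  -- functional values at the base point
  have hσ0 : σ 0 = false := by simp [hσ]
  have hA0 : ‖φ (x (m 0)) - v‖ ≤ ρ := by
    have := hφreal 0 (by omega)
    rwa [hσ0] at this
  have hB0 : ‖ψ (x (m 0)) - u‖ ≤ ρ := by
    have := hψreal 0 (by omega)
    rwa [hσ0] at this
  have h3 : ∀ n ∈ T, 2*γ₀ * max (μ n).re 0 - 2*θ' * |(μ n).im| - 4*ρ*‖μ n‖ ≤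
      (μ n * (Δ (n+1) - Δ 0)).re := by
    intro n hn
    have hnK : n + 1 ≤ K := by
      have : n ≤ T.sup id := Finset.le_sup (f := id) hn
      omega
    by_cases hc : 0 ≤ (μ n).re
    · have hσn : σ (n+1) = true := by simp [hσ, hc]
      have hA1 : ‖φ (x (m (n+1))) - u‖ ≤ ρ := by
        have := hφreal (n+1) hnK
        rwa [hσn] at this
      have hB1 : ‖ψ (x (m (n+1))) - v‖ ≤ ρ := by
        have := hψreal (n+1) hnK
        rwa [hσn] at this
      set E := (Δ (n+1) - Δ 0) - 2*(u - v) with hE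
      have hEeq : E = (φ (x (m (n+1))) - u) - (ψ (x (m (n+1))) - v)
          - (φ (x (m 0)) - v) + (ψ (x (m 0)) - u) := by
        rw [hE, hΔ]; ring
      have hEnorm : ‖E‖ ≤ 4*ρ := by
        rw [hEeq]
        calc ‖(φ (x (m (n+1))) - u) - (ψ (x (m (n+1))) - v)
              - (φ (x (m 0)) - v) + (ψ (x (m 0)) - u)‖
            ≤ ‖(φ (x (m (n+1))) - u) - (ψ (x (m (n+1))) - v) - (φ (x (m 0)) - v)‖
              + ‖ψ (x (m 0)) - u‖ := norm_add_le _ _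
          _ ≤ ‖(φ (x (m (n+1))) - u) - (ψ (x (m (n+1))) - v)‖ + ‖φ (x (m 0)) - v‖
              + ‖ψ (x (m 0)) - u‖ := by
                have := norm_sub_le ((φ (x (m (n+1))) - u) - (ψ (x (m (n+1))) - v)) (φ (x (m 0)) - v)
                linarith
          _ ≤ ‖φ (x (m (n+1))) - u‖ + ‖ψ (x (m (n+1))) - v‖ + ‖φ (x (m 0)) - v‖
              + ‖ψ (x (m 0)) - u‖ := by
                have := norm_sub_le (φ (x (m (n+1))) - u) (ψ (x (m (n+1))) - v)
                linarith
          _ ≤ 4*ρ := by linarith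
      have hsplit : μ n * (Δ (n+1) - Δ 0) = μ n * (2*(u-v)) + μ n * E := by
        rw [hE]; ring
      have hre1 : (μ n * (2*(u-v))).re = 2*((μ n).re * γ₀ - (μ n).im * (u-v).im) := by
        rw [Complex.mul_re]
        have e1 : (2*(u-v) : ℂ).re = 2*(u-v).re := by simp
        have e2 : (2*(u-v) : ℂ).im = 2*(u-v).im := by simp
        rw [e1, e2, hγ]
        ring
      have hre2 : -(‖μ n‖ * (4*ρ)) ≤ (μ n * E).re := by
        have h5 : |(μ n * E).re| ≤ ‖μ n * E‖ := by
          exact Complex.abs_re_le_norm _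
        have h6 : ‖μ n * E‖ = ‖μ n‖ * ‖E‖ := norm_mul _ _
        have h7 : ‖μ n‖ * ‖E‖ ≤ ‖μ n‖ * (4*ρ) := by
          apply mul_le_mul_of_nonneg_left hEnorm (norm_nonneg _)
        have := (abs_le.mp h5).1
        linarith
      have him : (μ n).im * (u-v).im ≤ |(μ n).im| * θ' := by
        calc (μ n).im * (u-v).im ≤ |(μ n).im * (u-v).im| := le_abs_self _
          _ = |(μ n).im| * |(u-v).im| := abs_mul _ _
          _ ≤ |(μ n).im| * θ' := by
              apply mul_le_mul_of_nonneg_left hθ' (abs_nonneg _)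
      have hmax : max (μ n).re 0 = (μ n).re := max_eq_left hc
      rw [hsplit, Complex.add_re, hre1, hmax]
      linarith
    · have hσn : σ (n+1) = false := by
        simp only [hσ]
        simp [hc]
      have hA1 : ‖φ (x (m (n+1))) - v‖ ≤ ρ := by
        have := hφreal (n+1) hnK
        rwa [hσn] at this
      have hB1 : ‖ψ (x (m (n+1))) - u‖ ≤ ρ := by
        have := hψreal (n+1) hnK
        rwa [hσn] at this
      have hDeq : Δ (n+1) - Δ 0 = (φ (x (m (n+1))) - v) - (ψ (x (m (n+1))) - u)
          - (φ (x (m 0)) - v) + (ψ (x (m 0)) - u) := by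
        rw [hΔ]; ring
      have hDnorm : ‖Δ (n+1) - Δ 0‖ ≤ 4*ρ := by
        rw [hDeq]
        calc ‖(φ (x (m (n+1))) - v) - (ψ (x (m (n+1))) - u)
              - (φ (x (m 0)) - v) + (ψ (x (m 0)) - u)‖
            ≤ ‖(φ (x (m (n+1))) - v) - (ψ (x (m (n+1))) - u) - (φ (x (m 0)) - v)‖
              + ‖ψ (x (m 0)) - u‖ := norm_add_le _ _
          _ ≤ ‖(φ (x (m (n+1))) - v) - (ψ (x (m (n+1))) - u)‖ + ‖φ (x (m 0)) - v‖
              + ‖ψ (x (m 0)) - u‖ := by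
                have := norm_sub_le ((φ (x (m (n+1))) - v) - (ψ (x (m (n+1))) - u)) (φ (x (m 0)) - v)
                linarith
          _ ≤ ‖φ (x (m (n+1))) - v‖ + ‖ψ (x (m (n+1))) - u‖ + ‖φ (x (m 0)) - v‖
              + ‖ψ (x (m 0)) - u‖ := by
                have := norm_sub_le (φ (x (m (n+1))) - v) (ψ (x (m (n+1))) - u)
                linarith
          _ ≤ 4*ρ := by linarith
      have hre2 : -(‖μ n‖ * (4*ρ)) ≤ (μ n * (Δ (n+1) - Δ 0)).re := by
        have h5 : |(μ n * (Δ (n+1) - Δ 0)).re| ≤ ‖μ n * (Δ (n+1) - Δ 0)‖ := by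
          exact Complex.abs_re_le_norm _
        have h6 : ‖μ n * (Δ (n+1) - Δ 0)‖ = ‖μ n‖ * ‖Δ (n+1) - Δ 0‖ := norm_mul _ _
        have h7 : ‖μ n‖ * ‖Δ (n+1) - Δ 0‖ ≤ ‖μ n‖ * (4*ρ) := by
          apply mul_le_mul_of_nonneg_left hDnorm (norm_nonneg _)
        have := (abs_le.mp h5).1
        linarith
      have hmax : max (μ n).re 0 = 0 := max_eq_right (le_of_lt (not_le.mp hc))
      rw [hmax]
      have h8 : 0 ≤ 2*θ' * |(μ n).im| := by positivity
      linarith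
  calc ∑ n ∈ T, (2*γ₀ * max (μ n).re 0 - 2*θ' * |(μ n).im| - 4*ρ*‖μ n‖)
      ≤ ∑ n ∈ T, (μ n * (Δ (n+1) - Δ 0)).re := Finset.sum_le_sum h3
    _ = (∑ n ∈ T, μ n * (Δ (n+1) - Δ 0)).re := (Complex.re_sum _ _).symm
    _ = (φ w - ψ w).re := by rw [h1]
    _ ≤ 2 * ‖w‖ := h2

end RosProof

namespace RosProof
open GP

theorem max_add_max_neg (a : ℝ) : max a 0 + max (-a) 0 = |a| := by
  rcases le_total a 0 with h | h
  · rw [max_eq_right h, max_eq_left (neg_nonneg.mpr h), abs_of_nonpos h, zero_add]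
  · rw [max_eq_left h, max_eq_right (neg_nonpos.mpr h), abs_of_nonneg h, add_zero]

theorem estimate4 {X : Type*} [NormedAddCommGroup X] [NormedSpace ℂ X]
    (x : ℕ → X) (m : ℕ → ℕ) (u v : ℂ) (ρ γ₀ θ' : ℝ) (hρ : 0 ≤ ρ)
    (hγ : (u - v).re = γ₀) (hθ' : |(u - v).im| ≤ θ')
    (hR : ∀ (σ : ℕ → Bool) (K : ℕ), ∃ φ : X →L[ℂ] ℂ, ‖φ‖ ≤ 1 ∧
      ∀ j ≤ K, ‖φ (x (m j)) - (if σ j then u else v)‖ ≤ ρ)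
    (lam : ℕ →₀ ℂ) :
    (2*γ₀ - 4*θ' - 16*ρ)/8 * ∑ n ∈ lam.support, (|(lam n).re| + |(lam n).im|) ≤
      ‖∑ n ∈ lam.support, lam n • (x (m (n+1)) - x (m 0))‖ := by
  classical
  set T := lam.support with hT
  set w := ∑ n ∈ T, lam n • (x (m (n+1)) - x (m 0)) with hw
  have key : ∀ c : ℂ, ‖c‖ = 1 →
      ∑ n ∈ T, (2*γ₀ * max (c * lam n).re 0 - 2*θ' * |(c * lam n).im| - 4*ρ*‖c * lam n‖) ≤
        2 * ‖w‖ := by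
    intro c hc
    have h1 := estimate x m u v ρ γ₀ θ' hρ hγ hθ' hR T (fun n => c * lam n)
    have h2 : ∑ n ∈ T, (c * lam n) • (x (m (n+1)) - x (m 0)) = c • w := by
      rw [hw, Finset.smul_sum]
      apply Finset.sum_congr rfl
      intro n _
      rw [smul_smul]
    rw [h2, norm_smul, hc, one_mul] at h1
    exact h1
  have k1 := key 1 (by simp)
  have k2 := key (-1) (by simp)
  have k3 := key Complex.I (by simp)
  have k4 := key (-Complex.I) (by simp)
  have hpt : ∀ n ∈ T, (2*γ₀ - 4*θ' - 16*ρ) * (|(lam n).re| + |(lam n).im|) ≤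
      (2*γ₀ * max ((1:ℂ) * lam n).re 0 - 2*θ' * |((1:ℂ) * lam n).im| - 4*ρ*‖(1:ℂ) * lam n‖)
      + (2*γ₀ * max ((-1:ℂ) * lam n).re 0 - 2*θ' * |((-1:ℂ) * lam n).im| - 4*ρ*‖(-1:ℂ) * lam n‖)
      + (2*γ₀ * max (Complex.I * lam n).re 0 - 2*θ' * |(Complex.I * lam n).im| - 4*ρ*‖Complex.I * lam n‖)
      + (2*γ₀ * max ((-Complex.I) * lam n).re 0 - 2*θ' * |((-Complex.I) * lam n).im| - 4*ρ*‖(-Complex.I) * lam n‖) := by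
    intro n _
    set z := lam n with hz
    have e1 : ((1:ℂ) * z).re = z.re := by simp
    have e2 : ((-1:ℂ) * z).re = -z.re := by simp
    have e3 : (Complex.I * z).re = -z.im := by simp [Complex.mul_re]
    have e4 : ((-Complex.I) * z).re = z.im := by simp [Complex.mul_re]
    have f1 : |((1:ℂ) * z).im| = |z.im| := by simp
    have f2 : |((-1:ℂ) * z).im| = |z.im| := by simp
    have f3 : |(Complex.I * z).im| = |z.re| := by simp [Complex.mul_im]
    have f4 : |((-Complex.I) * z).im| = |z.re| := by simp [Complex.mul_im]
    have g1 : ‖(1:ℂ) * z‖ = ‖z‖ := by simp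
    have g2 : ‖(-1:ℂ) * z‖ = ‖z‖ := by simp
    have g3 : ‖Complex.I * z‖ = ‖z‖ := by rw [norm_mul]; simp
    have g4 : ‖(-Complex.I) * z‖ = ‖z‖ := by rw [norm_mul]; simp
    rw [e1, e2, e3, e4, f1, f2, f3, f4, g1, g2, g3, g4]
    have hm1 : max z.re 0 + max (-z.re) 0 = |z.re| := max_add_max_neg _
    have hm2 : max (-z.im) 0 + max z.im 0 = |z.im| := by
      have := max_add_max_neg (-z.im)
      rwa [neg_neg, abs_neg] at this
    have hnz : ‖z‖ ≤ |z.re| + |z.im| := by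
      exact Complex.norm_le_abs_re_add_abs_im _
    have key1 : 2*γ₀*(max z.re 0) + 2*γ₀*(max (-z.re) 0) = 2*γ₀*|z.re| := by
      rw [← mul_add, hm1]
    have key2 : 2*γ₀*(max (-z.im) 0) + 2*γ₀*(max z.im 0) = 2*γ₀*|z.im| := by
      rw [← mul_add, hm2]
    have key3 : ρ*‖z‖ ≤ ρ*(|z.re|+|z.im|) := mul_le_mul_of_nonneg_left hnz hρ
    linarith [key1, key2, key3]
  have hsum : ∑ n ∈ T, (2*γ₀ - 4*θ' - 16*ρ) * (|(lam n).re| + |(lam n).im|) ≤ 8 * ‖w‖ := by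
    calc ∑ n ∈ T, (2*γ₀ - 4*θ' - 16*ρ) * (|(lam n).re| + |(lam n).im|)
        ≤ ∑ n ∈ T, ((2*γ₀ * max ((1:ℂ) * lam n).re 0 - 2*θ' * |((1:ℂ) * lam n).im| - 4*ρ*‖(1:ℂ) * lam n‖)
          + (2*γ₀ * max ((-1:ℂ) * lam n).re 0 - 2*θ' * |((-1:ℂ) * lam n).im| - 4*ρ*‖(-1:ℂ) * lam n‖)
          + (2*γ₀ * max (Complex.I * lam n).re 0 - 2*θ' * |(Complex.I * lam n).im| - 4*ρ*‖Complex.I * lam n‖)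
          + (2*γ₀ * max ((-Complex.I) * lam n).re 0 - 2*θ' * |((-Complex.I) * lam n).im| - 4*ρ*‖(-Complex.I) * lam n‖)) :=
          Finset.sum_le_sum hpt
      _ = (∑ n ∈ T, (2*γ₀ * max ((1:ℂ) * lam n).re 0 - 2*θ' * |((1:ℂ) * lam n).im| - 4*ρ*‖(1:ℂ) * lam n‖))
          + (∑ n ∈ T, (2*γ₀ * max ((-1:ℂ) * lam n).re 0 - 2*θ' * |((-1:ℂ) * lam n).im| - 4*ρ*‖(-1:ℂ) * lam n‖))
          + (∑ n ∈ T, (2*γ₀ * max (Complex.I * lam n).re 0 - 2*θ' * |(Complex.I * lam n).im| - 4*ρ*‖Complex.I * lam n‖))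
          + (∑ n ∈ T, (2*γ₀ * max ((-Complex.I) * lam n).re 0 - 2*θ' * |((-Complex.I) * lam n).im| - 4*ρ*‖(-Complex.I) * lam n‖)) := by
          rw [← Finset.sum_add_distrib, ← Finset.sum_add_distrib, ← Finset.sum_add_distrib]
      _ ≤ 8 * ‖w‖ := by linarith
  rw [← Finset.mul_sum] at hsum
  linarith

theorem iterate {X : Type*} [NormedAddCommGroup X] [NormedSpace ℂ X] (x : ℕ → X) (θ : ℝ) :
    ∀ (L : List ((ℤ×ℤ) × (ℤ×ℤ))) (M : Set ℕ), M.Infinite →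
      (∃ pq ∈ L, ∃ N, N ⊆ M ∧ N.Infinite ∧
        (∀ g, SubSeq g N → ∀ k, ¬ Qpat x θ pq.1 pq.2 (pref g k))) ∨
      (∃ N, N ⊆ M ∧ N.Infinite ∧ ∀ pq ∈ L,
        (∀ g, SubSeq g N → ∃ k, Qpat x θ pq.1 pq.2 (pref g k))) := by
  intro L
  induction L with
  | nil => intro M hM; exact Or.inr ⟨M, le_refl _, hM, by simp⟩
  | cons pq L ih =>
      intro M hM
      obtain ⟨N, hNM, hNi, hdec⟩ := GP.dichotomy (Qpat x θ pq.1 pq.2) M hM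
      rcases hdec with hbad | hgood
      · rcases ih N hNi with ⟨pq', hmem, N', h1, h2, h3⟩ | ⟨N', h1, h2, h3⟩
        · exact Or.inl ⟨pq', by simp [hmem], N', h1.trans hNM, h2, h3⟩
        · refine Or.inr ⟨N', h1.trans hNM, h2, ?_⟩
          intro pq' hmem
          rcases List.mem_cons.mp hmem with rfl | hmem'
          · intro g hg; exact hbad g (subSeq_mono hg h1)
          · exact h3 pq' hmem'
      · exact Or.inl ⟨pq, by simp, N, hNM, hNi, hgood⟩

end RosProof

set_option maxHeartbeats 2000000 in
open GP RosProof in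
/-- For a bounded sequence (x_n) in a complex Banach space and ε > 0, either
(x_n) admits an ε-weak Cauchy subsequence, or for every δ > 0 there is a
subsequence (x_{m_n}) with
‖Σ_{n≥2} λ_n (x_{m_n} − x_{m_1})‖ ≥ (ε√2/8 − δ)·Σ_{n≥2}(|Re λ_n| + |Im λ_n|). -/
theorem main_banach_complex (X : Type*) [NormedAddCommGroup X] [NormedSpace ℂ X]
    [CompleteSpace X] (x : ℕ → X) (hx : ∃ C : ℝ, ∀ n, ‖x n‖ ≤ C)
    (ε : ℝ) (hε : 0 < ε) :
    (∃ m : ℕ → ℕ, StrictMono m ∧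
        ∀ φ : X →L[ℂ] ℂ, ‖φ‖ ≤ 1 →
          ∃ n₀ : ℕ, ∀ n ≥ n₀, ∀ k ≥ n₀, ‖φ (x (m n)) - φ (x (m k))‖ < ε) ∨
      ∀ δ : ℝ, 0 < δ → ∃ m : ℕ → ℕ, StrictMono m ∧
        ∀ lam : ℕ →₀ ℂ,
          ‖∑ n ∈ lam.support, lam n • (x (m (n + 1)) - x (m 0))‖ ≥
            (ε * Real.sqrt 2 / 8 - δ) *
              ∑ n ∈ lam.support, (|(lam n).re| + |(lam n).im|) := by
  classical
  obtain ⟨C, hC⟩ := hx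
  have hC0 : 0 ≤ C := le_trans (norm_nonneg (x 0)) (hC 0)
  by_cases h1 : (∃ m : ℕ → ℕ, StrictMono m ∧
        ∀ φ : X →L[ℂ] ℂ, ‖φ‖ ≤ 1 →
          ∃ n₀ : ℕ, ∀ n ≥ n₀, ∀ k ≥ n₀, ‖φ (x (m n)) - φ (x (m k))‖ < ε)
  · exact Or.inl h1
  right
  intro δ hδ
  by_cases htriv : ε * Real.sqrt 2 / 8 - δ ≤ 0
  · refine ⟨id, strictMono_id, fun lam => ?_⟩
    have hS : (0:ℝ) ≤ ∑ n ∈ lam.support, (|(lam n).re| + |(lam n).im|) :=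
      Finset.sum_nonneg (fun n _ => by positivity)
    have h2 := mul_nonpos_of_nonpos_of_nonneg htriv hS
    exact le_trans h2 (norm_nonneg _)
  push_neg at h1 htriv
  have hval : ∀ (φ : X →L[ℂ] ℂ), ‖φ‖ ≤ 1 → ∀ n, ‖φ (x n)‖ ≤ C := by
    intro φ hφ n
    calc ‖φ (x n)‖ ≤ ‖φ‖ * ‖x n‖ := ContinuousLinearMap.le_opNorm φ (x n)
      _ ≤ 1 * C := mul_le_mul hφ (hC n) (norm_nonneg _) zero_le_one
      _ = C := one_mul C
  -- parameters
  set θ : ℝ := min (ε/10) (δ/8) with hθdef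
  have hθ : 0 < θ := lt_min (by positivity) (by positivity)
  have hθε : θ ≤ ε/10 := min_le_left _ _
  have hθδ : θ ≤ δ/8 := min_le_right _ _
  set α : ℝ := min (1/8) (δ/(8*(C+1))) with hαdef
  have hα : 0 < α := lt_min (by norm_num) (by positivity)
  have hα8 : α ≤ 1/8 := min_le_left _ _
  have hαδ : α ≤ δ/(8*(C+1)) := min_le_right _ _
  have hCα : C*α ≤ δ/8 := by
    have h2 : C*α ≤ C*(δ/(8*(C+1))) := mul_le_mul_of_nonneg_left hαδ hC0
    have h3 : C*(δ/(8*(C+1))) ≤ δ/8 := by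
      rw [← mul_div_assoc, div_le_div_iff₀ (by positivity) (by norm_num)]
      nlinarith [hδ.le, hC0]
    linarith
  have hsqrt2 : Real.sqrt 2 ≤ 1.5 := by
    nlinarith [Real.sq_sqrt (by norm_num : (0:ℝ) ≤ 2), Real.sqrt_nonneg 2]
  obtain ⟨Ω, hΩ⟩ := net_lemma hα
  set box := cellBox θ C with hbox
  set cond : ((ℤ×ℤ) × (ℤ×ℤ)) → Prop := fun pq =>
    ((1-α)*ε - θ ≤ (cellPt θ pq.1 - cellPt θ pq.2).re ∧
     |(cellPt θ pq.1 - cellPt θ pq.2).im| ≤ 2*C*α + θ) with hcond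
  set useL : List ((ℤ×ℤ) × (ℤ×ℤ)) := ((box ×ˢ box).toList.filter (fun pq => cond pq))
    with huseL
  rcases iterate x θ useL Set.univ Set.infinite_univ with
    ⟨pq, hpqL, N, hNsub, hNi, hgood⟩ | ⟨N, hNsub, hNi, hbad⟩
  · -- GOOD case : construct the subsequence
    have hpqcond : cond pq := by
      have := (List.mem_filter.mp hpqL).2
      exact of_decide_eq_true this
    set u := cellPt θ pq.1 with hu
    set v := cellPt θ pq.2 with hv
    have hNset : {n | n ∈ N}.Infinite := hNi
    set m : ℕ → ℕ := fun j => Nat.nth (· ∈ N) (2*j+1) with hm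
    have hmmono : StrictMono m := by
      intro a b hab
      exact Nat.nth_strictMono hNset (by omega)
    refine ⟨m, hmmono, ?_⟩
    intro lam
    have hR : ∀ (σ : ℕ → Bool) (K : ℕ), ∃ φ : X →L[ℂ] ℂ, ‖φ‖ ≤ 1 ∧
        ∀ j ≤ K, ‖φ (x (m j)) - (if σ j then u else v)‖ ≤ 2*θ := by
      intro σ K
      obtain ⟨φ, hφ, hreal⟩ := goodcase x θ pq.1 pq.2 N hNi hgood σ K
      refine ⟨φ, hφ, fun j hj => ?_⟩
      have h2 := hreal j hj
      by_cases hσ : σ j = true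
      · rw [hσ, if_pos rfl] at h2
        rw [if_pos hσ, hu, ← h2]
        exact cell_close hθ _
      · have hσf : σ j = false := by cases hb : σ j; rfl; exact absurd hb hσ
        rw [hσf] at h2
        simp only [Bool.false_eq_true, if_false] at h2
        rw [if_neg hσ, hv, ← h2]
        exact cell_close hθ _
    have h4 := estimate4 x m u v (2*θ) ((u-v).re) (2*C*α + θ) (by positivity) rfl
      hpqcond.2 hR lam
    have hS : (0:ℝ) ≤ ∑ n ∈ lam.support, (|(lam n).re| + |(lam n).im|) :=
      Finset.sum_nonneg (fun n _ => by positivity)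
    have hγlb : (1-α)*ε - θ ≤ (u-v).re := hpqcond.1
    have hαε : α*ε ≤ ε/8 := by nlinarith [hα8, hε.le]
    have hcoef : ε * Real.sqrt 2 / 8 - δ ≤ (2*((u-v).re) - 4*(2*C*α + θ) - 16*(2*θ))/8 := by
      nlinarith [hsqrt2, hγlb, hCα, hθδ, hαε, hε.le, hδ.le, hθ.le]
    calc (ε * Real.sqrt 2 / 8 - δ) * ∑ n ∈ lam.support, (|(lam n).re| + |(lam n).im|)
        ≤ (2*((u-v).re) - 4*(2*C*α + θ) - 16*(2*θ))/8 *
            ∑ n ∈ lam.support, (|(lam n).re| + |(lam n).im|) :=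
          mul_le_mul_of_nonneg_right hcoef hS
      _ ≤ ‖∑ n ∈ lam.support, lam n • (x (m (n + 1)) - x (m 0))‖ := h4
  · -- BAD case : contradiction with the oscillation hypothesis
    exfalso
    have hNset : {n | n ∈ N}.Infinite := hNi
    set m' : ℕ → ℕ := Nat.nth (· ∈ N) with hm'
    have hm'mono : StrictMono m' := Nat.nth_strictMono hNset
    have hm'mem : ∀ n, m' n ∈ N := fun n => Nat.nth_mem_of_infinite hNset n
    obtain ⟨φ, hφ1, hφ2⟩ := h1 m' hm'mono
    set nt : ℕ → ℕ := fun t => Classical.choose (hφ2 t) with hntdef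
    have hnt : ∀ t, t ≤ nt t ∧ ∃ k, t ≤ k ∧ ε ≤ ‖φ (x (m' (nt t))) - φ (x (m' k))‖ := by
      intro t
      obtain ⟨h5, k, hk1, hk2⟩ := Classical.choose_spec (hφ2 t)
      exact ⟨h5, k, hk1, hk2⟩
    set kt : ℕ → ℕ := fun t => Classical.choose (hnt t).2 with hktdef
    have hkt : ∀ t, t ≤ kt t ∧ ε ≤ ‖φ (x (m' (nt t))) - φ (x (m' (kt t)))‖ :=
      fun t => Classical.choose_spec (hnt t).2
    set d : ℕ → ℂ := fun t => φ (x (m' (nt t))) - φ (x (m' (kt t))) with hd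
    have hdnorm : ∀ t, ε ≤ ‖d t‖ := fun t => (hkt t).2
    have hd2C : ∀ t, ‖d t‖ ≤ 2*C := by
      intro t
      calc ‖d t‖ ≤ ‖φ (x (m' (nt t)))‖ + ‖φ (x (m' (kt t)))‖ := norm_sub_le _ _
        _ ≤ C + C := add_le_add (hval φ hφ1 _) (hval φ hφ1 _)
        _ = 2*C := by ring
    have hdne : ∀ t, d t ≠ 0 := by
      intro t h
      have := hdnorm t
      rw [h, norm_zero] at this
      linarith
    set ωf : ℕ → ℂ := fun t => Classical.choose (hΩ (d t) (hdne t)) with hωfdef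
    have hωf : ∀ t, ωf t ∈ Ω ∧ ‖ωf t‖ ≤ 1 ∧ (1-α)*‖d t‖ ≤ (ωf t * d t).re ∧
        |(ωf t * d t).im| ≤ α*‖d t‖ := by
      intro t
      obtain ⟨h5, h6, h7, h8⟩ := Classical.choose_spec (hΩ (d t) (hdne t))
      exact ⟨h5, h6, h7, h8⟩
    have hz1C : ∀ t, ‖ωf t * φ (x (m' (nt t)))‖ ≤ C := by
      intro t
      rw [norm_mul]
      calc ‖ωf t‖ * ‖φ (x (m' (nt t)))‖ ≤ 1 * C :=
            mul_le_mul (hωf t).2.1 (hval φ hφ1 _) (norm_nonneg _) zero_le_one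
        _ = C := one_mul C
    have hz2C : ∀ t, ‖ωf t * φ (x (m' (kt t)))‖ ≤ C := by
      intro t
      rw [norm_mul]
      calc ‖ωf t‖ * ‖φ (x (m' (kt t)))‖ ≤ 1 * C :=
            mul_le_mul (hωf t).2.1 (hval φ hφ1 _) (norm_nonneg _) zero_le_one
        _ = C := one_mul C
    set f : ℕ → ℂ × ((ℤ×ℤ) × (ℤ×ℤ)) := fun t =>
      (ωf t, cellIdx θ (ωf t * φ (x (m' (nt t)))), cellIdx θ (ωf t * φ (x (m' (kt t))))) with hf
    have hfV : ∀ t, f t ∈ Ω ×ˢ (box ×ˢ box) := by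
      intro t
      rw [Finset.mem_product]
      refine ⟨(hωf t).1, ?_⟩
      rw [Finset.mem_product]
      exact ⟨cell_mem_box hθ _ (hz1C t), cell_mem_box hθ _ (hz2C t)⟩
    obtain ⟨val, hvalV, hfib⟩ := inf_fiber f (Ω ×ˢ (box ×ˢ box)) hfV
    set ω := val.1 with hωv
    set p := val.2.1 with hpv
    set q := val.2.2 with hqv
    have hfibprop : ∀ t ∈ {t | f t = val}, ωf t = ω ∧
        cellIdx θ (ωf t * φ (x (m' (nt t)))) = p ∧
        cellIdx θ (ωf t * φ (x (m' (kt t)))) = q := by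
      intro t ht
      have h5 : f t = val := ht
      rw [hf] at h5
      exact ⟨congrArg Prod.fst h5, congrArg (fun z => z.2.1) h5, congrArg (fun z => z.2.2) h5⟩
    obtain ⟨t0, ht0⟩ := hfib.nonempty
    have ht0p := hfibprop t0 ht0
    set s : X →L[ℂ] ℂ := ω • φ with hs
    have hs1 : ‖s‖ ≤ 1 := by
      rw [hs]
      calc ‖ω • φ‖ ≤ ‖ω‖ * ‖φ‖ := ContinuousLinearMap.opNorm_smul_le _ _
        _ ≤ 1 * 1 := by
            apply mul_le_mul _ hφ1 (norm_nonneg _) zero_le_one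
            rw [← ht0p.1]
            exact (hωf t0).2.1
        _ = 1 := one_mul 1
    have hsapp : ∀ n, s (x n) = ω * φ (x n) := by
      intro n
      rw [hs, ContinuousLinearMap.smul_apply, smul_eq_mul]
    -- the two infinite sets
    have hIinf : {n ∈ N | cellIdx θ (s (x n)) = p}.Infinite := by
      apply Set.infinite_of_forall_exists_gt
      intro a
      obtain ⟨t, ht, hat⟩ := hfib.exists_gt a
      have htp := hfibprop t ht
      refine ⟨m' (nt t), ⟨hm'mem _, ?_⟩, ?_⟩
      · rw [hsapp, ← htp.1]
        exact htp.2.1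
      · have h5 : t ≤ nt t := (hnt t).1
        have h6 : nt t ≤ m' (nt t) := hm'mono.le_apply
        omega
    have hJinf : {n ∈ N | cellIdx θ (s (x n)) = q}.Infinite := by
      apply Set.infinite_of_forall_exists_gt
      intro a
      obtain ⟨t, ht, hat⟩ := hfib.exists_gt a
      have htp := hfibprop t ht
      refine ⟨m' (kt t), ⟨hm'mem _, ?_⟩, ?_⟩
      · rw [hsapp, ← htp.1]
        exact htp.2.2
      · have h5 : t ≤ kt t := (hkt t).1
        have h6 : kt t ≤ m' (kt t) := hm'mono.le_apply
        omega
    -- (p, q) is a useful pair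
    have hpbox : p ∈ box ∧ q ∈ box := by
      rw [Finset.mem_product, Finset.mem_product] at hvalV
      exact ⟨hvalV.2.1, hvalV.2.2⟩
    have hcondpq : cond (p, q) := by
      set z1 := ωf t0 * φ (x (m' (nt t0))) with hz1
      set z2 := ωf t0 * φ (x (m' (kt t0))) with hz2
      have hcell1 : cellIdx θ z1 = p := ht0p.2.1
      have hcell2 : cellIdx θ z2 = q := ht0p.2.2
      have hb1 := cell_re_bounds hθ z1
      have hb2 := cell_re_bounds hθ z2
      have hb3 := cell_im_bounds hθ z1
      have hb4 := cell_im_bounds hθ z2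
      rw [hcell1] at hb1 hb3
      rw [hcell2] at hb2 hb4
      have hz12 : z1 - z2 = ωf t0 * d t0 := by rw [hz1, hz2, hd]; ring
      have hre : (1-α)*ε ≤ (z1 - z2).re := by
        rw [hz12]
        calc (1-α)*ε ≤ (1-α)*‖d t0‖ := by
              apply mul_le_mul_of_nonneg_left (hdnorm t0) (by linarith)
          _ ≤ (ωf t0 * d t0).re := (hωf t0).2.2.1
      have him : |(z1 - z2).im| ≤ 2*C*α := by
        rw [hz12]
        calc |(ωf t0 * d t0).im| ≤ α*‖d t0‖ := (hωf t0).2.2.2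
          _ ≤ α*(2*C) := mul_le_mul_of_nonneg_left (hd2C t0) hα.le
          _ = 2*C*α := by ring
      constructor
      · have e1 : (cellPt θ (p, q).1 - cellPt θ (p, q).2).re = (cellPt θ p).re - (cellPt θ q).re := by
          simp [Complex.sub_re]
        rw [e1]
        have e2 : (z1 - z2).re = z1.re - z2.re := by simp [Complex.sub_re]
        rw [e2] at hre
        linarith [hb1.1, hb1.2, hb2.1, hb2.2]
      · have e1 : (cellPt θ (p, q).1 - cellPt θ (p, q).2).im = (cellPt θ p).im - (cellPt θ q).im := by
          simp [Complex.sub_im]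
        rw [e1]
        have e2 : (z1 - z2).im = z1.im - z2.im := by simp [Complex.sub_im]
        rw [e2] at him
        rw [abs_le] at him ⊢
        constructor
        · linarith [hb3.1, hb3.2, hb4.1, hb4.2, him.1, him.2]
        · linarith [hb3.1, hb3.2, hb4.1, hb4.2, him.1, him.2]
    have hmemUse : (p, q) ∈ useL := by
      rw [huseL, List.mem_filter]
      constructor
      · rw [Finset.mem_toList, Finset.mem_product]
        exact ⟨hpbox.1, hpbox.2⟩
      · exact decide_eq_true hcondpq
    exact badcase x θ p q N (hbad (p, q) hmemUse) s hs1 ⟨hIinf, hJinf⟩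
end
end

section
/- Let K be a compact metric space, (f_n) a bounded sequence in C(K, ℂ), E a closed subset of ℂ², and P an infinite subset of ℕ. Then the set D(P, E) is closed in the space of infinite subsets of ℕ equipped with the topology of pointwise convergence (i.e., the topology induced from the product topology on {0,1}^ℕ via characteristic functions). That is, if (L_m) is a sequence in D(P, E) converging pointwise to an infinite set L ⊆ P, then L ∈ D(P, E). -/
/-- If two sets of naturals agree up to `N`, the second is infinite and its
`i`-th element is at most `N`, then their increasing enumerations agree up
to index `i`. -/
lemma nth_congr_of_agree {S T : Set ℕ} (hT : T.Infinite) {N i : ℕ}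
    (hagree : ∀ j ≤ N, (j ∈ S ↔ j ∈ T)) (hN : Nat.nth (· ∈ T) i ≤ N) :
    ∀ k ≤ i, Nat.nth (· ∈ S) k = Nat.nth (· ∈ T) k := by
  intro k hk
  induction k using Nat.strong_induction_on with
  | _ k ih =>
    have hTk_le : Nat.nth (· ∈ T) k ≤ N :=
      le_trans ((Nat.nth_le_nth hT).2 hk) hN
    have hTk_mem_A : Nat.nth (· ∈ T) k ∈ S ∧
        ∀ j < k, Nat.nth (· ∈ S) j < Nat.nth (· ∈ T) k := by
      constructor
      · exact (hagree _ hTk_le).2 (Nat.nth_mem_of_infinite hT k)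
      · intro j hj
        rw [ih j hj (le_trans hj.le hk)]
        exact (Nat.nth_lt_nth hT).2 hj
    rw [Nat.nth_eq_sInf (· ∈ S) k]
    apply le_antisymm
    · exact Nat.sInf_le hTk_mem_A
    · -- sInf of the S-set is a member since nonempty
      have hne : {x | x ∈ S ∧ ∀ j < k, Nat.nth (· ∈ S) j < x}.Nonempty :=
        ⟨_, hTk_mem_A⟩
      have hmem := Nat.sInf_mem hne
      set a := sInf {x | x ∈ S ∧ ∀ j < k, Nat.nth (· ∈ S) j < x} with ha
      have haN : a ≤ N := le_trans (Nat.sInf_le hTk_mem_A) hTk_le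
      have haT : a ∈ T := (hagree a haN).1 hmem.1
      have : Nat.nth (· ∈ T) k ≤ a := by
        rw [Nat.nth_eq_sInf (· ∈ T) k]
        refine Nat.sInf_le ⟨haT, fun j hj => ?_⟩
        rw [← ih j hj (le_trans hj.le hk)]
        exact hmem.2 j hj
      exact this

/-- Lemma 1: the set D(P, E) is pointwise closed.  An infinite set L ⊆ ℕ belongs
to D(P, E) if L ⊆ P and, with (Nat.nth (· ∈ L)) its increasing enumeration,
there is t ∈ K with all consecutive pairs of values (f_{l_{2n-1}}(t), f_{l_{2n}}(t))
lying in E.  If a sequence (L_m) of members of D(P, E) converges pointwise (as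
characteristic functions) to an infinite set L ⊆ P, then L ∈ D(P, E). -/
theorem D_pointwise_closed (K : Type*) [MetricSpace K] [CompactSpace K]
    (f : ℕ → C(K, ℂ)) (hf : ∃ C : ℝ, ∀ n, ‖f n‖ ≤ C)
    (E : Set (ℂ × ℂ)) (hE : IsClosed E) (P : Set ℕ) (hP : P.Infinite)
    (Lseq : ℕ → Set ℕ)
    (hmem : ∀ m : ℕ, Lseq m ⊆ P ∧ (Lseq m).Infinite ∧
      ∃ t : K, ∀ n : ℕ,
        (f (Nat.nth (· ∈ Lseq m) (2 * n)) t, f (Nat.nth (· ∈ Lseq m) (2 * n + 1)) t) ∈ E)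
    (L : Set ℕ) (hLP : L ⊆ P) (hLinf : L.Infinite)
    (hconv : ∀ k : ℕ, ∀ᶠ m in Filter.atTop, (k ∈ Lseq m ↔ k ∈ L)) :
    ∃ t : K, ∀ n : ℕ,
      (f (Nat.nth (· ∈ L) (2 * n)) t, f (Nat.nth (· ∈ L) (2 * n + 1)) t) ∈ E := by
  -- choose witnesses t m
  choose t ht using fun m => (hmem m).2.2
  -- compactness: a convergent subsequence
  obtain ⟨t₀, -, φ, hφ, htend⟩ :=
    isCompact_univ.tendsto_subseq (fun m => Set.mem_univ (t m))
  refine ⟨t₀, fun n => ?_⟩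
  set a := Nat.nth (· ∈ L) (2 * n)
  set b := Nat.nth (· ∈ L) (2 * n + 1)
  -- the sequence of pairs converges to the candidate pair
  have htendpair : Filter.Tendsto (fun m => (f a (t (φ m)), f b (t (φ m))))
      Filter.atTop (nhds (f a t₀, f b t₀)) :=
    (((f a).continuous.tendsto t₀).comp htend).prodMk_nhds
      (((f b).continuous.tendsto t₀).comp htend)
  refine hE.mem_of_tendsto htendpair ?_
  -- eventually, Lseq m agrees with L up to b, so the nth's agree
  set N := b with hNb
  have hagree : ∀ᶠ m in Filter.atTop, ∀ j ≤ N, (j ∈ Lseq m ↔ j ∈ L) := by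
    have := (Filter.eventually_all_finite (Set.finite_Iic N)
      (p := fun j m => j ∈ Lseq m ↔ j ∈ L)).2 (fun j _ => hconv j)
    filter_upwards [this] with m hm j hj using hm j hj
  have hagree' : ∀ᶠ m in Filter.atTop, ∀ j ≤ N, (j ∈ Lseq (φ m) ↔ j ∈ L) :=
    hφ.tendsto_atTop.eventually hagree
  filter_upwards [hagree'] with m hm
  have hcongr := nth_congr_of_agree hLinf hm (le_refl N)
  have hb : Nat.nth (· ∈ Lseq (φ m)) (2 * n + 1) = b := hcongr (2 * n + 1) le_rfl
  have ha : Nat.nth (· ∈ Lseq (φ m)) (2 * n) = a := by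
    have := hcongr (2 * n) (by omega)
    simpa using this
  have := ht (φ m) n
  rw [ha, hb] at this
  exact this
end

section
/- Let K be a compact metric space and (f_n) a bounded sequence in C(K, ℂ). Assume that for every infinite subset P of ℕ and every ε > 0, the set D(P, F_ε) is a proper subset of the collection of all infinite subsets of P. Then (f_n) admits a weak Cauchy subsequence, i.e., a subsequence (f_{m_n}) such that (f_{m_n}(t)) converges for every t ∈ K. -/
set_option linter.unusedSectionVars false

namespace WCS

variable {K : Type*} [MetricSpace K] [CompactSpace K]

/-- prefix of length `r` of the sequence `b`. -/
def pref (b : ℕ → ℕ) (r : ℕ) : List ℕ := (List.range r).map b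

/-- a finite tuple is good if for every point of `K` some matched pair is ε-small. -/
def good (f : ℕ → C(K, ℂ)) (ε : ℝ) (s : List ℕ) : Prop :=
  ∀ t : K, ∃ i, 2 * i + 1 < s.length ∧
    ‖f (s.getD (2 * i) 0) t - f (s.getD (2 * i + 1) 0) t‖ < ε

def acc (f : ℕ → C(K, ℂ)) (ε : ℝ) (g : ℕ → ℕ) (s : List ℕ) : Prop :=
  ∀ h : ℕ → ℕ, StrictMono h → ∃ r, good f ε (s ++ pref (fun n => g (h n)) r)

def rej (f : ℕ → C(K, ℂ)) (ε : ℝ) (g : ℕ → ℕ) (s : List ℕ) : Prop :=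
  ∀ h : ℕ → ℕ, StrictMono h → ¬ acc f ε (fun n => g (h n)) s

variable {f : ℕ → C(K, ℂ)} {ε : ℝ} {g τ : ℕ → ℕ} {s : List ℕ}

lemma pref_length (b : ℕ → ℕ) (r : ℕ) : (pref b r).length = r := by simp [pref]

lemma pref_getD (b : ℕ → ℕ) {i r : ℕ} (hir : i < r) : (pref b r).getD i 0 = b i := by
  rw [List.getD_eq_getElem _ _ (by simpa [pref_length] using hir)]
  simp [pref]

lemma pref_succ (b : ℕ → ℕ) (r : ℕ) : pref b (r + 1) = b 0 :: pref (fun n => b (n + 1)) r := by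
  simp [pref, List.range_succ_eq_map, List.map_map]

lemma acc_comp (hacc : acc f ε g s) (hτ : StrictMono τ) : acc f ε (fun n => g (τ n)) s :=
  fun h hh => hacc (fun n => τ (h n)) (hτ.comp hh)

lemma rej_comp (hrej : rej f ε g s) (hτ : StrictMono τ) : rej f ε (fun n => g (τ n)) s :=
  fun h hh ha => hrej (fun n => τ (h n)) (hτ.comp hh) ha

lemma acc_of_good (hs : good f ε s) : acc f ε g s :=
  fun _ _ => ⟨0, by simpa [pref] using hs⟩

lemma not_rej_of_good (hs : good f ε s) : ¬ rej f ε g s :=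
  fun hr => hr id strictMono_id (acc_of_good hs)

/-- iterated shrinking used in the key combinatorial claim. -/
def iterT (nfn : (ℕ → ℕ) → ℕ) (hfn : (ℕ → ℕ) → (ℕ → ℕ)) : ℕ → (ℕ → ℕ)
  | 0 => id
  | (k + 1) => fun m =>
      iterT nfn hfn k (hfn (iterT nfn hfn k) (m + nfn (iterT nfn hfn k) + 1))

/-- Key claim: if `g` rejects `s`, there is a shrinking `h` of `g` such that `g ∘ h`
rejects every one-point extension of `s` by a value of `g ∘ h`. -/
lemma claim (hg : StrictMono g) (hrej : rej f ε g s) :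
    ∃ h : ℕ → ℕ, StrictMono h ∧ ∀ n, rej f ε (fun m => g (h m)) (s ++ [g (h n)]) := by
  by_contra hc
  push_neg at hc
  -- hc : ∀ h, StrictMono h → ∃ n, ¬ rej f ε (fun m => g (h m)) (s ++ [g (h n)])
  have H : ∀ u : ℕ → ℕ, ∃ (n : ℕ) (h' : ℕ → ℕ), StrictMono u →
      StrictMono h' ∧ acc f ε (fun m => g (u (h' m))) (s ++ [g (u n)]) := by
    intro u
    by_cases hu : StrictMono u
    · obtain ⟨n, hn⟩ := hc u hu
      rw [rej] at hn
      push_neg at hn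
      obtain ⟨h', hh', hacc⟩ := hn
      exact ⟨n, h', fun _ => ⟨hh', hacc⟩⟩
    · exact ⟨0, id, fun h => absurd h hu⟩
  choose nfn hfn hspec using H
  set T : ℕ → (ℕ → ℕ) := iterT nfn hfn with hT
  have hTsucc : ∀ k m, T (k + 1) m = T k (hfn (T k) (m + nfn (T k) + 1)) := fun k m => rfl
  have hTmono : ∀ k, StrictMono (T k) := by
    intro k
    induction k with
    | zero => exact strictMono_id
    | succ k ih =>
        intro a b hab
        rw [hTsucc, hTsucc]
        exact ih <| ((hspec (T k) ih).1).lt_iff_lt.mpr (by omega)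
  have hspec' : ∀ k, StrictMono (hfn (T k)) ∧
      acc f ε (fun m => g (T k (hfn (T k) m))) (s ++ [g (T k (nfn (T k)))]) :=
    fun k => hspec (T k) (hTmono k)
  set a : ℕ → ℕ := fun k => g (T k (nfn (T k))) with ha
  -- values of later stages exceed `a k`
  have hgt : ∀ k m, a k < g (T (k + 1) m) := by
    intro k m
    rw [hTsucc]
    refine hg.lt_iff_lt.mpr (?_)
    refine (hTmono k).lt_iff_lt.mpr (?_)
    have h1 : m + nfn (T k) + 1 ≤ hfn (T k) (m + nfn (T k) + 1) := (hspec' k).1.le_apply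
    omega
  have hamono : StrictMono a := by
    refine strictMono_nat_of_lt_succ (fun k => ?_)
    exact hgt k (nfn (T (k + 1)))
  -- later stages are sub-sequences of stage k+1
  have hsub : ∀ k d j, ∃ j', T (k + 1 + d) j = T (k + 1) j' := by
    intro k d
    induction d with
    | zero => exact fun j => ⟨j, rfl⟩
    | succ d ih =>
        intro j
        have : k + 1 + (d + 1) = (k + 1 + d) + 1 := by omega
        rw [this, hTsucc]
        exact ih _
  -- each later `a m` is a value of the stage-k accepted ambient
  have hmem : ∀ k m, k < m → ∃ idx, a m = g (T k (hfn (T k) idx)) := by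
    intro k m hkm
    obtain ⟨d, hd⟩ : ∃ d, m = k + 1 + d := ⟨m - (k + 1), by omega⟩
    subst hd
    obtain ⟨j', hj'⟩ := hsub k d (nfn (T (k + 1 + d)))
    rw [ha]
    simp only [hj', hTsucc]
    exact ⟨j' + nfn (T k) + 1, rfl⟩
  -- the diagonal sequence
  set w : ℕ → ℕ := fun k => T k (nfn (T k)) with hw
  have hwmono : StrictMono w := by
    intro b c hbc
    exact hg.lt_iff_lt.mp (hamono hbc)
  refine hrej w hwmono ?_
  -- show acc f ε (fun m => g (w m)) s
  intro h0 hh0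
  set k := h0 0 with hk
  have hidx : ∀ i, ∃ idx, g (T k (hfn (T k) idx)) = a (h0 (i + 1)) := by
    intro i
    obtain ⟨idx, hidx⟩ := hmem k (h0 (i + 1)) (lt_of_le_of_lt (le_refl k) (hh0 (by omega)))
    exact ⟨idx, hidx.symm⟩
  choose ι hι using hidx
  have hcmono : StrictMono (fun i => g (T k (hfn (T k) i))) :=
    hg.comp ((hTmono k).comp (hspec' k).1)
  have hιmono : StrictMono ι := by
    refine strictMono_nat_of_lt_succ (fun i => ?_)
    refine hcmono.lt_iff_lt.mp ?_
    rw [hι, hι]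
    exact hamono (hh0 (by omega))
  obtain ⟨r, hr⟩ := (hspec' k).2 ι hιmono
  refine ⟨r + 1, ?_⟩
  have heq : (s ++ [g (T k (nfn (T k)))]) ++ pref (fun n => g (T k (hfn (T k) (ι n)))) r
      = s ++ pref (fun n => g (w (h0 n))) (r + 1) := by
    rw [List.append_assoc, List.singleton_append, pref_succ]
    congr 1
    congr 1
    unfold pref
    refine List.map_congr_left (fun i _ => ?_)
    exact hι i
  rwa [heq] at hr
/-- Process a finite list of rejected tuples simultaneously. -/
lemma process (S : List (List ℕ)) (c : ℕ → ℕ) (hc : StrictMono c)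
    (hS : ∀ s' ∈ S, rej f ε c s') :
    ∃ h : ℕ → ℕ, StrictMono h ∧
      ∀ s' ∈ S, ∀ m, rej f ε (fun k => c (h k)) (s' ++ [c (h m)]) := by
  induction S generalizing c with
  | nil => exact ⟨id, strictMono_id, by simp⟩
  | cons s0 S ih =>
      obtain ⟨h₁, hh₁, hrej₁⟩ := claim hc (hS s0 (by simp))
      have hc₁ : StrictMono (fun m => c (h₁ m)) := hc.comp hh₁
      obtain ⟨h₂, hh₂, hrej₂⟩ := ih (fun m => c (h₁ m)) hc₁
        (fun s' hs' => rej_comp (hS s' (by simp [hs'])) hh₁)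
      refine ⟨fun m => h₁ (h₂ m), hh₁.comp hh₂, ?_⟩
      intro s' hs' m
      rcases List.mem_cons.mp hs' with rfl | hs'
      · exact rej_comp (g := fun m => c (h₁ m)) (τ := h₂) (hrej₁ (h₂ m)) hh₂
      · exact hrej₂ s' hs' m

/-- State of the fusion construction: a strictly monotone ambient sequence together with
the (descending) list of elements chosen so far. -/
def FS (f : ℕ → C(K, ℂ)) (ε : ℝ) : Type _ :=
  {x : (ℕ → ℕ) × List ℕ // StrictMono x.1 ∧
    (∀ s : List ℕ, s.Sublist x.2 → rej f ε x.1 s.reverse) ∧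
    (∀ y ∈ x.2, ∀ m, y < x.1 m)}

lemma FS_rej_all (x : FS f ε) :
    ∀ s' ∈ x.1.2.sublists.map List.reverse, rej f ε x.1.1 s' := by
  rintro s' hs'
  simp only [List.mem_map, List.mem_sublists] at hs'
  obtain ⟨s, hs, rfl⟩ := hs'
  exact x.2.2.1 s hs

noncomputable def stepH (x : FS f ε) : ℕ → ℕ :=
  (process (x.1.2.sublists.map List.reverse) x.1.1 x.2.1 (FS_rej_all x)).choose

lemma stepH_mono (x : FS f ε) : StrictMono (stepH x) :=
  (process (x.1.2.sublists.map List.reverse) x.1.1 x.2.1 (FS_rej_all x)).choose_spec.1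

lemma stepH_spec (x : FS f ε) :
    ∀ s' ∈ x.1.2.sublists.map List.reverse, ∀ m,
      rej f ε (fun k => x.1.1 (stepH x k)) (s' ++ [x.1.1 (stepH x m)]) :=
  (process (x.1.2.sublists.map List.reverse) x.1.1 x.2.1 (FS_rej_all x)).choose_spec.2

noncomputable def stepElem (x : FS f ε) : ℕ := x.1.1 (stepH x 0)

noncomputable def stepFun (x : FS f ε) : ℕ → ℕ := fun m => x.1.1 (stepH x (m + 1))

noncomputable def step (x : FS f ε) : FS f ε := by
  refine ⟨(stepFun x, stepElem x :: x.1.2), ?_, ?_, ?_⟩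
  · exact x.2.1.comp ((stepH_mono x).comp (strictMono_id.add_const 1))
  · intro s hs
    rcases List.sublist_cons_iff.mp hs with hs | ⟨t, rfl, ht⟩
    · have := x.2.2.1 s hs
      exact rej_comp (g := x.1.1) (τ := fun m => stepH x (m + 1)) this
        ((stepH_mono x).comp (strictMono_id.add_const 1))
    · have hmem : t.reverse ∈ x.1.2.sublists.map List.reverse :=
        List.mem_map.mpr ⟨t, List.mem_sublists.mpr ht, rfl⟩
      have h0 := stepH_spec x t.reverse hmem 0
      rw [List.reverse_cons]
      exact rej_comp (g := fun k => x.1.1 (stepH x k)) (τ := fun m => m + 1) h0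
        (strictMono_id.add_const 1)
  · intro y hy m
    rcases List.mem_cons.mp hy with rfl | hy
    · exact x.2.1 (stepH_mono x (by omega : (0:ℕ) < m + 1))
    · exact x.2.2.2 y hy (stepH x (m + 1))

noncomputable def st (x0 : FS f ε) : ℕ → FS f ε
  | 0 => x0
  | (k + 1) => step (st x0 k)

noncomputable def fA (x0 : FS f ε) : ℕ → ℕ := fun k => stepElem (st x0 k)
lemma desc_sublist : ∀ (k : ℕ) (s : List ℕ), List.Pairwise (· > ·) s →
    (∀ x ∈ s, x < k) → s.Sublist (List.range k).reverse := by
  intro k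
  induction k with
  | zero =>
      rintro (_ | ⟨a, t⟩) _ hlt
      · simp
      · exact absurd (hlt a (by simp)) (by omega)
  | succ k ih =>
      rintro (_ | ⟨a, t⟩) hp hlt
      · simp
      · have hrange : (List.range (k + 1)).reverse = k :: (List.range k).reverse := by
          rw [List.range_succ]; simp
        rw [hrange]
        rw [List.pairwise_cons] at hp
        by_cases hak : a = k
        · subst hak
          exact List.Sublist.cons₂ a (ih t hp.2 (fun x hx => hp.1 x hx))
        · have hak' : a < k := by have := hlt a (by simp); omega
          refine List.Sublist.cons k (ih (a :: t) (List.pairwise_cons.mpr hp) ?_)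
          rintro x hx
          rcases List.mem_cons.mp hx with rfl | hx
          · exact hak'
          · exact lt_trans (hp.1 x hx) hak'

lemma fusion [Nonempty K] (hg : StrictMono g) (h0 : rej f ε g []) :
    ∃ A : ℕ → ℕ, StrictMono A ∧
      ∀ (r : ℕ) (ν : ℕ → ℕ), StrictMono ν → ¬ good f ε (pref (fun i => A (ν i)) r) := by
  have hx0rej : ∀ s : List ℕ, s.Sublist ((g, ([] : List ℕ)).2) → rej f ε g s.reverse := by
    intro s hs
    have hnil := List.sublist_nil.mp hs
    subst hnil
    exact h0
  set x0 : FS f ε := ⟨(g, []), hg, hx0rej, by simp⟩ with hx0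
  set A := fA x0 with hA
  have hlist : ∀ k, (st x0 k).1.2 = (List.range k).reverse.map A := by
    intro k
    induction k with
    | zero => rfl
    | succ k ih =>
        have hh : (st x0 (k + 1)).1.2 = stepElem (st x0 k) :: (st x0 k).1.2 := rfl
        rw [hh, ih, List.range_succ]
        simp [hA, fA]
  have hAmono : StrictMono A := by
    refine strictMono_nat_of_lt_succ (fun k => ?_)
    have hmem : A k ∈ (st x0 (k + 1)).1.2 := by
      rw [show (st x0 (k + 1)).1.2 = stepElem (st x0 k) :: (st x0 k).1.2 from rfl]
      exact List.mem_cons_self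
    exact (st x0 (k + 1)).2.2.2 (A k) hmem (stepH (st x0 (k + 1)) 0)
  refine ⟨A, hAmono, ?_⟩
  intro r ν hν hgood
  set k := ν r + 1 with hk
  have hsubl : (pref (fun i => A (ν i)) r).reverse.Sublist (st x0 k).1.2 := by
    rw [hlist k]
    have h1 : (pref (fun i => A (ν i)) r).reverse
        = ((List.range r).reverse.map ν).map A := by
      unfold pref
      rw [← List.map_reverse, List.map_map]
      rfl
    rw [h1]
    refine List.Sublist.map A ?_
    refine desc_sublist k _ ?_ ?_
    · refine List.Pairwise.map ν (fun a b hab => hν hab) ?_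
      exact List.pairwise_reverse.mpr (by simpa using (List.pairwise_lt_range : List.Pairwise (· < ·) (List.range r)))
    · intro x hx
      simp only [List.mem_map, List.mem_reverse, List.mem_range] at hx
      obtain ⟨j, hj, rfl⟩ := hx
      have := hν hj
      omega
  have hrej := (st x0 k).2.2.1 _ hsubl
  rw [List.reverse_reverse] at hrej
  exact not_rej_of_good hgood hrej
def iterE (pfn : ℕ → ℕ × ℕ) : ℕ → ℕ × ℕ
  | 0 => pfn 0
  | (k + 1) => pfn ((iterE pfn k).2 + 1)

lemma key [Nonempty K]
    (hproper : ∀ P : Set ℕ, P.Infinite → ∀ ε : ℝ, 0 < ε →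
      ∃ L : Set ℕ, L ⊆ P ∧ L.Infinite ∧
        ¬ ∃ t : K, ∀ n : ℕ,
          ε ≤ ‖f (Nat.nth (· ∈ L) (2 * n)) t - f (Nat.nth (· ∈ L) (2 * n + 1)) t‖)
    (hε : 0 < ε) (hg : StrictMono g) :
    ∃ h : ℕ → ℕ, StrictMono h ∧ ∀ t : K, ∃ N, ∀ i ≥ N, ∀ j ≥ N,
      ‖f (g (h i)) t - f (g (h j)) t‖ < ε := by
  by_cases hrej : rej f ε g []
  · exfalso
    obtain ⟨A, hAmono, hArej⟩ := fusion hg hrej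
    obtain ⟨L, hLsub, hLinf, hnot⟩ := hproper (Set.range A)
      (Set.infinite_range_of_injective hAmono.injective) ε hε
    push_neg at hnot
    set μ : ℕ → ℕ := Nat.nth (fun x => x ∈ L) with hμ
    have hLinf' : (setOf (fun x => x ∈ L)).Infinite := by exact hLinf
    have hμmono : StrictMono μ := Nat.nth_strictMono hLinf'
    have hμmem : ∀ n, μ n ∈ L := fun n => Nat.nth_mem_of_infinite hLinf' n
    have hν0 : ∀ n, ∃ k, A k = μ n := fun n => hLsub (hμmem n)
    choose ν hν using hν0
    have hνmono : StrictMono ν := fun a b hab =>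
      hAmono.lt_iff_lt.mp (by rw [hν, hν]; exact hμmono hab)
    set U : ℕ → Set K := fun n => {t | ‖f (μ (2 * n)) t - f (μ (2 * n + 1)) t‖ < ε} with hU
    have hUopen : ∀ n, IsOpen (U n) :=
      fun n => isOpen_lt (Continuous.norm (((f _).continuous).sub ((f _).continuous)))
        continuous_const
    have hUcover : (Set.univ : Set K) ⊆ ⋃ n, U n := by
      intro t _
      obtain ⟨n, hn⟩ := hnot t
      exact Set.mem_iUnion.mpr ⟨n, hn⟩
    obtain ⟨F, hF⟩ := isCompact_univ.elim_finite_subcover U hUopen hUcover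
    set N := F.sup id with hN
    have hgood : good f ε (pref μ (2 * N + 2)) := by
      intro t
      obtain ⟨n, hnF, hn⟩ := Set.mem_iUnion₂.mp (hF (Set.mem_univ t))
      have hnN : n ≤ N := Finset.le_sup (f := id) hnF
      refine ⟨n, ?_, ?_⟩
      · rw [pref_length]; omega
      · rw [pref_getD μ (by omega), pref_getD μ (by omega)]
        exact hn
    have heq : pref μ (2 * N + 2) = pref (fun i => A (ν i)) (2 * N + 2) :=
      List.map_congr_left (fun i _ => (hν i).symm)
    rw [heq] at hgood
    exact hArej (2 * N + 2) ν hνmono hgood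
  · rw [rej] at hrej
    push_neg at hrej
    obtain ⟨h, hh, hacc⟩ := hrej
    refine ⟨h, hh, ?_⟩
    intro t
    by_contra hcon
    push_neg at hcon
    set b : ℕ → ℕ := fun n => g (h n) with hb
    have HP : ∀ N, ∃ p : ℕ × ℕ, N ≤ p.1 ∧ p.1 < p.2 ∧ ε ≤ ‖f (b p.1) t - f (b p.2) t‖ := by
      intro N
      obtain ⟨i, hi, j, hj, hij⟩ := hcon N
      rcases lt_trichotomy i j with hlt | heq | hgt
      · exact ⟨(i, j), hi, hlt, hij⟩
      · exfalso; rw [heq, sub_self, norm_zero] at hij; linarith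
      · exact ⟨(j, i), hj, hgt, by rwa [norm_sub_rev]⟩
    choose pfn h1 h2 h3 using HP
    set e : ℕ → ℕ × ℕ := iterE pfn with he
    have he0 : ∀ k, (e k).1 < (e k).2 := by
      intro k; cases k
      · exact h2 0
      · exact h2 _
    have he3 : ∀ k, ε ≤ ‖f (b (e k).1) t - f (b (e k).2) t‖ := by
      intro k; cases k
      · exact h3 0
      · exact h3 _
    have he1 : ∀ k, (e k).2 < (e (k + 1)).1 := by
      intro k
      have h1' : (e k).2 + 1 ≤ (pfn ((e k).2 + 1)).1 := h1 _
      have hrfl : e (k + 1) = pfn ((e k).2 + 1) := rfl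
      rw [hrfl]
      omega
    set q : ℕ → ℕ := fun n => if Even n then (e (n / 2)).1 else (e (n / 2)).2 with hq
    have hqeven : ∀ m, q (m + m) = (e m).1 := by
      intro m
      have hEm : Even (m + m) := ⟨m, rfl⟩
      simp only [hq]
      rw [if_pos hEm, show (m + m) / 2 = m by omega]
    have hqodd : ∀ m, q (m + m + 1) = (e m).2 := by
      intro m
      have hEm : Even (m + m) := ⟨m, rfl⟩
      have hOm : ¬ Even (m + m + 1) := by simp [Nat.even_add_one, hEm]
      simp only [hq]
      rw [if_neg hOm, show (m + m + 1) / 2 = m by omega]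
    have hqmono : StrictMono q := by
      refine strictMono_nat_of_lt_succ (fun n => ?_)
      rcases Nat.even_or_odd n with he' | ho
      · obtain ⟨m, rfl⟩ := he'
        rw [hqeven m, show m + m + 1 = m + m + 1 from rfl, hqodd m]
        exact he0 m
      · obtain ⟨m, rfl⟩ := ho
        rw [show 2 * m + 1 = m + m + 1 by omega, hqodd m,
          show m + m + 1 + 1 = (m + 1) + (m + 1) by omega, hqeven (m + 1)]
        exact he1 m
    obtain ⟨r, hr⟩ := hacc q hqmono
    obtain ⟨i, hir, hsmall⟩ := hr t
    rw [List.nil_append, pref_length] at hir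
    rw [List.nil_append, pref_getD _ (show 2 * i < r by omega), pref_getD _ (show 2 * i + 1 < r by omega)] at hsmall
    have hq1 : q (2 * i) = (e i).1 := by rw [show 2 * i = i + i by omega, hqeven i]
    have hq2 : q (2 * i + 1) = (e i).2 := by rw [show 2 * i + 1 = i + i + 1 by omega, hqodd i]
    rw [hq1, hq2] at hsmall
    have := he3 i
    simp only [hb] at this
    linarith
def iterB (hfn : ℕ → (ℕ → ℕ) → (ℕ → ℕ)) : ℕ → (ℕ → ℕ)
  | 0 => hfn 0 id
  | (k + 1) => fun m => iterB hfn k (hfn (k + 1) (iterB hfn k) m)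

end WCS

/-- Remark: if D(P, F_ε) is a proper subset of [P] for all infinite P ⊆ ℕ and all
ε > 0, then (f_n) admits a weak Cauchy subsequence.  Here F_ε = {(z₁, z₂) : |z₁ − z₂| ≥ ε}
and D(P, F_ε) consists of the infinite L ⊆ P whose increasing enumeration (l_n)
admits some t ∈ K with |f_{l_{2n-1}}(t) − f_{l_{2n}}(t)| ≥ ε for all n. -/
theorem weak_cauchy_subsequence_of_proper (K : Type*) [MetricSpace K] [CompactSpace K]
    (f : ℕ → C(K, ℂ)) (hf : ∃ C : ℝ, ∀ n, ‖f n‖ ≤ C)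
    (hproper : ∀ P : Set ℕ, P.Infinite → ∀ ε : ℝ, 0 < ε →
      ∃ L : Set ℕ, L ⊆ P ∧ L.Infinite ∧
        ¬ ∃ t : K, ∀ n : ℕ,
          ε ≤ ‖f (Nat.nth (· ∈ L) (2 * n)) t - f (Nat.nth (· ∈ L) (2 * n + 1)) t‖) :
    ∃ m : ℕ → ℕ, StrictMono m ∧
      ∀ t : K, ∃ l : ℂ, Filter.Tendsto (fun n => f (m n) t) Filter.atTop (nhds l) := by
  rcases isEmpty_or_nonempty K with hK | hK
  · exact ⟨id, strictMono_id, fun t => (IsEmpty.false t).elim⟩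
  have KEY' : ∀ (k : ℕ) (u : ℕ → ℕ), ∃ h : ℕ → ℕ, StrictMono u →
      (StrictMono h ∧ ∀ t : K, ∃ N, ∀ i ≥ N, ∀ j ≥ N,
        ‖f (u (h i)) t - f (u (h j)) t‖ < 1 / ((k : ℝ) + 1)) := by
    intro k u
    by_cases hu : StrictMono u
    · obtain ⟨h, hh, hs⟩ := WCS.key (ε := 1 / ((k : ℝ) + 1)) hproper (by positivity) hu
      exact ⟨h, fun _ => ⟨hh, hs⟩⟩
    · exact ⟨id, fun h => absurd h hu⟩
  choose hfn hspec using KEY'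
  set B : ℕ → (ℕ → ℕ) := WCS.iterB hfn with hB
  have hBsucc : ∀ k m, B (k + 1) m = B k (hfn (k + 1) (B k) m) := fun _ _ => rfl
  have hBmono : ∀ k, StrictMono (B k) := by
    intro k
    induction k with
    | zero => exact (hspec 0 id strictMono_id).1
    | succ k ih => exact ih.comp (hspec (k + 1) (B k) ih).1
  have hQ : ∀ k, ∀ t : K, ∃ N, ∀ i ≥ N, ∀ j ≥ N,
      ‖f (B k i) t - f (B k j) t‖ < 1 / ((k : ℝ) + 1) := by
    intro k
    cases k with
    | zero => exact (hspec 0 id strictMono_id).2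
    | succ k => exact (hspec (k + 1) (B k) (hBmono k)).2
  have hchain : ∀ k d, ∃ τ : ℕ → ℕ, StrictMono τ ∧ ∀ m, B (k + d) m = B k (τ m) := by
    intro k d
    induction d with
    | zero => exact ⟨id, strictMono_id, fun _ => rfl⟩
    | succ d ih =>
        obtain ⟨τ, hτ, hτeq⟩ := ih
        refine ⟨fun m => τ (hfn (k + d + 1) (B (k + d)) m),
          hτ.comp (hspec (k + d + 1) (B (k + d)) (hBmono _)).1, fun m => ?_⟩
        rw [show k + (d + 1) = (k + d) + 1 from rfl, hBsucc]
        exact hτeq _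
  refine ⟨fun n => B n n, ?_, ?_⟩
  · refine strictMono_nat_of_lt_succ (fun n => ?_)
    have h1 : n + 1 ≤ hfn (n + 1) (B n) (n + 1) :=
      (hspec (n + 1) (B n) (hBmono n)).1.le_apply
    calc B n n < B n (n + 1) := hBmono n (by omega)
      _ ≤ B n (hfn (n + 1) (B n) (n + 1)) := (hBmono n).monotone h1
      _ = B (n + 1) (n + 1) := (hBsucc n (n + 1)).symm
  · intro t
    have hcauchy : CauchySeq (fun n => f (B n n) t) := by
      rw [Metric.cauchySeq_iff]
      intro δ hδ
      obtain ⟨k, hk⟩ := exists_nat_one_div_lt hδ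
      obtain ⟨N, hN⟩ := hQ k t
      have hrep : ∀ nn ≥ max k N, ∃ jj ≥ N, B nn nn = B k jj := by
        intro nn hnn
        obtain ⟨τ, hτ, hτeq⟩ := hchain k (nn - k)
        have h2 : B (k + (nn - k)) nn = B k (τ nn) := hτeq nn
        rw [show k + (nn - k) = nn by omega] at h2
        refine ⟨τ nn, ?_, h2⟩
        calc N ≤ nn := le_trans (le_max_right k N) hnn
          _ ≤ τ nn := hτ.le_apply
      refine ⟨max k N, fun n hn n' hn' => ?_⟩
      obtain ⟨j1, hj1, he1⟩ := hrep n hn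
      obtain ⟨j2, hj2, he2⟩ := hrep n' hn'
      rw [dist_eq_norm, he1, he2]
      exact lt_trans (hN j1 hj1 j2 hj2) hk
    exact cauchySeq_tendsto_of_complete hcauchy
end
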